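/- arXiv:2304.11590 — 12 statements merged into one kernel-verified Lean document; each statement's English description precedes it below -/
import Mathlib

section
/- Let n ≥ 1, let λ_1,…,λ_n be pairwise distinct reals, α_1,…,α_n reals, and let y_1,…,y_n : ℝ × I → ℝ be smooth and nowhere vanishing on an open interval I with 0 ∉ I. If the y_j satisfy the system (yxx) and the system (yt) with u given by the constraint (uy), then u satisfies the Korteweg–de Vries equation ∂_t u = ∂_x³ u − 6 u ∂_x u on ℝ × I. -/
open Set Function

noncomputable section

/-- Partial derivative in the first (space) variable. -/
def pdx (u : ℝ → ℝ → ℝ) : ℝ → ℝ → ℝ := fun x t => deriv (fun x' => u x' t) x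

/-- Partial derivative in the second (time) variable. -/
def pdt (u : ℝ → ℝ → ℝ) : ℝ → ℝ → ℝ := fun x t => deriv (fun t' => u x t') t

/-- The constraint (uy): `u = x/(6t) + (y₁ + ⋯ + yₙ)/(3t)`. -/
def ucon (n : ℕ) (y : Fin n → ℝ → ℝ → ℝ) : ℝ → ℝ → ℝ :=
  fun x t => x / (6*t) + (∑ j, y j x t) / (3*t)

lemma keyA (F U : ℝ → ℝ) (α lam : ℝ)
    (hF : ContDiff ℝ (⊤:ℕ∞) F) (hU : ContDiff ℝ (⊤:ℕ∞) U)
    (hFne : ∀ x, F x ≠ 0)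
    (heq : ∀ x, deriv (deriv F) x
      = ((deriv F x)^2 - α^2) / (2 * F x) + 2 * (U x - lam) * F x) :
    ∀ x, deriv (deriv (deriv F)) x
      = 4 * (U x - lam) * deriv F x + 2 * deriv U x * F x := by
  intro x
  have hF1 : Differentiable ℝ F := hF.differentiable (by norm_num)
  have hdF : ContDiff ℝ (⊤:ℕ∞) (deriv F) := (contDiff_infty_iff_deriv.mp hF).2
  have hF2 : Differentiable ℝ (deriv F) := hdF.differentiable (by norm_num)
  have hU1 : Differentiable ℝ U := hU.differentiable (by norm_num)
  have h1 : HasDerivAt F (deriv F x) x := (hF1 x).hasDerivAt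
  have h2 : HasDerivAt (deriv F) (deriv (deriv F) x) x := (hF2 x).hasDerivAt
  have hu : HasDerivAt U (deriv U x) x := (hU1 x).hasDerivAt
  have hne : 2 * F x ≠ 0 := mul_ne_zero two_ne_zero (hFne x)
  have hfun : deriv (deriv F)
      = fun x' => ((deriv F x')^2 - α^2) / (2 * F x') + 2 * (U x' - lam) * F x' :=
    funext heq
  have htot := (((h2.pow 2).sub_const (α^2)).div (h1.const_mul 2) hne).add
    (((hu.sub_const lam).const_mul 2).mul h1)
  have h3 : deriv (fun x' => ((deriv F x')^2 - α^2) / (2 * F x') + 2 * (U x' - lam) * F x') x = _ := htot.deriv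
  rw [hfun, h3, heq x]
  have hFx := hFne x
  simp only [Pi.pow_apply]
  field_simp
  ring

/-- if smooth nowhere-vanishing `y₁, …, yₙ` satisfy the systems (yxx) and (yt)
with `u` given by the constraint (uy), then `u` satisfies the KdV equation on `ℝ × I`. -/
theorem statement0
    (n : ℕ) (hn : 1 ≤ n)
    (lam alp : Fin n → ℝ) (hlam : Function.Injective lam)
    (a b : ℝ) (I : Set ℝ) (hI : I = Set.Ioo a b) (hI0 : (0:ℝ) ∉ I)
    (y : Fin n → ℝ → ℝ → ℝ)
    (hysmooth : ∀ j, ContDiffOn ℝ (⊤ : ℕ∞) (uncurry (y j)) (univ ×ˢ I))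
    (hyne : ∀ j x t, t ∈ I → y j x t ≠ 0)
    -- system (yxx)
    (hyxx : ∀ j x t, t ∈ I →
      pdx (pdx (y j)) x t
        = ((pdx (y j) x t)^2 - (alp j)^2) / (2 * y j x t)
          + 2 * (ucon n y x t - lam j) * y j x t)
    -- system (yt)
    (hyt : ∀ j x t, t ∈ I →
      pdt (y j) x t
        = 2 * pdx (ucon n y) x t * y j x t
          - 2 * (ucon n y x t + 2 * lam j) * pdx (y j) x t) :
    -- u satisfies KdV on ℝ × I
    ∀ x t, t ∈ I →
      pdt (ucon n y) x t
        = pdx (pdx (pdx (ucon n y))) x t - 6 * ucon n y x t * pdx (ucon n y) x t := by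
  intro x t ht
  have hIopen : IsOpen I := hI ▸ isOpen_Ioo
  have ht0 : t ≠ 0 := fun h => hI0 (h ▸ ht)
  have h6t : (6:ℝ) * t ≠ 0 := mul_ne_zero (by norm_num) ht0
  have h3t : (3:ℝ) * t ≠ 0 := mul_ne_zero (by norm_num) ht0
  simp only [pdx, pdt, ucon] at hyxx hyt ⊢
  -- space smoothness
  have hFc : ∀ j, ContDiff ℝ (⊤:ℕ∞) (fun x' => y j x' t) := by
    intro j
    rw [← contDiffOn_univ]
    exact (hysmooth j).comp (contDiff_id.prodMk contDiff_const).contDiffOn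
      (fun x' _ => ⟨trivial, ht⟩)
  have hFd : ∀ j, Differentiable ℝ (fun x' => y j x' t) :=
    fun j => (hFc j).differentiable (by norm_num)
  have hdF : ∀ j, ContDiff ℝ (⊤:ℕ∞) (deriv (fun x' => y j x' t)) :=
    fun j => (contDiff_infty_iff_deriv.mp (hFc j)).2
  have hddF : ∀ j, ContDiff ℝ (⊤:ℕ∞) (deriv (deriv (fun x' => y j x' t))) :=
    fun j => (contDiff_infty_iff_deriv.mp (hdF j)).2
  have hSc : ContDiff ℝ (⊤:ℕ∞) (fun x' => ∑ j, y j x' t) :=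
    ContDiff.sum fun j _ => hFc j
  have hUc : ContDiff ℝ (⊤:ℕ∞) (fun x' => x' / (6*t) + (∑ j, y j x' t) / (3*t)) :=
    (contDiff_id.div_const _).add (hSc.div_const _)
  -- time differentiability
  have hGd : ∀ j, DifferentiableAt ℝ (fun t' => y j x t') t := by
    intro j
    have hG : ContDiffOn ℝ (⊤:ℕ∞) (fun t' => y j x t') I :=
      (hysmooth j).comp (contDiff_const.prodMk contDiff_id).contDiffOn
        (fun t' ht' => ⟨trivial, ht'⟩)
    exact ((hG.differentiableOn (by norm_num)).differentiableAt (hIopen.mem_nhds ht))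
  -- first x-derivative of u
  have hSd : Differentiable ℝ (fun x' => ∑ j, y j x' t) := hSc.differentiable (by norm_num)
  have hdU : ∀ x', deriv (fun x'' => x'' / (6*t) + (∑ j, y j x'' t) / (3*t)) x'
      = 1 / (6*t) + deriv (fun x'' => ∑ j, y j x'' t) x' / (3*t) := by
    intro x'
    exact (((hasDerivAt_id x').div_const (6*t)).add
      ((hSd x').hasDerivAt.div_const (3*t))).deriv
  -- second & third x-derivatives of u
  have hdSc : ContDiff ℝ (⊤:ℕ∞) (deriv (fun x'' => ∑ j, y j x'' t)) :=
    (contDiff_infty_iff_deriv.mp hSc).2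
  have hddSc : ContDiff ℝ (⊤:ℕ∞) (deriv (deriv (fun x'' => ∑ j, y j x'' t))) :=
    (contDiff_infty_iff_deriv.mp hdSc).2
  have hddU : deriv (deriv (fun x'' => x'' / (6*t) + (∑ j, y j x'' t) / (3*t)))
      = fun x' => deriv (deriv (fun x'' => ∑ j, y j x'' t)) x' / (3*t) := by
    rw [funext hdU]
    funext x'
    have : deriv (fun x => 1/(6*t) + deriv (fun x'' => ∑ j, y j x'' t) x / (3*t)) x' = _ := ((hasDerivAt_const x' (1/(6*t))).add
      ((hdSc.differentiable (by norm_num) x').hasDerivAt.div_const (3*t))).deriv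
    rw [this]; ring
  have hdddU : deriv (deriv (deriv (fun x'' => x'' / (6*t) + (∑ j, y j x'' t) / (3*t)))) x
      = deriv (deriv (deriv (fun x'' => ∑ j, y j x'' t))) x / (3*t) := by
    rw [hddU]
    exact ((hddSc.differentiable (by norm_num) x).hasDerivAt.div_const (3*t)).deriv
  -- sums of derivatives
  have e1 : deriv (fun x'' => ∑ j, y j x'' t) = fun x' => ∑ j, deriv (fun x'' => y j x'' t) x' :=
    funext fun x' => deriv_fun_sum (fun j _ => hFd j x')
  have e2 : deriv (deriv (fun x'' => ∑ j, y j x'' t))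
      = fun x' => ∑ j, deriv (deriv (fun x'' => y j x'' t)) x' := by
    rw [e1]
    exact funext fun x' => deriv_fun_sum (fun j _ => (hdF j).differentiable (by norm_num) x')
  have e3 : deriv (deriv (deriv (fun x'' => ∑ j, y j x'' t))) x
      = ∑ j, deriv (deriv (deriv (fun x'' => y j x'' t))) x := by
    rw [e2]
    exact deriv_fun_sum (fun j _ => (hddF j).differentiable (by norm_num) x)
  -- third derivative of each y j in x
  have h3j : ∀ j, deriv (deriv (deriv (fun x' => y j x' t))) x
      = 4 * ((x / (6*t) + (∑ i, y i x t) / (3*t)) - lam j) * deriv (fun x' => y j x' t) x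
        + 2 * deriv (fun x'' => x'' / (6*t) + (∑ i, y i x'' t) / (3*t)) x * y j x t := by
    intro j
    exact keyA (fun x' => y j x' t) (fun x'' => x'' / (6*t) + (∑ i, y i x'' t) / (3*t))
      (alp j) (lam j) (hFc j) hUc (fun x' => hyne j x' t ht)
      (fun x' => hyxx j x' t ht) x
  -- key sum identity
  have key : (∑ j, deriv (deriv (deriv (fun x' => y j x' t))) x)
        - (∑ j, deriv (fun t' => y j x t') t)
      = 6 * (x / (6*t) + (∑ j, y j x t) / (3*t)) * (∑ j, deriv (fun x' => y j x' t) x) := by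
    rw [← Finset.sum_sub_distrib, Finset.mul_sum]
    refine Finset.sum_congr rfl fun j _ => ?_
    rw [h3j j, hyt j x t ht, hdU x, e1]
    ring
  -- time derivative of u
  have hpdt : deriv (fun t' => x / (6 * t') + (∑ j, y j x t') / (3 * t')) t
      = (0 * (6 * t) - x * (6 * 1)) / (6 * t) ^ 2
        + ((∑ j, deriv (fun t' => y j x t') t) * (3 * t) - (∑ j, y j x t) * (3 * 1)) / (3 * t) ^ 2 := by
    have hA : HasDerivAt (fun t' : ℝ => x / (6 * t')) ((0 * (6 * t) - x * (6 * 1)) / (6 * t) ^ 2) t :=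
      (hasDerivAt_const t x).div ((hasDerivAt_id t).const_mul 6) h6t
    have hT : HasDerivAt (fun t' => ∑ j, y j x t') (∑ j, deriv (fun t' => y j x t') t) t :=
      HasDerivAt.fun_sum fun j _ => (hGd j).hasDerivAt
    exact (hA.add (hT.div ((hasDerivAt_id t).const_mul 3) h3t)).deriv
  rw [hpdt, hdddU, e3, hdU x, e1]
  have hD : (∑ j, deriv (fun t' => y j x t') t)
      = (∑ j, deriv (deriv (deriv (fun x' => y j x' t))) x)
        - 6 * (x / (6*t) + (∑ j, y j x t) / (3*t)) * (∑ j, deriv (fun x' => y j x' t) x) := by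
    linarith [key]
  rw [hD]
  field_simp
  ring
end
end

section
/- Let n ≥ 1, λ_1,…,λ_n pairwise distinct reals, α_1,…,α_n reals, and y_1,…,y_n : ℝ × I → ℝ smooth and nowhere vanishing (I an open interval, 0 ∉ I) satisfying (yxx), (yt) and the constraint (uy). Then for every λ ∈ ℝ with λ ∉ {λ_1,…,λ_n}, the 2×2 matrices U = [[0,1],[u−λ,0]], V = M(−u−2λ), and W = M(−3t − (1/2) Σ_{j=1}^n y_j/(λ−λ_j)) satisfy the isomonodromy equations ∂_x W = ∂_λ U + [U,W] and ∂_t W = ∂_λ V + [V,W] at every (x,t) ∈ ℝ × I. -/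
open Set Function

noncomputable section

/-- The matrix `M(g) = [[−g_x, 2g], [2(u−λ)g − g_xx, g_x]]`. -/
def Mmat (u g : ℝ → ℝ → ℝ) (l : ℝ) (x t : ℝ) : Matrix (Fin 2) (Fin 2) ℝ :=
  !![-(pdx g x t), 2 * g x t;
     2 * (u x t - l) * g x t - pdx (pdx g) x t, pdx g x t]

/-- Entrywise partial derivative of a matrix-valued function in the first variable. -/
def pdxM (A : ℝ → ℝ → Matrix (Fin 2) (Fin 2) ℝ) (x t : ℝ) : Matrix (Fin 2) (Fin 2) ℝ :=
  Matrix.of fun i j => deriv (fun x' => A x' t i j) x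

/-- Entrywise partial derivative of a matrix-valued function in the second variable. -/
def pdtM (A : ℝ → ℝ → Matrix (Fin 2) (Fin 2) ℝ) (x t : ℝ) : Matrix (Fin 2) (Fin 2) ℝ :=
  Matrix.of fun i j => deriv (fun t' => A x t' i j) t

/-- Entrywise derivative in the spectral parameter λ. -/
def pdl (A : ℝ → Matrix (Fin 2) (Fin 2) ℝ) (l : ℝ) : Matrix (Fin 2) (Fin 2) ℝ :=
  Matrix.of fun i j => deriv (fun l' => A l' i j) l
namespace Iso

def Sm (I : Set ℝ) (f : ℝ → ℝ → ℝ) : Prop := ContDiffOn ℝ (⊤ : ℕ∞) (uncurry f) (univ ×ˢ I)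

variable {I : Set ℝ} {f : ℝ → ℝ → ℝ} {x t : ℝ}

lemma mem_nhds_open (hIo : IsOpen I) (ht : t ∈ I) : (univ ×ˢ I) ∈ nhds (x, t) :=
  (isOpen_univ.prod hIo).mem_nhds (by simp [ht])

lemma Sm.diffAt (hf : Sm I f) (hIo : IsOpen I) (ht : t ∈ I) :
    DifferentiableAt ℝ (uncurry f) (x, t) :=
  (hf.contDiffAt (mem_nhds_open hIo ht)).differentiableAt (by simp)

lemma Sm.hasDerivAt_x (hf : Sm I f) (hIo : IsOpen I) (ht : t ∈ I) :
    HasDerivAt (fun x' => f x' t) (pdx f x t) x := by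
  have hd : DifferentiableAt ℝ (fun x' => f x' t) x :=
    by have hg : DifferentiableAt ℝ (fun x' : ℝ => ((x', t) : ℝ × ℝ)) x :=
        differentiableAt_fun_id.prodMk (differentiableAt_const t)
       exact (hf.diffAt hIo ht).comp x hg
  exact hd.hasDerivAt

lemma Sm.hasDerivAt_t (hf : Sm I f) (hIo : IsOpen I) (ht : t ∈ I) :
    HasDerivAt (fun t' => f x t') (pdt f x t) t := by
  have hd : DifferentiableAt ℝ (fun t' => f x t') t :=
    (hf.diffAt hIo ht).comp t ((differentiableAt_const x).prodMk differentiable_id.differentiableAt)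
  exact hd.hasDerivAt

lemma Sm.pdx_eq_fderiv (hf : Sm I f) (hIo : IsOpen I) (ht : t ∈ I) :
    pdx f x t = fderiv ℝ (uncurry f) (x, t) (1, 0) := by
  have h1 : HasDerivAt (fun x' => ((x' , t) : ℝ × ℝ)) (1, 0) x :=
    (hasDerivAt_id x).prodMk (hasDerivAt_const x t)
  have h2 : HasDerivAt (fun x' => f x' t) (fderiv ℝ (uncurry f) (x, t) (1, 0)) x :=
    by have h := ((hf.diffAt hIo ht).hasFDerivAt.comp_hasDerivAt x h1); exact h
  exact (hf.hasDerivAt_x hIo ht).unique h2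

lemma Sm.pdt_eq_fderiv (hf : Sm I f) (hIo : IsOpen I) (ht : t ∈ I) :
    pdt f x t = fderiv ℝ (uncurry f) (x, t) (0, 1) := by
  have h1 : HasDerivAt (fun t' => ((x, t') : ℝ × ℝ)) (0, 1) t :=
    (hasDerivAt_const t x).prodMk (hasDerivAt_id t)
  have h2 : HasDerivAt (fun t' => f x t') (fderiv ℝ (uncurry f) (x, t) (0, 1)) t :=
    ((hf.diffAt hIo ht).hasFDerivAt.comp_hasDerivAt t h1)
  exact (hf.hasDerivAt_t hIo ht).unique h2

lemma Sm.fderiv_contDiffOn (hf : Sm I f) (hIo : IsOpen I) :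
    ContDiffOn ℝ (⊤ : ℕ∞) (fun p => fderiv ℝ (uncurry f) p) (univ ×ˢ I) :=
  hf.fderiv_of_isOpen (isOpen_univ.prod hIo) (by simp)

lemma Sm.pdx_sm (hf : Sm I f) (hIo : IsOpen I) : Sm I (pdx f) := by
  have h2 : ContDiffOn ℝ (⊤ : ℕ∞) (fun p => fderiv ℝ (uncurry f) p ((1 : ℝ), (0 : ℝ)))
      (univ ×ˢ I) := (hf.fderiv_contDiffOn hIo).clm_apply contDiffOn_const
  refine h2.congr ?_
  rintro ⟨px, pt⟩ hp
  exact hf.pdx_eq_fderiv hIo hp.2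

lemma Sm.pdt_sm (hf : Sm I f) (hIo : IsOpen I) : Sm I (pdt f) := by
  have h2 : ContDiffOn ℝ (⊤ : ℕ∞) (fun p => fderiv ℝ (uncurry f) p ((0 : ℝ), (1 : ℝ)))
      (univ ×ˢ I) := (hf.fderiv_contDiffOn hIo).clm_apply contDiffOn_const
  refine h2.congr ?_
  rintro ⟨px, pt⟩ hp
  exact hf.pdt_eq_fderiv hIo hp.2

lemma Sm.clairaut (hf : Sm I f) (hIo : IsOpen I) (ht : t ∈ I) :
    pdt (pdx f) x t = pdx (pdt f) x t := by
  set F := uncurry f with hF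
  set F' := fun p => fderiv ℝ F p with hF'
  have hev : ∀ᶠ p in nhds (x, t), HasFDerivAt F (F' p) p := by
    filter_upwards [mem_nhds_open hIo ht] with p hp
    exact ((hf.contDiffAt ((isOpen_univ.prod hIo).mem_nhds hp)).differentiableAt
      (by simp)).hasFDerivAt
  have hdF' : DifferentiableAt ℝ F' (x, t) :=
    ((hf.fderiv_contDiffOn hIo).contDiffAt (mem_nhds_open hIo ht)).differentiableAt (by simp)
  set F'' := fderiv ℝ F' (x, t) with hF''
  have hsymm := second_derivative_symmetric_of_eventually hev hdF'.hasFDerivAt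
    ((1 : ℝ), (0 : ℝ)) ((0 : ℝ), (1 : ℝ))
  have h1 : pdt (pdx f) x t = F'' (0, 1) (1, 0) := by
    have heq : (fun t' => pdx f x t') =ᶠ[nhds t] fun t' => F' (x, t') (1, 0) := by
      filter_upwards [hIo.mem_nhds ht] with t' ht'
      exact hf.pdx_eq_fderiv hIo ht'
    have hc : HasDerivAt (fun t' => F' (x, t')) (F'' (0, 1)) t :=
      hdF'.hasFDerivAt.comp_hasDerivAt t ((hasDerivAt_const t x).prodMk (hasDerivAt_id t))
    have hc2 := hc.clm_apply (hasDerivAt_const t ((1 : ℝ), (0 : ℝ)))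
    show deriv (fun t' => pdx f x t') t = _
    rw [heq.deriv_eq]
    simpa using hc2.deriv
  have h2 : pdx (pdt f) x t = F'' (1, 0) (0, 1) := by
    have heq : (fun x' => pdt f x' t) =ᶠ[nhds x] fun x' => F' (x', t) (0, 1) := by
      filter_upwards [] with x'
      exact hf.pdt_eq_fderiv hIo ht
    have hc : HasDerivAt (fun x' => F' (x', t)) (F'' (1, 0)) x :=
      hdF'.hasFDerivAt.comp_hasDerivAt x ((hasDerivAt_id x).prodMk (hasDerivAt_const x t))
    have hc2 := hc.clm_apply (hasDerivAt_const x ((0 : ℝ), (1 : ℝ)))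
    show deriv (fun x' => pdt f x' t) x = _
    rw [heq.deriv_eq]
    simpa using hc2.deriv
  rw [h1, h2, hsymm]

end Iso

section MainSetup

open Iso

variable {n : ℕ} {lam alp : Fin n → ℝ} {I : Set ℝ} {y : Fin n → ℝ → ℝ → ℝ} {l : ℝ}

lemma sm_sum (hy : ∀ j, Sm I (y j)) : Sm I (fun x t => ∑ j, y j x t) :=
  ContDiffOn.sum fun j _ => hy j

lemma sm_ucon (htne : ∀ t ∈ I, t ≠ (0:ℝ))
    (hy : ∀ j, Sm I (y j)) : Sm I (ucon n y) := by
  apply ContDiffOn.add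
  · exact ContDiffOn.div contDiff_fst.contDiffOn
      (contDiff_const.mul contDiff_snd).contDiffOn
      (fun p hp => by
        have := htne p.2 hp.2
        positivity)
  · exact ContDiffOn.div (ContDiffOn.sum fun j _ => hy j)
      (contDiff_const.mul contDiff_snd).contDiffOn
      (fun p hp => by
        have := htne p.2 hp.2
        positivity)

lemma sm_G (hy : ∀ j, Sm I (y j)) :
    Sm I (fun x' t' => -3*t' - (1/2) * ∑ j, y j x' t' / (l - lam j)) := by
  apply ContDiffOn.sub
  · exact (contDiff_const.mul contDiff_snd).contDiffOn
  · exact ContDiffOn.mul contDiffOn_const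
      (ContDiffOn.sum fun j _ => (hy j).div_const (l - lam j))

lemma sum_comb1 {n : ℕ} (p q r : ℝ) (A B C : Fin n → ℝ) :
    ∑ j, (p * A j - q * B j - r * C j)
      = p * (∑ j, A j) - q * (∑ j, B j) - r * (∑ j, C j) := by
  rw [Finset.mul_sum, Finset.mul_sum, Finset.mul_sum, ← Finset.sum_sub_distrib,
    ← Finset.sum_sub_distrib]

lemma sum_comb2 {n : ℕ} (p q r : ℝ) (A B C : Fin n → ℝ) :
    ∑ j, (p * A j - q * B j + r * C j)
      = p * (∑ j, A j) - q * (∑ j, B j) + r * (∑ j, C j) := by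
  rw [Finset.mul_sum, Finset.mul_sum, Finset.mul_sum, ← Finset.sum_sub_distrib,
    ← Finset.sum_add_distrib]

end MainSetup
set_option maxHeartbeats 2000000 in
/-- solutions of (yxx), (yt), (uy) yield the isomonodromy representations
`∂ₓW = ∂_λU + [U,W]`, `∂ₜW = ∂_λV + [V,W]` for every `λ ∉ {λ₁, …, λₙ}`. -/
theorem statement1
    (n : ℕ) (hn : 1 ≤ n)
    (lam alp : Fin n → ℝ) (hlam : Function.Injective lam)
    (a b : ℝ) (I : Set ℝ) (hI : I = Set.Ioo a b) (hI0 : (0:ℝ) ∉ I)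
    (y : Fin n → ℝ → ℝ → ℝ)
    (hysmooth : ∀ j, ContDiffOn ℝ (⊤ : ℕ∞) (uncurry (y j)) (univ ×ˢ I))
    (hyne : ∀ j x t, t ∈ I → y j x t ≠ 0)
    -- system (yxx)
    (hyxx : ∀ j x t, t ∈ I →
      pdx (pdx (y j)) x t
        = ((pdx (y j) x t)^2 - (alp j)^2) / (2 * y j x t)
          + 2 * (ucon n y x t - lam j) * y j x t)
    -- system (yt)
    (hyt : ∀ j x t, t ∈ I →
      pdt (y j) x t
        = 2 * pdx (ucon n y) x t * y j x t
          - 2 * (ucon n y x t + 2 * lam j) * pdx (y j) x t)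
    -- the matrices U, V = M(−u−2λ) and W = M(−3t − (1/2)Σⱼ yⱼ/(λ−λⱼ))
    (U V W : ℝ → ℝ → ℝ → Matrix (Fin 2) (Fin 2) ℝ)
    (hU : ∀ l x t, U l x t = !![0, 1; ucon n y x t - l, 0])
    (hV : ∀ l x t, V l x t = Mmat (ucon n y) (fun x' t' => -(ucon n y x' t') - 2*l) l x t)
    (hW : ∀ l x t, W l x t
      = Mmat (ucon n y)
          (fun x' t' => -3*t' - (1/2) * ∑ j, y j x' t' / (l - lam j)) l x t) :
    ∀ l : ℝ, (∀ j, l ≠ lam j) → ∀ x t, t ∈ I →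
      pdxM (W l) x t
        = pdl (fun l' => U l' x t) l + (U l x t * W l x t - W l x t * U l x t)
      ∧ pdtM (W l) x t
        = pdl (fun l' => V l' x t) l + (V l x t * W l x t - W l x t * V l x t) := by
  intro l hl
  have hIo : IsOpen I := by rw [hI]; exact isOpen_Ioo
  have htne : ∀ t ∈ I, t ≠ (0:ℝ) := fun t ht h0 => hI0 (h0 ▸ ht)
  have hcl : ∀ j : Fin n, l - lam j ≠ 0 := fun j => sub_ne_zero.mpr (hl j)
  have hySm : ∀ j, Iso.Sm I (y j) := hysmooth
  have huSm : Iso.Sm I (ucon n y) := sm_ucon htne hySm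
  set G : ℝ → ℝ → ℝ := fun x' t' => -3*t' - (1/2) * ∑ j, y j x' t' / (l - lam j) with hGdef
  have hGSm : Iso.Sm I G := sm_G hySm
  have hWl : ∀ x t, W l x t = Mmat (ucon n y) G l x t := fun x t => hW l x t
  have huxSm : Iso.Sm I (pdx (ucon n y)) := huSm.pdx_sm hIo
  have huxxSm : Iso.Sm I (pdx (pdx (ucon n y))) := huxSm.pdx_sm hIo
  have hGxSm : Iso.Sm I (pdx G) := hGSm.pdx_sm hIo
  have hGxxSm : Iso.Sm I (pdx (pdx G)) := hGxSm.pdx_sm hIo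
  have hyxSm : ∀ j, Iso.Sm I (pdx (y j)) := fun j => (hySm j).pdx_sm hIo
  have hyxxSm : ∀ j, Iso.Sm I (pdx (pdx (y j))) := fun j => (hyxSm j).pdx_sm hIo
  -- pointwise derivative formulas
  have hux : ∀ x t, t ∈ I → pdx (ucon n y) x t = 1/(6*t) + (∑ j, pdx (y j) x t)/(3*t) := by
    intro x t ht
    have h1 : HasDerivAt (fun x' : ℝ => x'/(6*t)) (1/(6*t)) x := by
      simpa using (hasDerivAt_id x).div_const (6*t)
    have h2 : HasDerivAt (fun x' => (∑ j, y j x' t)/(3*t)) ((∑ j, pdx (y j) x t)/(3*t)) x :=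
      (HasDerivAt.fun_sum fun j _ => (hySm j).hasDerivAt_x hIo ht).div_const _
    exact (h1.add h2).deriv
  have huxx : ∀ x t, t ∈ I → pdx (pdx (ucon n y)) x t = (∑ j, pdx (pdx (y j)) x t)/(3*t) := by
    intro x t ht
    have e1 : (fun x' => pdx (ucon n y) x' t)
        = (fun x' => 1/(6*t) + (∑ j, pdx (y j) x' t)/(3*t)) := funext fun x' => hux x' t ht
    show deriv (fun x' => pdx (ucon n y) x' t) x = _
    rw [e1]
    have hd : HasDerivAt (fun x' => 1/(6*t) + (∑ j, pdx (y j) x' t)/(3*t))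
        (0 + (∑ j, pdx (pdx (y j)) x t)/(3*t)) x :=
      (hasDerivAt_const x _).add
        ((HasDerivAt.fun_sum fun j _ => (hyxSm j).hasDerivAt_x hIo ht).div_const _)
    exact hd.deriv.trans (by ring)
  have hy3 : ∀ j x t, t ∈ I → pdx (pdx (pdx (y j))) x t
      = 4*(ucon n y x t - lam j)*pdx (y j) x t + 2*pdx (ucon n y) x t*y j x t := by
    intro j x t ht
    have e1 : (fun x' => pdx (pdx (y j)) x' t)
        = (fun x' => ((pdx (y j) x' t)^2 - (alp j)^2) / (2 * y j x' t)
            + 2 * (ucon n y x' t - lam j) * y j x' t) := funext fun x' => hyxx j x' t ht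
    show deriv (fun x' => pdx (pdx (y j)) x' t) x = _
    rw [e1]
    have hY : HasDerivAt (fun x' => y j x' t) (pdx (y j) x t) x := (hySm j).hasDerivAt_x hIo ht
    have hP : HasDerivAt (fun x' => pdx (y j) x' t) (pdx (pdx (y j)) x t) x :=
      (hyxSm j).hasDerivAt_x hIo ht
    have hu : HasDerivAt (fun x' => ucon n y x' t) (pdx (ucon n y) x t) x :=
      huSm.hasDerivAt_x hIo ht
    have hd := (((hP.fun_pow 2).sub_const ((alp j)^2)).div (hY.const_mul 2)
        (by simpa using hyne j x t ht)).add
      (((hu.sub_const (lam j)).const_mul 2).mul hY)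
    refine hd.deriv.trans ?_
    rw [hyxx j x t ht]
    have hYne := hyne j x t ht
    field_simp
    ring
  have huxxx : ∀ x t, t ∈ I → pdx (pdx (pdx (ucon n y))) x t
      = (∑ j, pdx (pdx (pdx (y j))) x t)/(3*t) := by
    intro x t ht
    have e1 : (fun x' => pdx (pdx (ucon n y)) x' t)
        = (fun x' => (∑ j, pdx (pdx (y j)) x' t)/(3*t)) := funext fun x' => huxx x' t ht
    show deriv (fun x' => pdx (pdx (ucon n y)) x' t) x = _
    rw [e1]
    exact ((HasDerivAt.fun_sum fun j _ => (hyxxSm j).hasDerivAt_x hIo ht).div_const _).deriv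
  have hut : ∀ x t, t ∈ I → pdt (ucon n y) x t
      = -(x/(6*t^2)) - (∑ j, y j x t)/(3*t^2) + (∑ j, pdt (y j) x t)/(3*t) := by
    intro x t ht
    have ht0 := htne t ht
    have hden6 : HasDerivAt (fun t' : ℝ => 6*t') (6:ℝ) t := by
      simpa using (hasDerivAt_id t).const_mul (6:ℝ)
    have hden3 : HasDerivAt (fun t' : ℝ => 3*t') (3:ℝ) t := by
      simpa using (hasDerivAt_id t).const_mul (3:ℝ)
    have h1 : HasDerivAt (fun t' : ℝ => x/(6*t'))
        ((0*(6*t) - x*6)/(6*t)^2) t :=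
      (hasDerivAt_const t x).div hden6 (by positivity)
    have h2 : HasDerivAt (fun t' => (∑ j, y j x t')/(3*t'))
        (((∑ j, pdt (y j) x t)*(3*t) - (∑ j, y j x t)*3)/(3*t)^2) t :=
      (HasDerivAt.fun_sum fun j _ => (hySm j).hasDerivAt_t hIo ht).div
        hden3 (by positivity)
    refine ((h1.add h2).deriv).trans ?_
    field_simp
    ring
  have hGx : ∀ x t, t ∈ I → pdx G x t = -((1/2) * ∑ j, pdx (y j) x t / (l - lam j)) := by
    intro x t ht
    have hd : HasDerivAt (fun x' => -3*t - (1/2) * ∑ j, y j x' t / (l - lam j))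
        (-((1/2) * ∑ j, pdx (y j) x t / (l - lam j))) x := by
      have h2 : HasDerivAt (fun x' => (1/2) * ∑ j, y j x' t / (l - lam j))
          ((1/2) * ∑ j, pdx (y j) x t / (l - lam j)) x :=
        (HasDerivAt.fun_sum fun j _ => ((hySm j).hasDerivAt_x hIo ht).div_const _).const_mul _
      simpa using h2.const_sub (-3*t)
    exact hd.deriv
  have hGxx : ∀ x t, t ∈ I → pdx (pdx G) x t
      = -((1/2) * ∑ j, pdx (pdx (y j)) x t / (l - lam j)) := by
    intro x t ht
    have e1 : (fun x' => pdx G x' t)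
        = (fun x' => -((1/2) * ∑ j, pdx (y j) x' t / (l - lam j))) :=
      funext fun x' => hGx x' t ht
    show deriv (fun x' => pdx G x' t) x = _
    rw [e1]
    have hd : HasDerivAt (fun x' => (1/2) * ∑ j, pdx (y j) x' t / (l - lam j))
        ((1/2) * ∑ j, pdx (pdx (y j)) x t / (l - lam j)) x :=
      (HasDerivAt.fun_sum fun j _ => ((hyxSm j).hasDerivAt_x hIo ht).div_const _).const_mul _
    exact hd.neg.deriv
  have hG3 : ∀ x t, t ∈ I → pdx (pdx (pdx G)) x t
      = 4*(ucon n y x t - l)*pdx G x t + 2*pdx (ucon n y) x t*G x t + 1 := by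
    intro x t ht
    have ht0 := htne t ht
    have e1 : (fun x' => pdx (pdx G) x' t)
        = (fun x' => -((1/2) * ∑ j, pdx (pdx (y j)) x' t / (l - lam j))) :=
      funext fun x' => hGxx x' t ht
    show deriv (fun x' => pdx (pdx G) x' t) x = _
    rw [e1]
    have hd : HasDerivAt (fun x' => (1/2) * ∑ j, pdx (pdx (y j)) x' t / (l - lam j))
        ((1/2) * ∑ j, pdx (pdx (pdx (y j))) x t / (l - lam j)) x :=
      (HasDerivAt.fun_sum fun j _ => ((hyxxSm j).hasDerivAt_x hIo ht).div_const _).const_mul _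
    refine hd.neg.deriv.trans ?_
    have e2 : ∀ j ∈ Finset.univ, pdx (pdx (pdx (y j))) x t / (l - lam j)
        = (4*(ucon n y x t - l)) * (pdx (y j) x t / (l - lam j)) + 4 * pdx (y j) x t
          + (2*pdx (ucon n y) x t) * (y j x t / (l - lam j)) := by
      intro j _
      rw [hy3 j x t ht]
      field_simp [hcl j]
      ring
    rw [Finset.sum_congr rfl e2, Finset.sum_add_distrib, Finset.sum_add_distrib,
      ← Finset.mul_sum, ← Finset.mul_sum, ← Finset.mul_sum]
    rw [hGx x t ht, hux x t ht, hGdef]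
    field_simp
    ring
  have hGt : ∀ x t, t ∈ I → pdt G x t
      = -2 + 2*pdx (ucon n y) x t*G x t - 2*(ucon n y x t + 2*l)*pdx G x t := by
    intro x t ht
    have ht0 := htne t ht
    have hd : HasDerivAt (fun t' => -3*t' - (1/2) * ∑ j, y j x t' / (l - lam j))
        ((-3) - (1/2) * ∑ j, pdt (y j) x t / (l - lam j)) t := by
      have h1 : HasDerivAt (fun t' : ℝ => -3*t') (-3 : ℝ) t := by
        simpa using (hasDerivAt_id t).const_mul (-3 : ℝ)
      have h2 : HasDerivAt (fun t' => (1/2) * ∑ j, y j x t' / (l - lam j))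
          ((1/2) * ∑ j, pdt (y j) x t / (l - lam j)) t :=
        (HasDerivAt.fun_sum fun j _ => ((hySm j).hasDerivAt_t hIo ht).div_const _).const_mul _
      exact h1.sub h2
    have h0 : pdt G x t = (-3) - (1/2) * ∑ j, pdt (y j) x t / (l - lam j) := hd.deriv
    rw [h0]
    have e2 : ∀ j ∈ Finset.univ, pdt (y j) x t / (l - lam j)
        = (2*pdx (ucon n y) x t) * (y j x t / (l - lam j))
          - (2*(ucon n y x t + 2*l)) * (pdx (y j) x t / (l - lam j))
          + 4 * pdx (y j) x t := by
      intro j _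
      rw [hyt j x t ht]
      field_simp [hcl j]
      ring
    rw [Finset.sum_congr rfl e2, Finset.sum_add_distrib, Finset.sum_sub_distrib,
      ← Finset.mul_sum, ← Finset.mul_sum, ← Finset.mul_sum]
    rw [hGx x t ht, hux x t ht, hGdef]
    field_simp
    ring
  have hKdV : ∀ x t, t ∈ I → pdt (ucon n y) x t
      = pdx (pdx (pdx (ucon n y))) x t - 6*ucon n y x t*pdx (ucon n y) x t := by
    intro x t ht
    have ht0 := htne t ht
    rw [hut x t ht, huxxx x t ht]
    have e1 : ∀ j ∈ Finset.univ, pdt (y j) x t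
        = (2*pdx (ucon n y) x t)*y j x t - (2*ucon n y x t)*pdx (y j) x t
          - 4*(lam j * pdx (y j) x t) := by
      intro j _
      rw [hyt j x t ht]
      ring
    have e2 : ∀ j ∈ Finset.univ, pdx (pdx (pdx (y j))) x t
        = (4*ucon n y x t)*pdx (y j) x t - 4*(lam j * pdx (y j) x t)
          + (2*pdx (ucon n y) x t)*(y j x t) := by
      intro j _
      rw [hy3 j x t ht]
      ring
    rw [Finset.sum_congr rfl e1, Finset.sum_congr rfl e2, sum_comb1, sum_comb2]
    rw [hux x t ht]
    have hueq : ucon n y x t = x/(6*t) + (∑ j, y j x t)/(3*t) := rfl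
    rw [hueq]
    field_simp
    ring
  have hGtx : ∀ x t, t ∈ I → pdt (pdx G) x t
      = 2*pdx (pdx (ucon n y)) x t*G x t - 2*(ucon n y x t + 2*l)*pdx (pdx G) x t := by
    intro x t ht
    rw [hGSm.clairaut hIo ht]
    have e1 : (fun x' => pdt G x' t)
        = (fun x' => -2 + 2*pdx (ucon n y) x' t*G x' t
            - 2*(ucon n y x' t + 2*l)*pdx G x' t) := funext fun x' => hGt x' t ht
    show deriv (fun x' => pdt G x' t) x = _
    rw [e1]
    have hU1 : HasDerivAt (fun x' => ucon n y x' t) (pdx (ucon n y) x t) x :=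
      huSm.hasDerivAt_x hIo ht
    have hU2 : HasDerivAt (fun x' => pdx (ucon n y) x' t) (pdx (pdx (ucon n y)) x t) x :=
      huxSm.hasDerivAt_x hIo ht
    have hG0 : HasDerivAt (fun x' => G x' t) (pdx G x t) x := hGSm.hasDerivAt_x hIo ht
    have hG1 : HasDerivAt (fun x' => pdx G x' t) (pdx (pdx G) x t) x :=
      hGxSm.hasDerivAt_x hIo ht
    have hd := ((hasDerivAt_const x (-2 : ℝ)).add
        ((hU2.const_mul 2).mul hG0)).sub
      (((hU1.add_const (2*l)).const_mul 2).mul hG1)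
    exact hd.deriv.trans (by ring)
  have hGtxx : ∀ x t, t ∈ I → pdt (pdx (pdx G)) x t
      = 2*pdx (pdx (pdx (ucon n y))) x t*G x t + 2*pdx (pdx (ucon n y)) x t*pdx G x t
        - 2*pdx (ucon n y) x t*pdx (pdx G) x t
        - 2*(ucon n y x t + 2*l)*pdx (pdx (pdx G)) x t := by
    intro x t ht
    rw [hGxSm.clairaut hIo ht]
    have e1 : (fun x' => pdt (pdx G) x' t)
        = (fun x' => 2*pdx (pdx (ucon n y)) x' t*G x' t
            - 2*(ucon n y x' t + 2*l)*pdx (pdx G) x' t) := funext fun x' => hGtx x' t ht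
    show deriv (fun x' => pdt (pdx G) x' t) x = _
    rw [e1]
    have hU1 : HasDerivAt (fun x' => ucon n y x' t) (pdx (ucon n y) x t) x :=
      huSm.hasDerivAt_x hIo ht
    have hU3 : HasDerivAt (fun x' => pdx (pdx (ucon n y)) x' t)
        (pdx (pdx (pdx (ucon n y))) x t) x := huxxSm.hasDerivAt_x hIo ht
    have hG0 : HasDerivAt (fun x' => G x' t) (pdx G x t) x := hGSm.hasDerivAt_x hIo ht
    have hG2 : HasDerivAt (fun x' => pdx (pdx G) x' t) (pdx (pdx (pdx G)) x t) x :=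
      hGxxSm.hasDerivAt_x hIo ht
    have hd := ((hU3.const_mul 2).mul hG0).sub
      (((hU1.add_const (2*l)).const_mul 2).mul hG2)
    exact hd.deriv.trans (by ring)

  have hVx : ∀ l' x t, t ∈ I → pdx (fun x' t' => -(ucon n y x' t') - 2*l') x t
      = -(pdx (ucon n y) x t) := by
    intro l' x t ht
    have hU1 : HasDerivAt (fun x' => ucon n y x' t) (pdx (ucon n y) x t) x :=
      huSm.hasDerivAt_x hIo ht
    exact ((hU1.neg).sub_const (2*l')).deriv
  have hVxx : ∀ l' x t, t ∈ I → pdx (pdx (fun x' t' => -(ucon n y x' t') - 2*l')) x t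
      = -(pdx (pdx (ucon n y)) x t) := by
    intro l' x t ht
    have e1 : (fun x' => pdx (fun x' t' => -(ucon n y x' t') - 2*l') x' t)
        = (fun x' => -(pdx (ucon n y) x' t)) := funext fun x' => hVx l' x' t ht
    show deriv (fun x' => pdx (fun x' t' => -(ucon n y x' t') - 2*l') x' t) x = _
    rw [e1, deriv.fun_neg]
    rfl
  intro x t ht
  have ht0 := htne t ht
  -- entry derivative lemmas for W in x
  have hW00x : deriv (fun x' => W l x' t 0 0) x = -(pdx (pdx G) x t) := by
    have e : (fun x' => W l x' t 0 0) = fun x' => -(pdx G x' t) :=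
      funext fun x' => by rw [hWl]; simp [Mmat]
    rw [e, deriv.fun_neg]
    rfl
  have hW01x : deriv (fun x' => W l x' t 0 1) x = 2*pdx G x t := by
    have e : (fun x' => W l x' t 0 1) = fun x' => 2*G x' t :=
      funext fun x' => by rw [hWl]; simp [Mmat]
    rw [e, deriv_const_mul_field]
    rfl
  have hW10x : deriv (fun x' => W l x' t 1 0) x
      = 2*pdx (ucon n y) x t*G x t + 2*(ucon n y x t - l)*pdx G x t
        - pdx (pdx (pdx G)) x t := by
    have e : (fun x' => W l x' t 1 0)
        = fun x' => 2*(ucon n y x' t - l)*G x' t - pdx (pdx G) x' t :=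
      funext fun x' => by rw [hWl]; simp [Mmat]
    rw [e]
    have hU1 : HasDerivAt (fun x' => ucon n y x' t) (pdx (ucon n y) x t) x :=
      huSm.hasDerivAt_x hIo ht
    have hG0 : HasDerivAt (fun x' => G x' t) (pdx G x t) x := hGSm.hasDerivAt_x hIo ht
    have hG2 : HasDerivAt (fun x' => pdx (pdx G) x' t) (pdx (pdx (pdx G)) x t) x :=
      hGxxSm.hasDerivAt_x hIo ht
    exact ((((hU1.sub_const l).const_mul 2).mul hG0).sub hG2).deriv.trans (by ring)
  have hW11x : deriv (fun x' => W l x' t 1 1) x = pdx (pdx G) x t := by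
    have e : (fun x' => W l x' t 1 1) = fun x' => pdx G x' t :=
      funext fun x' => by rw [hWl]; simp [Mmat]
    rw [e]
    rfl
  -- entry derivative lemmas for W in t
  have hW00t : deriv (fun t' => W l x t' 0 0) t = -(pdt (pdx G) x t) := by
    have e : (fun t' => W l x t' 0 0) = fun t' => -(pdx G x t') :=
      funext fun t' => by rw [hWl]; simp [Mmat]
    rw [e, deriv.fun_neg]
    rfl
  have hW01t : deriv (fun t' => W l x t' 0 1) t = 2*pdt G x t := by
    have e : (fun t' => W l x t' 0 1) = fun t' => 2*G x t' :=
      funext fun t' => by rw [hWl]; simp [Mmat]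
    rw [e, deriv_const_mul_field]
    rfl
  have hW10t : deriv (fun t' => W l x t' 1 0) t
      = 2*pdt (ucon n y) x t*G x t + 2*(ucon n y x t - l)*pdt G x t
        - pdt (pdx (pdx G)) x t := by
    have e : (fun t' => W l x t' 1 0)
        = fun t' => 2*(ucon n y x t' - l)*G x t' - pdx (pdx G) x t' :=
      funext fun t' => by rw [hWl]; simp [Mmat]
    rw [e]
    have hU1 : HasDerivAt (fun t' => ucon n y x t') (pdt (ucon n y) x t) t :=
      huSm.hasDerivAt_t hIo ht
    have hG0 : HasDerivAt (fun t' => G x t') (pdt G x t) t := hGSm.hasDerivAt_t hIo ht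
    have hG2 : HasDerivAt (fun t' => pdx (pdx G) x t') (pdt (pdx (pdx G)) x t) t :=
      hGxxSm.hasDerivAt_t hIo ht
    exact ((((hU1.sub_const l).const_mul 2).mul hG0).sub hG2).deriv.trans (by ring)
  have hW11t : deriv (fun t' => W l x t' 1 1) t = pdt (pdx G) x t := by
    have e : (fun t' => W l x t' 1 1) = fun t' => pdx G x t' :=
      funext fun t' => by rw [hWl]; simp [Mmat]
    rw [e]
    rfl
  -- lambda-derivatives of U entries
  have hU00l : deriv (fun l' => U l' x t 0 0) l = 0 := by
    have e : (fun l' => U l' x t 0 0) = fun _ => (0:ℝ) :=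
      funext fun l' => by rw [hU]; simp
    rw [e]
    simp
  have hU01l : deriv (fun l' => U l' x t 0 1) l = 0 := by
    have e : (fun l' => U l' x t 0 1) = fun _ => (1:ℝ) :=
      funext fun l' => by rw [hU]; simp
    rw [e]
    simp
  have hU10l : deriv (fun l' => U l' x t 1 0) l = -1 := by
    have e : (fun l' => U l' x t 1 0) = fun l' => ucon n y x t - l' :=
      funext fun l' => by rw [hU]; simp
    rw [e]
    exact (((hasDerivAt_const l (ucon n y x t)).sub (hasDerivAt_id l)).deriv).trans
      (by norm_num)
  have hU11l : deriv (fun l' => U l' x t 1 1) l = 0 := by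
    have e : (fun l' => U l' x t 1 1) = fun _ => (0:ℝ) :=
      funext fun l' => by rw [hU]; simp
    rw [e]
    simp
  -- explicit form of V
  have hVmat : ∀ l', V l' x t = !![pdx (ucon n y) x t, 2*(-(ucon n y x t) - 2*l');
      2*(ucon n y x t - l')*(-(ucon n y x t) - 2*l') + pdx (pdx (ucon n y)) x t,
      -(pdx (ucon n y) x t)] := by
    intro l'
    rw [hV]
    simp only [Mmat]
    rw [hVx l' x t ht, hVxx l' x t ht]
    norm_num [sub_neg_eq_add]
  -- lambda-derivatives of V entries
  have hV00l : deriv (fun l' => V l' x t 0 0) l = 0 := by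
    have e : (fun l' => V l' x t 0 0) = fun _ => pdx (ucon n y) x t :=
      funext fun l' => by rw [hVmat l']; simp
    rw [e]
    simp
  have hV01l : deriv (fun l' => V l' x t 0 1) l = -4 := by
    have e : (fun l' => V l' x t 0 1) = fun l' => 2*(-(ucon n y x t) - 2*l') :=
      funext fun l' => by rw [hVmat l']; simp
    rw [e]
    have h2 : HasDerivAt (fun l' : ℝ => -(ucon n y x t) - 2*l') (-2 : ℝ) l := by
      simpa using ((hasDerivAt_id l).const_mul (2:ℝ)).const_sub (-(ucon n y x t))
    exact ((h2.const_mul 2).deriv).trans (by norm_num)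
  have hV10l : deriv (fun l' => V l' x t 1 0) l = 8*l - 2*ucon n y x t := by
    have e : (fun l' => V l' x t 1 0)
        = fun l' => 2*(ucon n y x t - l')*(-(ucon n y x t) - 2*l')
            + pdx (pdx (ucon n y)) x t :=
      funext fun l' => by rw [hVmat l']; simp
    rw [e]
    have h1 : HasDerivAt (fun l' : ℝ => 2*(ucon n y x t - l')) (2*(0-1) : ℝ) l :=
      ((hasDerivAt_const l (ucon n y x t)).sub (hasDerivAt_id l)).const_mul 2
    have h2 : HasDerivAt (fun l' : ℝ => -(ucon n y x t) - 2*l') (-2 : ℝ) l := by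
      simpa using ((hasDerivAt_id l).const_mul (2:ℝ)).const_sub (-(ucon n y x t))
    exact (((h1.mul h2).add_const (pdx (pdx (ucon n y)) x t)).deriv).trans (by ring)
  have hV11l : deriv (fun l' => V l' x t 1 1) l = 0 := by
    have e : (fun l' => V l' x t 1 1) = fun _ => -(pdx (ucon n y) x t) :=
      funext fun l' => by rw [hVmat l']; simp
    rw [e]
    simp
  constructor
  · -- the x-equation
    have h00 : pdxM (W l) x t 0 0
        = (pdl (fun l' => U l' x t) l + (U l x t * W l x t - W l x t * U l x t)) 0 0 := by
      simp only [pdxM, pdl, Matrix.of_apply, Matrix.add_apply, Matrix.sub_apply,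
        Matrix.mul_apply, Fin.sum_univ_two]
      rw [hW00x, hU00l]
      simp only [hU, hWl, Mmat, Matrix.cons_val', Matrix.cons_val_zero, Matrix.cons_val_one,
        Matrix.head_cons, Matrix.empty_val', Matrix.cons_val_fin_one, Matrix.head_fin_const,
        Matrix.of_apply, Fin.isValue]
      ring
    have h01 : pdxM (W l) x t 0 1
        = (pdl (fun l' => U l' x t) l + (U l x t * W l x t - W l x t * U l x t)) 0 1 := by
      simp only [pdxM, pdl, Matrix.of_apply, Matrix.add_apply, Matrix.sub_apply,
        Matrix.mul_apply, Fin.sum_univ_two]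
      rw [hW01x, hU01l]
      simp only [hU, hWl, Mmat, Matrix.cons_val', Matrix.cons_val_zero, Matrix.cons_val_one,
        Matrix.head_cons, Matrix.empty_val', Matrix.cons_val_fin_one, Matrix.head_fin_const,
        Matrix.of_apply, Fin.isValue]
      ring
    have h10 : pdxM (W l) x t 1 0
        = (pdl (fun l' => U l' x t) l + (U l x t * W l x t - W l x t * U l x t)) 1 0 := by
      simp only [pdxM, pdl, Matrix.of_apply, Matrix.add_apply, Matrix.sub_apply,
        Matrix.mul_apply, Fin.sum_univ_two]
      rw [hW10x, hU10l]
      simp only [hU, hWl, Mmat, Matrix.cons_val', Matrix.cons_val_zero, Matrix.cons_val_one,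
        Matrix.head_cons, Matrix.empty_val', Matrix.cons_val_fin_one, Matrix.head_fin_const,
        Matrix.of_apply, Fin.isValue]
      rw [hG3 x t ht]
      ring
    have h11 : pdxM (W l) x t 1 1
        = (pdl (fun l' => U l' x t) l + (U l x t * W l x t - W l x t * U l x t)) 1 1 := by
      simp only [pdxM, pdl, Matrix.of_apply, Matrix.add_apply, Matrix.sub_apply,
        Matrix.mul_apply, Fin.sum_univ_two]
      rw [hW11x, hU11l]
      simp only [hU, hWl, Mmat, Matrix.cons_val', Matrix.cons_val_zero, Matrix.cons_val_one,
        Matrix.head_cons, Matrix.empty_val', Matrix.cons_val_fin_one, Matrix.head_fin_const,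
        Matrix.of_apply, Fin.isValue]
      ring
    ext i j
    fin_cases i <;> fin_cases j
    · exact h00
    · exact h01
    · exact h10
    · exact h11
  · -- the t-equation
    have h00 : pdtM (W l) x t 0 0
        = (pdl (fun l' => V l' x t) l + (V l x t * W l x t - W l x t * V l x t)) 0 0 := by
      simp only [pdtM, pdl, Matrix.of_apply, Matrix.add_apply, Matrix.sub_apply,
        Matrix.mul_apply, Fin.sum_univ_two]
      rw [hW00t, hV00l, hGtx x t ht]
      rw [hVmat l, hWl]
      simp only [Matrix.cons_val', Matrix.cons_val_zero, Matrix.cons_val_one,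
        Matrix.head_cons, Matrix.empty_val', Matrix.cons_val_fin_one, Matrix.head_fin_const,
        Matrix.of_apply, Fin.isValue, Mmat]
      ring
    have h01 : pdtM (W l) x t 0 1
        = (pdl (fun l' => V l' x t) l + (V l x t * W l x t - W l x t * V l x t)) 0 1 := by
      simp only [pdtM, pdl, Matrix.of_apply, Matrix.add_apply, Matrix.sub_apply,
        Matrix.mul_apply, Fin.sum_univ_two]
      rw [hW01t, hV01l, hGt x t ht]
      rw [hVmat l, hWl]
      simp only [Matrix.cons_val', Matrix.cons_val_zero, Matrix.cons_val_one,
        Matrix.head_cons, Matrix.empty_val', Matrix.cons_val_fin_one, Matrix.head_fin_const,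
        Matrix.of_apply, Fin.isValue, Mmat]
      ring
    have h10 : pdtM (W l) x t 1 0
        = (pdl (fun l' => V l' x t) l + (V l x t * W l x t - W l x t * V l x t)) 1 0 := by
      simp only [pdtM, pdl, Matrix.of_apply, Matrix.add_apply, Matrix.sub_apply,
        Matrix.mul_apply, Fin.sum_univ_two]
      rw [hW10t, hV10l, hKdV x t ht, hGt x t ht, hGtxx x t ht, hG3 x t ht]
      rw [hVmat l, hWl]
      simp only [Matrix.cons_val', Matrix.cons_val_zero, Matrix.cons_val_one,
        Matrix.head_cons, Matrix.empty_val', Matrix.cons_val_fin_one, Matrix.head_fin_const,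
        Matrix.of_apply, Fin.isValue, Mmat]
      ring
    have h11 : pdtM (W l) x t 1 1
        = (pdl (fun l' => V l' x t) l + (V l x t * W l x t - W l x t * V l x t)) 1 1 := by
      simp only [pdtM, pdl, Matrix.of_apply, Matrix.add_apply, Matrix.sub_apply,
        Matrix.mul_apply, Fin.sum_univ_two]
      rw [hW11t, hV11l, hGtx x t ht]
      rw [hVmat l, hWl]
      simp only [Matrix.cons_val', Matrix.cons_val_zero, Matrix.cons_val_one,
        Matrix.head_cons, Matrix.empty_val', Matrix.cons_val_fin_one, Matrix.head_fin_const,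
        Matrix.of_apply, Fin.isValue, Mmat]
      ring
    ext i j
    fin_cases i <;> fin_cases j
    · exact h00
    · exact h01
    · exact h10
    · exact h11
end
end

section
/- Let n ≥ 1, κ_0 ≠ 0, and let λ_1,…,λ_n be pairwise distinct reals; set κ(λ) = κ_0 (λ−λ_1)⋯(λ−λ_n) = κ_0 λⁿ + κ_1 λ^{n−1} + ⋯ + κ_n. Let I be an open interval with 0 ∉ I, let u : ℝ × I → ℝ be smooth, and let g(λ,x,t) = Σ_{m=0}^n g_m(x,t) λ^{n−m} be polynomial in λ of degree n with smooth coefficients, normalized by g_0 = −3κ_0 t and g_1 = −(κ_0/4)(6tu − x) − 3κ_1 t. Assume that for all λ ∈ ℝ: ∂_x³ g + 4(λ − u)∂_x g − 2(∂_x u) g = κ(λ) and ∂_t g = ∂_x³ g − 6u ∂_x g − 3κ(λ). Define y_j(x,t) = −2 g(λ_j,x,t)/(κ_0 ∏_{i≠j}(λ_j−λ_i)). Then: (i) u = x/(6t) + (y_1+⋯+y_n)/(3t); (ii) ∂_t y_j = 2(∂_x u) y_j − 2(u+2λ_j)∂_x y_j; and (iii) for each j there is a constant c_j ∈ ℝ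 (independent of x and t) such that 2 y_j ∂_x² y_j − (∂_x y_j)² + 4(λ_j − u) y_j² = −c_j identically on ℝ × I. -/
open Set Function

noncomputable section

open Polynomial in
lemma aux_basis_coeff {n : ℕ} (v : Fin n → ℝ) (j : Fin n) :
    (Lagrange.basis Finset.univ v j).coeff (n - 1) =
      (∏ i ∈ Finset.univ.erase j, (v j - v i))⁻¹ := by
  classical
  have hcard : (Finset.univ.erase j).card = n - 1 := by
    rw [Finset.card_erase_of_mem (Finset.mem_univ j), Finset.card_univ, Fintype.card_fin]
  have hb : Lagrange.basis Finset.univ v j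
      = C (∏ i ∈ Finset.univ.erase j, (v j - v i)⁻¹)
        * ∏ i ∈ Finset.univ.erase j, (X - C (v i)) := by
    rw [Lagrange.basis]
    simp_rw [Lagrange.basisDivisor]
    rw [Finset.prod_mul_distrib, map_prod]
  have hmono : ∀ i ∈ Finset.univ.erase j, (X - C (v i)).Monic := fun i _ => monic_X_sub_C _
  have hdeg : (∏ i ∈ Finset.univ.erase j, (X - C (v i))).natDegree = n - 1 := by
    rw [natDegree_prod_of_monic _ _ hmono]
    simp [hcard]
  rw [hb, coeff_C_mul, ← hdeg, (monic_prod_of_monic _ _ hmono).coeff_natDegree, mul_one,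
    ← Finset.prod_inv_distrib]

open Polynomial in
lemma aux_coeff_eq_sum_div {n : ℕ} (v : Fin n → ℝ) (hv : Function.Injective v)
    (p : ℝ[X]) (hdeg : p.degree < n) :
    p.coeff (n - 1) = ∑ j, p.eval (v j) / ∏ i ∈ Finset.univ.erase j, (v j - v i) := by
  classical
  have hvs : Set.InjOn v ↑(Finset.univ : Finset (Fin n)) := fun a _ b _ h => hv h
  have h := Lagrange.eq_interpolate hvs (by simpa using hdeg)
  calc p.coeff (n-1)
      = (Lagrange.interpolate Finset.univ v fun i => p.eval (v i)).coeff (n-1) := by rw [← h]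
    _ = _ := by
        rw [Lagrange.interpolate_apply, finset_sum_coeff]
        refine Finset.sum_congr rfl fun j _ => ?_
        rw [coeff_C_mul, aux_basis_coeff v j, div_eq_mul_inv]

open Polynomial in
lemma aux_divdiff_pow {n : ℕ} (v : Fin n → ℝ) (hv : Function.Injective v) (k : ℕ) (hk : k < n) :
    ∑ j, v j ^ k / ∏ i ∈ Finset.univ.erase j, (v j - v i) = if k + 1 = n then 1 else 0 := by
  have hd : (X ^ k : ℝ[X]).degree < n := by
    rw [degree_X_pow]; exact_mod_cast hk
  have h := aux_coeff_eq_sum_div v hv (X ^ k) hd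
  simp only [eval_pow, eval_X] at h
  rw [← h, coeff_X_pow]
  have : n - 1 = k ↔ k + 1 = n := by omega
  simp [this]

open Polynomial in
lemma aux_divdiff_top {n : ℕ} (hn : 1 ≤ n) (v : Fin n → ℝ) (hv : Function.Injective v) :
    ∑ j, v j ^ n / ∏ i ∈ Finset.univ.erase j, (v j - v i) = ∑ i, v i := by
  classical
  set q : ℝ[X] := ∏ i, (X - C (v i)) with hq
  have hmono : ∀ i ∈ (Finset.univ : Finset (Fin n)), (X - C (v i)).Monic :=
    fun i _ => monic_X_sub_C _
  have hqmonic : q.Monic := monic_prod_of_monic _ _ hmono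
  have hqdeg : q.natDegree = n := by
    rw [hq, natDegree_prod_of_monic _ _ hmono]; simp
  have hdeg : (X ^ n - q).degree < (n : WithBot ℕ) := by
    have h2 : q.degree = (n : WithBot ℕ) := by
      rw [degree_eq_natDegree hqmonic.ne_zero, hqdeg]
    have h3 := degree_sub_lt ((degree_X_pow n).trans h2.symm)
      (pow_ne_zero n X_ne_zero)
      (by rw [leadingCoeff_X_pow, hqmonic.leadingCoeff])
    rwa [degree_X_pow] at h3
  have h := aux_coeff_eq_sum_div v hv (X ^ n - q) hdeg
  have hL : (X ^ n - q).coeff (n - 1) = ∑ i, v i := by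
    rw [coeff_sub, coeff_X_pow, if_neg (by omega)]
    have hcard : (0:ℕ) < (Finset.univ : Finset (Fin n)).card := by simp; omega
    have := prod_X_sub_C_coeff_card_pred (Finset.univ : Finset (Fin n)) v hcard
    rw [Finset.card_univ, Fintype.card_fin] at this
    rw [hq, this]; ring
  rw [hL] at h
  have heval : ∀ j, Polynomial.eval (v j) (X ^ n - q) = v j ^ n := by
    intro j
    rw [eval_sub, eval_pow, eval_X, hq, eval_prod,
      Finset.prod_eq_zero (Finset.mem_univ j) (by simp), sub_zero]
  rw [h]
  exact Finset.sum_congr rfl fun j _ => by rw [heval]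

section infra
variable {I : Set ℝ} {f : ℝ → ℝ → ℝ}

lemma sliceX_contDiff (hf : ContDiffOn ℝ (⊤:ℕ∞) (uncurry f) (univ ×ˢ I)) {t : ℝ} (ht : t ∈ I) :
    ContDiff ℝ (⊤:ℕ∞) (fun x => f x t) := by
  rw [← contDiffOn_univ]
  exact hf.comp ((contDiff_id.prodMk contDiff_const).contDiffOn)
    (fun x _ => ⟨mem_univ _, ht⟩)

lemma sliceT_contDiffOn (hf : ContDiffOn ℝ (⊤:ℕ∞) (uncurry f) (univ ×ˢ I)) (x : ℝ) :
    ContDiffOn ℝ (⊤:ℕ∞) (fun t => f x t) I :=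
  hf.comp ((contDiff_const.prodMk contDiff_id).contDiffOn) (fun s hs => ⟨mem_univ _, hs⟩)

lemma contDiff_deriv'' {φ : ℝ → ℝ} (hφ : ContDiff ℝ (⊤:ℕ∞) φ) :
    ContDiff ℝ (⊤:ℕ∞) (deriv φ) := (contDiff_infty_iff_deriv.mp hφ).2

lemma hasDerivAt_pdt (hf : ContDiffOn ℝ (⊤:ℕ∞) (uncurry f) (univ ×ˢ I)) (hIo : IsOpen I)
    {x t : ℝ} (ht : t ∈ I) :
    HasDerivAt (fun t' => f x t') (pdt f x t) t := by
  have h := ((sliceT_contDiffOn hf x).differentiableOn (by simp)).differentiableAt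
    (hIo.mem_nhds ht)
  exact h.hasDerivAt

lemma pdx_eq_fderiv (hf : ContDiffOn ℝ (⊤:ℕ∞) (uncurry f) (univ ×ˢ I)) (hIo : IsOpen I)
    {x t : ℝ} (ht : t ∈ I) :
    pdx f x t = fderiv ℝ (uncurry f) (x, t) (1, 0) := by
  have hU : IsOpen ((univ : Set ℝ) ×ˢ I) := isOpen_univ.prod hIo
  have hd : DifferentiableAt ℝ (uncurry f) (x, t) :=
    (hf.differentiableOn (by simp)).differentiableAt (hU.mem_nhds ⟨mem_univ _, ht⟩)
  have hι : HasDerivAt (fun x' : ℝ => (x', t)) ((1:ℝ), (0:ℝ)) x :=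
    (hasDerivAt_id x).prodMk (hasDerivAt_const x t)
  exact (hd.hasFDerivAt.comp_hasDerivAt x hι).deriv

lemma pdt_eq_fderiv (hf : ContDiffOn ℝ (⊤:ℕ∞) (uncurry f) (univ ×ˢ I)) (hIo : IsOpen I)
    {x t : ℝ} (ht : t ∈ I) :
    pdt f x t = fderiv ℝ (uncurry f) (x, t) (0, 1) := by
  have hU : IsOpen ((univ : Set ℝ) ×ˢ I) := isOpen_univ.prod hIo
  have hd : DifferentiableAt ℝ (uncurry f) (x, t) :=
    (hf.differentiableOn (by simp)).differentiableAt (hU.mem_nhds ⟨mem_univ _, ht⟩)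
  have hι : HasDerivAt (fun t' : ℝ => (x, t')) ((0:ℝ), (1:ℝ)) t :=
    (hasDerivAt_const t x).prodMk (hasDerivAt_id t)
  exact (hd.hasFDerivAt.comp_hasDerivAt t hι).deriv

lemma pdx_contDiffOn (hf : ContDiffOn ℝ (⊤:ℕ∞) (uncurry f) (univ ×ˢ I)) (hIo : IsOpen I) :
    ContDiffOn ℝ (⊤:ℕ∞) (uncurry (pdx f)) (univ ×ˢ I) := by
  have hU : IsOpen ((univ : Set ℝ) ×ˢ I) := isOpen_univ.prod hIo
  have h1 : ContDiffOn ℝ (⊤:ℕ∞) (fderiv ℝ (uncurry f)) (univ ×ˢ I) :=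
    hf.fderiv_of_isOpen hU (by simp)
  have h2 := h1.clm_apply (contDiffOn_const (c := ((1:ℝ),(0:ℝ))))
  exact h2.congr (fun p hp => pdx_eq_fderiv hf hIo hp.2)

lemma pdt_pdx_hasDerivAt (hf : ContDiffOn ℝ (⊤:ℕ∞) (uncurry f) (univ ×ˢ I)) (hIo : IsOpen I)
    {x t : ℝ} (ht : t ∈ I) :
    HasDerivAt (fun t' => pdx f x t') (pdx (pdt f) x t) t := by
  have hU : IsOpen ((univ : Set ℝ) ×ˢ I) := isOpen_univ.prod hIo
  have hmem : (x, t) ∈ (univ : Set ℝ) ×ˢ I := ⟨mem_univ _, ht⟩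
  have hFd : ∀ p ∈ (univ : Set ℝ) ×ˢ I, DifferentiableAt ℝ (uncurry f) p := fun p hp =>
    (hf.differentiableOn (by simp)).differentiableAt (hU.mem_nhds hp)
  have hF'cd : ContDiffOn ℝ (⊤:ℕ∞) (fderiv ℝ (uncurry f)) (univ ×ˢ I) :=
    hf.fderiv_of_isOpen hU (by simp)
  have hF'd : DifferentiableAt ℝ (fderiv ℝ (uncurry f)) (x, t) :=
    (hF'cd.differentiableOn (by simp)).differentiableAt (hU.mem_nhds hmem)
  have hsymm : ∀ v w : ℝ × ℝ,
      fderiv ℝ (fderiv ℝ (uncurry f)) (x,t) v w = fderiv ℝ (fderiv ℝ (uncurry f)) (x,t) w v := by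
    intro v w
    refine second_derivative_symmetric_of_eventually (f := uncurry f) ?_ hF'd.hasFDerivAt v w
    filter_upwards [hU.mem_nhds hmem] with p hp using (hFd p hp).hasFDerivAt
  have hι : HasDerivAt (fun t' : ℝ => (x, t')) ((0:ℝ), (1:ℝ)) t :=
    (hasDerivAt_const t x).prodMk (hasDerivAt_id t)
  have h1 : HasDerivAt (fun t' => fderiv ℝ (uncurry f) (x, t'))
      (fderiv ℝ (fderiv ℝ (uncurry f)) (x,t) (0,1)) t :=
    hF'd.hasFDerivAt.comp_hasDerivAt t hι
  have h2 : HasDerivAt (fun t' => fderiv ℝ (uncurry f) (x, t') ((1:ℝ),(0:ℝ)))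
      (fderiv ℝ (fderiv ℝ (uncurry f)) (x,t) (0,1) (1,0)) t := by
    simpa using h1.clm_apply (hasDerivAt_const t ((1:ℝ),(0:ℝ)))
  have hev : (fun t' => pdx f x t') =ᶠ[nhds t] (fun t' => fderiv ℝ (uncurry f) (x, t') (1,0)) := by
    filter_upwards [hIo.mem_nhds ht] with t' ht' using pdx_eq_fderiv hf hIo ht'
  have h3 : HasDerivAt (fun t' => pdx f x t')
      (fderiv ℝ (fderiv ℝ (uncurry f)) (x,t) (0,1) (1,0)) t := h2.congr_of_eventuallyEq hev
  have h4 : pdx (pdt f) x t = fderiv ℝ (fderiv ℝ (uncurry f)) (x,t) (1,0) (0,1) := by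
    have hx1 : HasDerivAt (fun x' => fderiv ℝ (uncurry f) (x', t))
        (fderiv ℝ (fderiv ℝ (uncurry f)) (x,t) (1,0)) x :=
      hF'd.hasFDerivAt.comp_hasDerivAt x ((hasDerivAt_id x).prodMk (hasDerivAt_const x t))
    have hx2 : HasDerivAt (fun x' => fderiv ℝ (uncurry f) (x', t) ((0:ℝ),(1:ℝ)))
        (fderiv ℝ (fderiv ℝ (uncurry f)) (x,t) (1,0) (0,1)) x := by
      simpa using hx1.clm_apply (hasDerivAt_const x ((0:ℝ),(1:ℝ)))
    have hfe : (fun x' => pdt f x' t) = fun x' => fderiv ℝ (uncurry f) (x', t) (0,1) :=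
      funext fun x' => pdt_eq_fderiv hf hIo ht
    show deriv (fun x' => pdt f x' t) x = _
    rw [hfe, hx2.deriv]
  rw [h4, ← hsymm]
  exact h3

lemma pdt_pdx_eq (hf : ContDiffOn ℝ (⊤:ℕ∞) (uncurry f) (univ ×ˢ I)) (hIo : IsOpen I)
    {x t : ℝ} (ht : t ∈ I) : pdt (pdx f) x t = pdx (pdt f) x t :=
  (pdt_pdx_hasDerivAt hf hIo ht).deriv

end infra

lemma const_of_hasDerivAt_zero {s : Set ℝ} (hso : IsOpen s) (hsc : Convex ℝ s) {h : ℝ → ℝ}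
    (hd : ∀ t ∈ s, HasDerivAt h 0 t) {t1 t2 : ℝ} (h1 : t1 ∈ s) (h2 : t2 ∈ s) :
    h t1 = h t2 := by
  refine hsc.is_const_of_fderivWithin_eq_zero
    (fun t ht => ((hd t ht).differentiableAt).differentiableWithinAt) (fun t ht => ?_) h1 h2
  rw [fderivWithin_of_isOpen hso ht, (hd t ht).hasFDerivAt.fderiv]
  ext
  simp

lemma constant_x {Y U : ℝ → ℝ} {lj : ℝ}
    (hY : ContDiff ℝ (⊤:ℕ∞) Y) (hU : ContDiff ℝ (⊤:ℕ∞) U)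
    (hst : ∀ z, deriv (deriv (deriv Y)) z = 2 * deriv U z * Y z - 4*(lj - U z) * deriv Y z)
    (x x' : ℝ) :
    2*Y x*deriv (deriv Y) x - (deriv Y x)^2 + 4*(lj - U x)*(Y x)^2
      = 2*Y x'*deriv (deriv Y) x' - (deriv Y x')^2 + 4*(lj - U x')*(Y x')^2 := by
  have hY1 : Differentiable ℝ Y := hY.differentiable (by simp)
  have hYd : ContDiff ℝ (⊤:ℕ∞) (deriv Y) := contDiff_deriv'' hY
  have hYdd : ContDiff ℝ (⊤:ℕ∞) (deriv (deriv Y)) := contDiff_deriv'' hYd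
  have hU1 : Differentiable ℝ U := hU.differentiable (by simp)
  have hd : ∀ z, HasDerivAt
      (fun w => 2*Y w*deriv (deriv Y) w - (deriv Y w)^2 + 4*(lj - U w)*(Y w)^2) 0 z := by
    intro z
    have h1 : HasDerivAt Y (deriv Y z) z := (hY1 z).hasDerivAt
    have h2 : HasDerivAt (deriv Y) (deriv (deriv Y) z) z :=
      ((hYd.differentiable (by simp)) z).hasDerivAt
    have h3 : HasDerivAt (deriv (deriv Y)) (deriv (deriv (deriv Y)) z) z :=
      ((hYdd.differentiable (by simp)) z).hasDerivAt
    have hu1 : HasDerivAt U (deriv U z) z := (hU1 z).hasDerivAt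
    have hc := (((h1.const_mul 2).fun_mul h3).fun_sub (h2.fun_pow 2)).fun_add
      (((hu1.const_sub lj).const_mul 4).fun_mul (h1.fun_pow 2))
    refine hc.congr_deriv ?_
    rw [hst z]; ring
  exact const_of_hasDerivAt_zero isOpen_univ convex_univ (fun z _ => hd z)
    (mem_univ x) (mem_univ x')

/-- from a degree-`n` (in λ) polynomial solution `g` of the integrated stationary
equation (gxxx) and the evolution (gt), normalized by the stated `g₀`, `g₁`, the functions
`yⱼ = −2g(λⱼ)/(κ₀ ∏_{i≠j}(λⱼ−λᵢ))` recover the constraint (uy), the system (yt), and the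
first integrals `2yⱼ∂ₓ²yⱼ − (∂ₓyⱼ)² + 4(λⱼ−u)yⱼ² = −cⱼ` with constants `cⱼ`. -/
theorem statement2
    (n : ℕ) (hn : 1 ≤ n)
    (k0 : ℝ) (hk0 : k0 ≠ 0)
    (lam : Fin n → ℝ) (hlam : Function.Injective lam)
    (a b : ℝ) (I : Set ℝ) (hI : I = Set.Ioo a b) (hI0 : (0:ℝ) ∉ I)
    (u : ℝ → ℝ → ℝ) (husmooth : ContDiffOn ℝ (⊤ : ℕ∞) (uncurry u) (univ ×ˢ I))
    -- κ(λ) = κ₀(λ−λ₁)⋯(λ−λₙ), and κ₁ is its coefficient of λ^{n−1}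
    (kap : ℝ → ℝ) (hkap : ∀ l, kap l = k0 * ∏ i, (l - lam i))
    (k1 : ℝ) (hk1 : k1 = -k0 * ∑ i, lam i)
    -- g(λ,x,t) = Σ_{m=0}^{n} g_m(x,t) λ^{n−m}, smooth coefficients
    (gc : Fin (n+1) → ℝ → ℝ → ℝ)
    (hgsmooth : ∀ m, ContDiffOn ℝ (⊤ : ℕ∞) (uncurry (gc m)) (univ ×ˢ I))
    (g : ℝ → ℝ → ℝ → ℝ)
    (hg : ∀ l x t, g l x t = ∑ m : Fin (n+1), gc m x t * l ^ (n - (m : ℕ)))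
    -- normalization of the first two coefficients
    (hg0 : ∀ x t, t ∈ I → gc 0 x t = -3 * k0 * t)
    (hg1 : ∀ x t, t ∈ I → gc 1 x t = -(k0/4) * (6*t*u x t - x) - 3*k1*t)
    -- the integrated stationary equation (gxxx)
    (hgxxx : ∀ l x t, t ∈ I →
      pdx (pdx (pdx (g l))) x t + 4*(l - u x t) * pdx (g l) x t
        - 2 * pdx u x t * g l x t = kap l)
    -- the t-evolution (gt)
    (hgt : ∀ l x t, t ∈ I →
      pdt (g l) x t = pdx (pdx (pdx (g l))) x t - 6 * u x t * pdx (g l) x t - 3 * kap l)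
    -- yⱼ := −2 g(λⱼ)/(κ₀ ∏_{i≠j}(λⱼ−λᵢ))
    (y : Fin n → ℝ → ℝ → ℝ)
    (hy : ∀ j x t, y j x t
      = -2 * g (lam j) x t / (k0 * ∏ i ∈ Finset.univ.erase j, (lam j - lam i))) :
    -- (i) the constraint (uy)
    (∀ x t, t ∈ I → u x t = x/(6*t) + (∑ j, y j x t)/(3*t))
    -- (ii) the system (yt)
    ∧ (∀ j x t, t ∈ I →
        pdt (y j) x t = 2 * pdx u x t * y j x t - 2*(u x t + 2*lam j) * pdx (y j) x t)
    -- (iii) the first integrals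
    ∧ (∀ j, ∃ c : ℝ, ∀ x t, t ∈ I →
        2 * y j x t * pdx (pdx (y j)) x t - (pdx (y j) x t)^2
          + 4*(lam j - u x t) * (y j x t)^2 = -c) := by
  classical
  have hIo : IsOpen I := by rw [hI]; exact isOpen_Ioo
  have hIc : Convex ℝ I := by rw [hI]; exact convex_Ioo a b
  have htne : ∀ t ∈ I, (t:ℝ) ≠ 0 := fun t ht h0 => hI0 (h0 ▸ ht)
  have hPne : ∀ j : Fin n, (∏ i ∈ Finset.univ.erase j, (lam j - lam i)) ≠ 0 := by
    intro j
    refine Finset.prod_ne_zero_iff.mpr fun i hi => sub_ne_zero_of_ne fun h => ?_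
    exact (Finset.ne_of_mem_erase hi) (hlam h).symm
  set cc : Fin n → ℝ := fun j => -2 / (k0 * ∏ i ∈ Finset.univ.erase j, (lam j - lam i)) with hcc
  have hyc : ∀ j x t, y j x t = cc j * g (lam j) x t := by
    intro j x t
    simp only [hcc]
    rw [hy]; ring
  have hkap0 : ∀ j, kap (lam j) = 0 := fun j => by
    rw [hkap]
    exact mul_eq_zero_of_right _ (Finset.prod_eq_zero (Finset.mem_univ j) (sub_self _))
  -- derivative scaling from g to y
  have hyx : ∀ j x t, pdx (y j) x t = cc j * pdx (g (lam j)) x t := by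
    intro j x t
    show deriv (fun x' => y j x' t) x = _
    rw [show (fun x' => y j x' t) = fun x' => cc j * g (lam j) x' t from
      funext fun x' => hyc j x' t, deriv_const_mul_field]
    rfl
  have hyxx : ∀ j x t, pdx (pdx (y j)) x t = cc j * pdx (pdx (g (lam j))) x t := by
    intro j x t
    show deriv (fun x' => pdx (y j) x' t) x = _
    rw [show (fun x' => pdx (y j) x' t) = fun x' => cc j * pdx (g (lam j)) x' t from
      funext fun x' => hyx j x' t, deriv_const_mul_field]
    rfl
  have hyxxx : ∀ j x t, pdx (pdx (pdx (y j))) x t = cc j * pdx (pdx (pdx (g (lam j)))) x t := by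
    intro j x t
    show deriv (fun x' => pdx (pdx (y j)) x' t) x = _
    rw [show (fun x' => pdx (pdx (y j)) x' t) = fun x' => cc j * pdx (pdx (g (lam j))) x' t from
      funext fun x' => hyxx j x' t, deriv_const_mul_field]
    rfl
  have hyt : ∀ j x t, pdt (y j) x t = cc j * pdt (g (lam j)) x t := by
    intro j x t
    show deriv (fun t' => y j x t') t = _
    rw [show (fun t' => y j x t') = fun t' => cc j * g (lam j) x t' from
      funext fun t' => hyc j x t', deriv_const_mul_field]
    rfl
  -- equations for g at the roots
  have hGxxx : ∀ j x t, t ∈ I → pdx (pdx (pdx (g (lam j)))) x t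
      = 2 * pdx u x t * g (lam j) x t - 4*(lam j - u x t) * pdx (g (lam j)) x t := by
    intro j x t ht
    have h := hgxxx (lam j) x t ht
    rw [hkap0 j] at h
    linarith
  have hGt : ∀ j x t, t ∈ I → pdt (g (lam j)) x t
      = 2 * pdx u x t * g (lam j) x t - 2*(u x t + 2*lam j) * pdx (g (lam j)) x t := by
    intro j x t ht
    have h := hgt (lam j) x t ht
    rw [hkap0 j, hGxxx j x t ht] at h
    rw [h]; ring
  -- (ii)
  have part2 : ∀ j x t, t ∈ I →
      pdt (y j) x t = 2 * pdx u x t * y j x t - 2*(u x t + 2*lam j) * pdx (y j) x t := by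
    intro j x t ht
    rw [hyt, hGt j x t ht, hyc, hyx]; ring
  -- stationary equation for y
  have hyst : ∀ j x t, t ∈ I → pdx (pdx (pdx (y j))) x t
      = 2*pdx u x t * y j x t - 4*(lam j - u x t) * pdx (y j) x t := by
    intro j x t ht
    rw [hyxxx, hGxxx j x t ht, hyc, hyx]; ring
  -- the key sum identity
  have hv1 : ((1 : Fin (n+1)) : ℕ) = 1 := by
    rw [Fin.val_one']; exact Nat.mod_eq_of_lt (by omega)
  have hSum : ∀ x t, t ∈ I → (∑ j, y j x t) = 3*t*u x t - x/2 := by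
    intro x t ht
    have step1 : (∑ j, y j x t)
        = ∑ m : Fin (n+1), ∑ j, (-2/k0) * (gc m x t *
            (lam j ^ (n - (m:ℕ)) / (∏ i ∈ Finset.univ.erase j, (lam j - lam i)))) := by
      rw [Finset.sum_comm]
      refine Finset.sum_congr rfl fun j _ => ?_
      rw [hy, hg, Finset.mul_sum, Finset.sum_div]
      refine Finset.sum_congr rfl fun m _ => ?_
      have hp := hPne j
      field_simp
    have step2 : ∀ m : Fin (n+1), (∑ j, (-2/k0) * (gc m x t *
            (lam j ^ (n - (m:ℕ)) / (∏ i ∈ Finset.univ.erase j, (lam j - lam i)))))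
        = (-2/k0) * (gc m x t *
            (if (m:ℕ) = 0 then ∑ i, lam i else if (m:ℕ) = 1 then 1 else 0)) := by
      intro m
      rw [← Finset.mul_sum, ← Finset.mul_sum]
      congr 1
      congr 1
      rcases Nat.eq_zero_or_pos (m:ℕ) with h0 | hpos
      · rw [h0]
        simp only [Nat.sub_zero, if_pos rfl]
        exact aux_divdiff_top hn lam hlam
      · have hlt : n - (m:ℕ) < n := by omega
        rw [aux_divdiff_pow lam hlam _ hlt]
        have hmn : (m:ℕ) ≤ n := Nat.lt_succ_iff.mp m.isLt
        by_cases h1 : (m:ℕ) = 1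
        · rw [if_pos (by omega), if_neg (by omega), if_pos h1]
        · rw [if_neg (by omega), if_neg (by omega), if_neg h1]
    rw [step1, Finset.sum_congr rfl (fun m _ => step2 m)]
    rw [← Finset.sum_subset (Finset.subset_univ ({0,1} : Finset (Fin (n+1)))) ?_]
    · have h01 : (0 : Fin (n+1)) ≠ 1 := by
        intro h
        have h' := congrArg Fin.val h
        rw [Fin.val_zero, hv1] at h'
        exact one_ne_zero h'.symm
      rw [Finset.sum_pair h01]
      simp only [Fin.val_zero, hv1]
      norm_num
      rw [hg0 x t ht, hg1 x t ht, hk1]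
      field_simp
      ring
    · intro m _ hm
      have hm0 : (m:ℕ) ≠ 0 := by
        intro h
        have hme : m = 0 := Fin.ext (by rw [h, Fin.val_zero])
        exact hm (by simp [hme])
      have hm1 : (m:ℕ) ≠ 1 := by
        intro h
        have hme : m = 1 := Fin.ext (by rw [h, hv1])
        exact hm (by simp [hme])
      rw [if_neg hm0, if_neg hm1, mul_zero, mul_zero]
  -- (i)
  have part1 : ∀ x t, t ∈ I → u x t = x/(6*t) + (∑ j, y j x t)/(3*t) := by
    intro x t ht
    rw [hSum x t ht]
    have h0 := htne t ht
    field_simp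
    ring
  -- smoothness of g and y
  have hGsm : ∀ l : ℝ, ContDiffOn ℝ (⊤:ℕ∞) (uncurry (g l)) (univ ×ˢ I) := by
    intro l
    have he : (uncurry (g l)) = fun p : ℝ×ℝ => ∑ m : Fin (n+1), gc m p.1 p.2 * l ^ (n - (m:ℕ)) :=
      funext fun p => hg l p.1 p.2
    rw [he]
    exact ContDiffOn.sum fun m _ => (hgsmooth m).mul contDiffOn_const
  have hysm : ∀ j, ContDiffOn ℝ (⊤:ℕ∞) (uncurry (y j)) (univ ×ˢ I) := by
    intro j
    have he : uncurry (y j) = fun p : ℝ×ℝ => cc j * uncurry (g (lam j)) p :=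
      funext fun p => hyc j p.1 p.2
    rw [he]
    exact contDiffOn_const.mul (hGsm (lam j))
  -- KdV for u
  have hKdV : ∀ x t, t ∈ I → pdt u x t = pdx (pdx (pdx u)) x t - 6 * u x t * pdx u x t := by
    intro x t ht
    have hφu : ContDiff ℝ (⊤:ℕ∞) (fun z => u z t) := sliceX_contDiff husmooth ht
    have hud1 : ∀ z, HasDerivAt (fun w => u w t) (pdx u z t) z := fun z =>
      ((hφu.differentiable (by simp)) z).hasDerivAt
    have hud2 : ∀ z, HasDerivAt (fun w => pdx u w t) (pdx (pdx u) z t) z := fun z =>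
      (((contDiff_deriv'' hφu).differentiable (by simp)) z).hasDerivAt
    have hφy : ∀ j, ContDiff ℝ (⊤:ℕ∞) (fun z => y j z t) := fun j => sliceX_contDiff (hysm j) ht
    have hyd1 : ∀ j z, HasDerivAt (fun w => y j w t) (pdx (y j) z t) z := fun j z =>
      (((hφy j).differentiable (by simp)) z).hasDerivAt
    have hyd2 : ∀ j z, HasDerivAt (fun w => pdx (y j) w t) (pdx (pdx (y j)) z t) z := fun j z =>
      (((contDiff_deriv'' (hφy j)).differentiable (by simp)) z).hasDerivAt
    have hyd3 : ∀ j z, HasDerivAt (fun w => pdx (pdx (y j)) w t) (pdx (pdx (pdx (y j))) z t) z :=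
      fun j z =>
      (((contDiff_deriv'' (contDiff_deriv'' (hφy j))).differentiable (by simp)) z).hasDerivAt
    -- first x-derivative of the sum identity
    have hβ : ∀ z, (∑ j, pdx (y j) z t) = 3*t*pdx u z t - 1/2 := by
      intro z
      have hfe : (fun w => ∑ j, y j w t) = (fun w => 3*t*u w t - w/2) :=
        funext fun w => hSum w t ht
      have hL : HasDerivAt (fun w => ∑ j, y j w t) (∑ j, pdx (y j) z t) z :=
        HasDerivAt.fun_sum fun j _ => hyd1 j z
      have hR : HasDerivAt (fun w => 3*t*u w t - w/2) (3*t*pdx u z t - 1/2) z := by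
        simpa using ((hud1 z).const_mul (3*t)).fun_sub ((hasDerivAt_id z).div_const 2)
      rw [hfe] at hL
      exact hL.unique hR
    -- second
    have hγ : ∀ z, (∑ j, pdx (pdx (y j)) z t) = 3*t*pdx (pdx u) z t := by
      intro z
      have hfe : (fun w => ∑ j, pdx (y j) w t) = (fun w => 3*t*pdx u w t - 1/2) :=
        funext fun w => hβ w
      have hL : HasDerivAt (fun w => ∑ j, pdx (y j) w t) (∑ j, pdx (pdx (y j)) z t) z :=
        HasDerivAt.fun_sum fun j _ => hyd2 j z
      have hR : HasDerivAt (fun w => 3*t*pdx u w t - 1/2) (3*t*pdx (pdx u) z t) z := by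
        simpa using ((hud2 z).const_mul (3*t)).sub_const (1/2)
      rw [hfe] at hL
      exact hL.unique hR
    -- third
    have hδ : (∑ j, pdx (pdx (pdx (y j))) x t) = 3*t*pdx (pdx (pdx u)) x t := by
      have hud3 : HasDerivAt (fun w => pdx (pdx u) w t) (pdx (pdx (pdx u)) x t) x :=
        (((contDiff_deriv'' (contDiff_deriv'' hφu)).differentiable (by simp)) x).hasDerivAt
      have hfe : (fun w => ∑ j, pdx (pdx (y j)) w t) = (fun w => 3*t*pdx (pdx u) w t) :=
        funext fun w => hγ w
      have hL : HasDerivAt (fun w => ∑ j, pdx (pdx (y j)) w t)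
          (∑ j, pdx (pdx (pdx (y j))) x t) x :=
        HasDerivAt.fun_sum fun j _ => hyd3 j x
      have hR : HasDerivAt (fun w => 3*t*pdx (pdx u) w t) (3*t*pdx (pdx (pdx u)) x t) x := by
        simpa using hud3.const_mul (3*t)
      rw [hfe] at hL
      exact hL.unique hR
    -- t-derivative of the sum identity
    have hε : (∑ j, pdt (y j) x t) = 3*u x t + 3*t*pdt u x t := by
      have hev : (fun s => ∑ j, y j x s) =ᶠ[nhds t] (fun s => 3*s*u x s - x/2) := by
        filter_upwards [hIo.mem_nhds ht] with s hs using hSum x s hs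
      have hL : HasDerivAt (fun s => ∑ j, y j x s) (∑ j, pdt (y j) x t) t :=
        HasDerivAt.fun_sum fun j _ => hasDerivAt_pdt (hysm j) hIo ht
      have h1 : HasDerivAt (fun s : ℝ => 3*s) 3 t := by
        simpa using (hasDerivAt_id t).const_mul 3
      have hu' : HasDerivAt (fun s => u x s) (pdt u x t) t := hasDerivAt_pdt husmooth hIo ht
      have hR : HasDerivAt (fun s => 3*s*u x s - x/2) (3*u x t + 3*t*pdt u x t) t := by
        have h2 := (h1.fun_mul hu').sub_const (x/2)
        convert h2 using 1
      exact hL.unique (hR.congr_of_eventuallyEq hev)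
    -- combine
    have hcomb : (∑ j, pdt (y j) x t) - (∑ j, pdx (pdx (pdx (y j))) x t)
        = -6 * u x t * (∑ j, pdx (y j) x t) := by
      rw [← Finset.sum_sub_distrib, Finset.mul_sum]
      refine Finset.sum_congr rfl fun j _ => ?_
      rw [part2 j x t ht, hyst j x t ht]; ring
    rw [hε, hδ, hβ x] at hcomb
    have ht0 := htne t ht
    have hz : 3*t*(pdt u x t - (pdx (pdx (pdx u)) x t - 6*u x t*pdx u x t)) = 0 := by
      ring_nf
      ring_nf at hcomb
      linarith
    have h3t : (3:ℝ)*t ≠ 0 := by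
      intro h
      exact ht0 (by linarith [mul_eq_zero.mp h])
    have := (mul_eq_zero.mp hz).resolve_left h3t
    linarith
  refine ⟨part1, part2, ?_⟩
  -- (iii)
  intro j
  by_cases hne : I.Nonempty
  · obtain ⟨t0, ht0I⟩ := hne
    set Q : ℝ → ℝ → ℝ := fun x t => 2 * y j x t * pdx (pdx (y j)) x t - (pdx (y j) x t)^2
        + 4*(lam j - u x t) * (y j x t)^2 with hQdef
    have stepA : ∀ x t, t ∈ I → Q x t = Q 0 t := by
      intro x t ht
      exact constant_x (sliceX_contDiff (hysm j) ht) (sliceX_contDiff husmooth ht)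
        (fun z => hyst j z t ht) x 0
    have stepB : ∀ x t, t ∈ I → HasDerivAt (fun t' => Q x t') 0 t := by
      intro x t ht
      have hφu : ContDiff ℝ (⊤:ℕ∞) (fun z => u z t) := sliceX_contDiff husmooth ht
      have hφy : ContDiff ℝ (⊤:ℕ∞) (fun z => y j z t) := sliceX_contDiff (hysm j) ht
      have hud1 : ∀ z, HasDerivAt (fun w => u w t) (pdx u z t) z := fun z =>
        ((hφu.differentiable (by simp)) z).hasDerivAt
      have hud2 : ∀ z, HasDerivAt (fun w => pdx u w t) (pdx (pdx u) z t) z := fun z =>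
        (((contDiff_deriv'' hφu).differentiable (by simp)) z).hasDerivAt
      have hud3 : ∀ z, HasDerivAt (fun w => pdx (pdx u) w t) (pdx (pdx (pdx u)) z t) z := fun z =>
        (((contDiff_deriv'' (contDiff_deriv'' hφu)).differentiable (by simp)) z).hasDerivAt
      have hyd1 : ∀ z, HasDerivAt (fun w => y j w t) (pdx (y j) z t) z := fun z =>
        ((hφy.differentiable (by simp)) z).hasDerivAt
      have hyd2 : ∀ z, HasDerivAt (fun w => pdx (y j) w t) (pdx (pdx (y j)) z t) z := fun z =>
        (((contDiff_deriv'' hφy).differentiable (by simp)) z).hasDerivAt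
      have hyd3 : ∀ z, HasDerivAt (fun w => pdx (pdx (y j)) w t)
          (pdx (pdx (pdx (y j))) z t) z := fun z =>
        (((contDiff_deriv'' (contDiff_deriv'' hφy)).differentiable (by simp)) z).hasDerivAt
      have hA : ∀ z, pdx (pdt (y j)) z t
          = 2*pdx (pdx u) z t * y j z t + 2*pdx u z t * pdx (y j) z t
            - 2*pdx u z t * pdx (y j) z t - 2*(u z t + 2*lam j)*pdx (pdx (y j)) z t := by
        intro z
        have hfe : (fun w => pdt (y j) w t)
            = fun w => 2*pdx u w t * y j w t - 2*(u w t + 2*lam j)*pdx (y j) w t :=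
          funext fun w => part2 j w t ht
        show deriv (fun w => pdt (y j) w t) z = _
        rw [hfe]
        have hc := (((hud2 z).const_mul 2).mul (hyd1 z)).sub
          ((((hud1 z).add_const (2*lam j)).const_mul 2).mul (hyd2 z))
        refine hc.deriv.trans ?_
        ring
      have hB : ∀ z, pdx (pdx (pdt (y j))) z t
          = 2*pdx (pdx (pdx u)) z t * y j z t + 2*pdx (pdx u) z t * pdx (y j) z t
            - 2*pdx u z t * pdx (pdx (y j)) z t
            - 2*(u z t + 2*lam j)*pdx (pdx (pdx (y j))) z t := by
        intro z
        have hfe : (fun w => pdx (pdt (y j)) w t)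
            = fun w => 2*pdx (pdx u) w t * y j w t + 2*pdx u w t * pdx (y j) w t
              - 2*pdx u w t * pdx (y j) w t - 2*(u w t + 2*lam j)*pdx (pdx (y j)) w t :=
          funext fun w => hA w
        show deriv (fun w => pdx (pdt (y j)) w t) z = _
        rw [hfe]
        have hc := (((((hud3 z).const_mul 2).mul (hyd1 z)).add
            (((hud2 z).const_mul 2).mul (hyd2 z))).sub
            (((hud2 z).const_mul 2).mul (hyd2 z))).sub
          ((((hud1 z).add_const (2*lam j)).const_mul 2).mul (hyd3 z))
        refine hc.deriv.trans ?_
        ring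
      have hyt' : HasDerivAt (fun t' => y j x t') (pdt (y j) x t) t :=
        hasDerivAt_pdt (hysm j) hIo ht
      have hyxt : HasDerivAt (fun t' => pdx (y j) x t') (pdx (pdt (y j)) x t) t :=
        pdt_pdx_hasDerivAt (hysm j) hIo ht
      have hyxxt : HasDerivAt (fun t' => pdx (pdx (y j)) x t') (pdx (pdx (pdt (y j))) x t) t := by
        have h : HasDerivAt (fun t' => pdx (pdx (y j)) x t') (pdx (pdt (pdx (y j))) x t) t :=
          pdt_pdx_hasDerivAt (pdx_contDiffOn (hysm j) hIo) hIo ht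
        have he : pdx (pdt (pdx (y j))) x t = pdx (pdx (pdt (y j))) x t := by
          show deriv (fun x' => pdt (pdx (y j)) x' t) x = deriv (fun x' => pdx (pdt (y j)) x' t) x
          congr 1
          exact funext fun x' => pdt_pdx_eq (hysm j) hIo ht
        rwa [he] at h
      have hut' : HasDerivAt (fun t' => u x t') (pdt u x t) t :=
        hasDerivAt_pdt husmooth hIo ht
      have hc := (((hyt'.const_mul 2).fun_mul hyxxt).fun_sub (hyxt.fun_pow 2)).fun_add
        (((hut'.const_sub (lam j)).const_mul 4).fun_mul (hyt'.fun_pow 2))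
      have hzero : (2 * pdt (y j) x t * pdx (pdx (y j)) x t
            + 2 * y j x t * pdx (pdx (pdt (y j))) x t)
          - (2 * pdx (y j) x t ^ 1 * pdx (pdt (y j)) x t)
          + ((4 * -pdt u x t) * (y j x t)^2
            + (4*(lam j - u x t)) * (2 * y j x t ^ 1 * pdt (y j) x t)) = 0 := by
        rw [part2 j x t ht, hA x, hB x, hKdV x t ht, hyst j x t ht]
        ring
      have : HasDerivAt (fun t' => Q x t') 0 t := by
        refine hc.congr_deriv ?_
        rw [← hzero]
        ring
      exact this
    have stepC : ∀ t, t ∈ I → Q 0 t = Q 0 t0 :=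
      fun t ht => const_of_hasDerivAt_zero hIo hIc (fun s hs => stepB 0 s hs) ht ht0I
    refine ⟨-(Q 0 t0), fun x t ht => ?_⟩
    show Q x t = -(-(Q 0 t0))
    rw [neg_neg]
    exact (stepA x t ht).trans (stepC t ht)
  · exact ⟨0, fun x t ht => absurd ⟨t, ht⟩ hne⟩
end
end

section
/- Let u, Y : ℝ × I → ℝ be smooth (I an open interval), λ ∈ ℝ, and suppose u satisfies the KdV equation ∂_t u = ∂_x³ u − 6 u ∂_x u, Y satisfies ∂_x³ Y = 4(u − λ) ∂_x Y + 2(∂_x u) Y, and ∂_t Y = 2(∂_x u) Y − 2(u + 2λ) ∂_x Y. Then the quantity Φ = 2 Y ∂_x² Y − (∂_x Y)² + 4(λ − u) Y² satisfies ∂_x Φ = 0 and ∂_t Φ = 0, i.e. Φ is an absolute constant on ℝ × I. -/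
open Set Function

noncomputable section

namespace S4

variable {I : Set ℝ} {f : ℝ → ℝ → ℝ}

theorem memS {x t : ℝ} (ht : t ∈ I) : (x, t) ∈ (univ : Set ℝ) ×ˢ I := ⟨trivial, ht⟩

theorem sliceX (hf : ContDiffOn ℝ (⊤ : ℕ∞) (uncurry f) (univ ×ˢ I)) {t : ℝ} (ht : t ∈ I) :
    ContDiff ℝ (⊤ : ℕ∞) (fun x => f x t) :=
  hf.comp_contDiff (contDiff_id.prodMk contDiff_const) (fun _ => memS ht)

theorem hasDerivAt_sliceX (hf : ContDiffOn ℝ (⊤ : ℕ∞) (uncurry f) (univ ×ˢ I))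
    {t : ℝ} (ht : t ∈ I) (x : ℝ) :
    HasDerivAt (fun x' => f x' t) (pdx f x t) x :=
  (((sliceX hf ht).differentiable (by simp)) x).hasDerivAt

theorem sliceT (hf : ContDiffOn ℝ (⊤ : ℕ∞) (uncurry f) (univ ×ˢ I)) (x : ℝ) :
    ContDiffOn ℝ (⊤ : ℕ∞) (fun t' => f x t') I :=
  hf.comp (contDiffOn_const.prodMk contDiffOn_id) (fun _ ht => memS ht)

theorem hasDerivAt_sliceT (hIo : IsOpen I) (hf : ContDiffOn ℝ (⊤ : ℕ∞) (uncurry f) (univ ×ˢ I))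
    (x : ℝ) {t : ℝ} (ht : t ∈ I) :
    HasDerivAt (fun t' => f x t') (pdt f x t) t := by
  have := ((sliceT hf x).differentiableOn (by simp)).differentiableAt
    (hIo.mem_nhds ht)
  exact this.hasDerivAt

theorem pdx_eq_fderiv (hIo : IsOpen I) (hf : ContDiffOn ℝ (⊤ : ℕ∞) (uncurry f) (univ ×ˢ I))
    {x t : ℝ} (ht : t ∈ I) :
    pdx f x t = fderiv ℝ (uncurry f) (x, t) ((1 : ℝ), (0 : ℝ)) := by
  have hd : DifferentiableAt ℝ (uncurry f) (x, t) :=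
    (hf.differentiableOn (by simp)).differentiableAt
      ((isOpen_univ.prod hIo).mem_nhds (memS ht))
  have h1 : HasDerivAt (fun x' : ℝ => (x', t)) ((1 : ℝ), (0 : ℝ)) x :=
    (hasDerivAt_id x).prodMk (hasDerivAt_const x t)
  have h2 : HasDerivAt (fun x' => f x' t) (fderiv ℝ (uncurry f) (x, t) ((1:ℝ),(0:ℝ))) x :=
    by have := hd.hasFDerivAt.comp_hasDerivAt x h1; exact this
  exact h2.deriv

theorem pdt_eq_fderiv (hIo : IsOpen I) (hf : ContDiffOn ℝ (⊤ : ℕ∞) (uncurry f) (univ ×ˢ I))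
    {x t : ℝ} (ht : t ∈ I) :
    pdt f x t = fderiv ℝ (uncurry f) (x, t) ((0 : ℝ), (1 : ℝ)) := by
  have hd : DifferentiableAt ℝ (uncurry f) (x, t) :=
    (hf.differentiableOn (by simp)).differentiableAt
      ((isOpen_univ.prod hIo).mem_nhds (memS ht))
  have h1 : HasDerivAt (fun t' : ℝ => (x, t')) ((0 : ℝ), (1 : ℝ)) t :=
    (hasDerivAt_const t x).prodMk (hasDerivAt_id t)
  have h2 : HasDerivAt (fun t' => f x t') (fderiv ℝ (uncurry f) (x, t) ((0:ℝ),(1:ℝ))) t :=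
    by have := hd.hasFDerivAt.comp_hasDerivAt t h1; exact this
  exact h2.deriv

theorem contDiffOn_fderiv (hIo : IsOpen I)
    (hf : ContDiffOn ℝ (⊤ : ℕ∞) (uncurry f) (univ ×ˢ I)) :
    ContDiffOn ℝ (⊤ : ℕ∞) (fderiv ℝ (uncurry f)) (univ ×ˢ I) :=
  hf.fderiv_of_isOpen (isOpen_univ.prod hIo) (by exact_mod_cast le_top)

theorem contDiffOn_pdx (hIo : IsOpen I)
    (hf : ContDiffOn ℝ (⊤ : ℕ∞) (uncurry f) (univ ×ˢ I)) :
    ContDiffOn ℝ (⊤ : ℕ∞) (uncurry (pdx f)) (univ ×ˢ I) := by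
  have h : ContDiffOn ℝ (⊤ : ℕ∞)
      (fun p : ℝ × ℝ => fderiv ℝ (uncurry f) p ((1 : ℝ), (0 : ℝ))) (univ ×ˢ I) :=
    (contDiffOn_fderiv hIo hf).clm_apply contDiffOn_const
  refine h.congr (fun p hp => ?_)
  have := pdx_eq_fderiv hIo hf (x := p.1) hp.2
  simpa [uncurry] using this

theorem clairaut (hIo : IsOpen I) (hf : ContDiffOn ℝ (⊤ : ℕ∞) (uncurry f) (univ ×ˢ I))
    {x t : ℝ} (ht : t ∈ I) :
    pdt (pdx f) x t = pdx (pdt f) x t := by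
  have hS : IsOpen ((univ : Set ℝ) ×ˢ I) := isOpen_univ.prod hIo
  have hp : (x, t) ∈ (univ : Set ℝ) ×ˢ I := memS ht
  have hsymm : IsSymmSndFDerivAt ℝ (uncurry f) (x, t) :=
    (hf.contDiffAt (hS.mem_nhds hp)).isSymmSndFDerivAt (by simp only [minSmoothness_of_isRCLikeNormedField]; exact WithTop.coe_le_coe.2 le_top)
  have hGd : HasFDerivAt (fderiv ℝ (uncurry f))
      (fderiv ℝ (fderiv ℝ (uncurry f)) (x, t)) (x, t) :=
    (((contDiffOn_fderiv hIo hf).differentiableOn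
      (by simp)).differentiableAt (hS.mem_nhds hp)).hasFDerivAt
  have e1 : pdt (pdx f) x t
      = fderiv ℝ (fderiv ℝ (uncurry f)) (x, t) ((0 : ℝ), (1 : ℝ)) ((1 : ℝ), (0 : ℝ)) := by
    have hcong : (fun t' => pdx f x t')
        =ᶠ[nhds t] (fun t' => fderiv ℝ (uncurry f) (x, t') ((1 : ℝ), (0 : ℝ))) := by
      filter_upwards [hIo.mem_nhds ht] with t' ht' using pdx_eq_fderiv hIo hf ht'
    have h1 : HasDerivAt (fun t' : ℝ => (x, t')) ((0 : ℝ), (1 : ℝ)) t :=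
      (hasDerivAt_const t x).prodMk (hasDerivAt_id t)
    have h2 : HasDerivAt (fun t' => fderiv ℝ (uncurry f) (x, t'))
        (fderiv ℝ (fderiv ℝ (uncurry f)) (x, t) ((0 : ℝ), (1 : ℝ))) t :=
      hGd.comp_hasDerivAt t h1
    have h3 := h2.clm_apply (hasDerivAt_const t ((1 : ℝ), (0 : ℝ)))
    have : pdt (pdx f) x t
        = deriv (fun t' => fderiv ℝ (uncurry f) (x, t') ((1 : ℝ), (0 : ℝ))) t :=
      hcong.deriv_eq
    rw [this]
    simpa using h3.deriv
  have e2 : pdx (pdt f) x t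
      = fderiv ℝ (fderiv ℝ (uncurry f)) (x, t) ((1 : ℝ), (0 : ℝ)) ((0 : ℝ), (1 : ℝ)) := by
    have hcong : (fun x' => pdt f x' t)
        = (fun x' => fderiv ℝ (uncurry f) (x', t) ((0 : ℝ), (1 : ℝ))) :=
      funext fun x' => pdt_eq_fderiv hIo hf ht
    have h1 : HasDerivAt (fun x' : ℝ => (x', t)) ((1 : ℝ), (0 : ℝ)) x :=
      (hasDerivAt_id x).prodMk (hasDerivAt_const x t)
    have h2 : HasDerivAt (fun x' => fderiv ℝ (uncurry f) (x', t))
        (fderiv ℝ (fderiv ℝ (uncurry f)) (x, t) ((1 : ℝ), (0 : ℝ))) x :=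
      hGd.comp_hasDerivAt x h1
    have h3 := h2.clm_apply (hasDerivAt_const x ((0 : ℝ), (1 : ℝ)))
    have : pdx (pdt f) x t
        = deriv (fun x' => fderiv ℝ (uncurry f) (x', t) ((0 : ℝ), (1 : ℝ))) x := by
      show deriv (fun x' => pdt f x' t) x = _
      rw [hcong]
    rw [this]
    simpa using h3.deriv
  rw [e1, e2]
  exact hsymm _ _

end S4

open S4

/-- if `u` solves KdV, `Y` solves the stationary equation
`∂ₓ³Y = 4(u−λ)∂ₓY + 2(∂ₓu)Y` and the evolution `∂ₜY = 2(∂ₓu)Y − 2(u+2λ)∂ₓY`, then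
`Φ = 2Y∂ₓ²Y − (∂ₓY)² + 4(λ−u)Y²` satisfies `∂ₓΦ = ∂ₜΦ = 0`, i.e. `Φ` is an absolute
constant on `ℝ × I`. -/
theorem statement4
    (a b : ℝ) (I : Set ℝ) (hI : I = Set.Ioo a b)
    (u Y : ℝ → ℝ → ℝ) (l : ℝ)
    (hu : ContDiffOn ℝ (⊤ : ℕ∞) (uncurry u) (univ ×ˢ I))
    (hY : ContDiffOn ℝ (⊤ : ℕ∞) (uncurry Y) (univ ×ˢ I))
    (hkdv : ∀ x t, t ∈ I →
      pdt u x t = pdx (pdx (pdx u)) x t - 6 * u x t * pdx u x t)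
    (hYxxx : ∀ x t, t ∈ I →
      pdx (pdx (pdx Y)) x t = 4*(u x t - l)*pdx Y x t + 2*pdx u x t * Y x t)
    (hYt : ∀ x t, t ∈ I →
      pdt Y x t = 2*pdx u x t * Y x t - 2*(u x t + 2*l)*pdx Y x t)
    (Phi : ℝ → ℝ → ℝ)
    (hPhi : ∀ x t, Phi x t
      = 2 * Y x t * pdx (pdx Y) x t - (pdx Y x t)^2 + 4*(l - u x t)*(Y x t)^2) :
    (∀ x t, t ∈ I → pdx Phi x t = 0 ∧ pdt Phi x t = 0)
    ∧ ∃ c : ℝ, ∀ x t, t ∈ I → Phi x t = c := by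
  have hIo : IsOpen I := hI ▸ isOpen_Ioo
  have hux := contDiffOn_pdx hIo hu
  have huxx := contDiffOn_pdx hIo hux
  have hYx := contDiffOn_pdx hIo hY
  have hYxx := contDiffOn_pdx hIo hYx
  -- space derivative of Phi vanishes
  have keyX : ∀ x t, t ∈ I → HasDerivAt (fun x' => Phi x' t) 0 x := by
    intro x t ht
    have e : (fun x' => Phi x' t)
        = fun x' => 2 * Y x' t * pdx (pdx Y) x' t - (pdx Y x' t)^2
            + 4*(l - u x' t)*(Y x' t)^2 := funext fun x' => hPhi x' t
    rw [e]
    have h1 := hasDerivAt_sliceX hY ht x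
    have h2 := hasDerivAt_sliceX hYx ht x
    have h3 := hasDerivAt_sliceX hYxx ht x
    have g1 := hasDerivAt_sliceX hu ht x
    have H := (((h1.const_mul (2:ℝ)).mul h3).sub (h2.pow 2)).add
      (((g1.const_sub l).const_mul (4:ℝ)).mul (h1.pow 2))
    refine H.congr_deriv ?_
    simp only [Pi.pow_apply]; rw [hYxxx x t ht]; ring
  -- mixed partials
  have P1 : ∀ x t, t ∈ I → pdt (pdx Y) x t
      = 2*pdx (pdx u) x t * Y x t - 2*(u x t + 2*l)*pdx (pdx Y) x t := by
    intro x t ht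
    rw [clairaut hIo hY ht]
    have e : (fun x' => pdt Y x' t)
        = fun x' => 2*pdx u x' t * Y x' t - 2*(u x' t + 2*l)*pdx Y x' t :=
      funext fun x' => hYt x' t ht
    show deriv (fun x' => pdt Y x' t) x = _
    rw [e]
    have h1 := hasDerivAt_sliceX hY ht x
    have h2 := hasDerivAt_sliceX hYx ht x
    have g1 := hasDerivAt_sliceX hu ht x
    have g2 := hasDerivAt_sliceX hux ht x
    have H := ((g2.const_mul (2:ℝ)).mul h1).sub
      (((g1.add_const (2*l)).const_mul (2:ℝ)).mul h2)
    exact H.deriv.trans (by ring)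
  have P2 : ∀ x t, t ∈ I → pdt (pdx (pdx Y)) x t
      = 2*pdx (pdx (pdx u)) x t * Y x t + 2*pdx (pdx u) x t * pdx Y x t
        - 2*pdx u x t * pdx (pdx Y) x t - 2*(u x t + 2*l)*pdx (pdx (pdx Y)) x t := by
    intro x t ht
    rw [clairaut hIo hYx ht]
    have e : (fun x' => pdt (pdx Y) x' t)
        = fun x' => 2*pdx (pdx u) x' t * Y x' t - 2*(u x' t + 2*l)*pdx (pdx Y) x' t :=
      funext fun x' => P1 x' t ht
    show deriv (fun x' => pdt (pdx Y) x' t) x = _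
    rw [e]
    have h1 := hasDerivAt_sliceX hY ht x
    have h3 := hasDerivAt_sliceX hYxx ht x
    have g1 := hasDerivAt_sliceX hu ht x
    have g3 := hasDerivAt_sliceX huxx ht x
    have H := ((g3.const_mul (2:ℝ)).mul h1).sub
      (((g1.add_const (2*l)).const_mul (2:ℝ)).mul h3)
    exact H.deriv.trans (by ring)
  -- time derivative of Phi vanishes
  have keyT : ∀ x t, t ∈ I → HasDerivAt (fun t' => Phi x t') 0 t := by
    intro x t ht
    have e : (fun t' => Phi x t')
        = fun t' => 2 * Y x t' * pdx (pdx Y) x t' - (pdx Y x t')^2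
            + 4*(l - u x t')*(Y x t')^2 := funext fun t' => hPhi x t'
    rw [e]
    have k1 := hasDerivAt_sliceT hIo hY x ht
    have k2 := hasDerivAt_sliceT hIo hYx x ht
    have k3 := hasDerivAt_sliceT hIo hYxx x ht
    have ku := hasDerivAt_sliceT hIo hu x ht
    have H := (((k1.const_mul (2:ℝ)).mul k3).sub (k2.pow 2)).add
      (((ku.const_sub l).const_mul (4:ℝ)).mul (k1.pow 2))
    refine H.congr_deriv ?_
    simp only [Pi.pow_apply]; rw [P2 x t ht, P1 x t ht, hkdv x t ht, hYt x t ht, hYxxx x t ht]; ring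
  refine ⟨fun x t ht => ⟨(keyX x t ht).deriv, (keyT x t ht).deriv⟩, ?_⟩
  by_cases hne : I.Nonempty
  · obtain ⟨t0, ht0⟩ := hne
    refine ⟨Phi 0 t0, fun x t ht => ?_⟩
    have hx : Phi x t = Phi 0 t :=
      is_const_of_deriv_eq_zero (fun x' => (keyX x' t ht).differentiableAt)
        (fun x' => (keyX x' t ht).deriv) x 0
    have hconv : Convex ℝ I := hI ▸ convex_Ioo a b
    have hdiff : DifferentiableOn ℝ (fun t' => Phi 0 t') I :=
      fun t' ht' => ((keyT 0 t' ht').differentiableAt).differentiableWithinAt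
    have hz : ∀ t' ∈ I, fderivWithin ℝ (fun t'' => Phi 0 t'') I t' = 0 := by
      intro t' ht'
      rw [fderivWithin_of_isOpen hIo ht', ((keyT 0 t' ht').hasFDerivAt).fderiv]
      ext; simp
    have ht' : Phi 0 t = Phi 0 t0 :=
      hconv.is_const_of_fderivWithin_eq_zero hdiff hz ht ht0
    rw [hx, ht']
  · exact ⟨0, fun x t ht => absurd ⟨t, ht⟩ hne⟩
end
end

section
/- Let u : ℝ × I → ℝ be smooth (I an open interval). For λ ∈ ℝ set U = [[0,1],[u−λ,0]] and V = M(−u−2λ) = [[∂_x u, −2u−4λ],[2(u−λ)(−u−2λ) − ∂_x² u, −∂_x u]] (note ∂_x²(−u−2λ) = −∂_x² u). Then the zero curvature equation ∂_t U = ∂_x V + [V,U] holds at every point of ℝ × I for every λ ∈ ℝ if and only if u satisfies the KdV equation ∂_t u = ∂_x³ u − 6 u ∂_x u on ℝ × I. -/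
open Set Function

noncomputable section

/-- with `U = [[0,1],[u−λ,0]]` and `V = M(−u−2λ)`, the zero curvature equation
`∂ₜU = ∂ₓV + [V,U]` holds on `ℝ × I` for every `λ` iff `u` satisfies KdV on `ℝ × I`. -/
theorem statement5
    (a b : ℝ) (I : Set ℝ) (hI : I = Set.Ioo a b)
    (u : ℝ → ℝ → ℝ)
    (hu : ContDiffOn ℝ (⊤ : ℕ∞) (uncurry u) (univ ×ˢ I))
    (U V : ℝ → ℝ → ℝ → Matrix (Fin 2) (Fin 2) ℝ)
    (hU : ∀ l x t, U l x t = !![0, 1; u x t - l, 0])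
    (hV : ∀ l x t, V l x t = Mmat u (fun x' t' => -(u x' t') - 2*l) l x t) :
    (∀ l x t, t ∈ I →
        pdtM (U l) x t = pdxM (V l) x t + (V l x t * U l x t - U l x t * V l x t))
    ↔ (∀ x t, t ∈ I →
        pdt u x t = pdx (pdx (pdx u)) x t - 6 * u x t * pdx u x t) := by
  -- time derivative of U
  have hUt : ∀ l x t, pdtM (U l) x t = !![0, 0; pdt u x t, 0] := by
    intro l x t
    ext i j
    fin_cases i <;> fin_cases j <;>
      simp [pdtM, hU, pdt, deriv_sub_const]
  -- the key computation
  have key : ∀ l x t, t ∈ I →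
      pdxM (V l) x t + (V l x t * U l x t - U l x t * V l x t) =
        !![0, 0; pdx (pdx (pdx u)) x t - 6 * u x t * pdx u x t, 0] := by
    intro l x t ht
    -- smoothness of the slice
    have hcd : ContDiff ℝ (⊤:ℕ∞) (fun z => u z t) := by
      have h1 : ContDiffOn ℝ (⊤:ℕ∞) (fun z : ℝ => uncurry u (z, t)) univ :=
        hu.comp ((contDiff_id.prodMk contDiff_const).contDiffOn)
          (fun z _ => ⟨mem_univ _, ht⟩)
      rw [contDiffOn_univ] at h1
      exact h1
    have hd0 : Differentiable ℝ (fun z => u z t) :=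
      hcd.differentiable (by simp)
    have hcd1 : ContDiff ℝ (⊤:ℕ∞) (deriv (fun z => u z t)) :=
      (contDiff_infty_iff_deriv.mp hcd).2
    have hd1 : Differentiable ℝ (deriv (fun z => u z t)) :=
      hcd1.differentiable (by simp)
    have hd2 : Differentiable ℝ (deriv (deriv (fun z => u z t))) :=
      ((contDiff_infty_iff_deriv.mp hcd1).2).differentiable (by simp)
    -- derivative rewrites for g = -u - 2l
    have d1 : ∀ y, deriv (fun z => -(u z t) - 2*l) y = -(deriv (fun z => u z t) y) := by
      intro y; rw [deriv_sub_const]; exact deriv.fun_neg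
    have d2 : ∀ y, deriv (fun z => deriv (fun w => -(u w t) - 2*l) z) y
        = -(deriv (deriv (fun z => u z t)) y) := by
      intro y; simp only [d1]; exact deriv.fun_neg
    -- explicit form of V
    have hVe : ∀ x', V l x' t =
        !![deriv (fun z => u z t) x', -2 * u x' t - 4*l;
           2*(u x' t - l)*(-(u x' t) - 2*l) + deriv (deriv (fun z => u z t)) x',
           -(deriv (fun z => u z t) x')] := by
      intro x'
      rw [hV]
      unfold Mmat pdx
      ext i j
      fin_cases i <;> fin_cases j <;> simp [d1, d2] <;> ring
    -- HasDerivAt facts at x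
    have h0 : HasDerivAt (fun z => u z t) (deriv (fun z => u z t) x) x :=
      (hd0 x).hasDerivAt
    have h1 : HasDerivAt (deriv (fun z => u z t)) (deriv (deriv (fun z => u z t)) x) x :=
      (hd1 x).hasDerivAt
    have h2 : HasDerivAt (deriv (deriv (fun z => u z t)))
        (deriv (deriv (deriv (fun z => u z t))) x) x :=
      (hd2 x).hasDerivAt
    have D00 : deriv (fun x' => deriv (fun z => u z t) x') x
        = deriv (deriv (fun z => u z t)) x := rfl
    have D01 : deriv (fun x' => -2 * u x' t - 4*l) x = -2 * deriv (fun z => u z t) x :=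
      ((h0.const_mul (-2)).sub_const (4*l)).deriv
    have D11 : deriv (fun x' => -(deriv (fun z => u z t) x')) x
        = -(deriv (deriv (fun z => u z t)) x) := deriv.fun_neg
    have D10 : deriv (fun x' =>
          2*(u x' t - l)*(-(u x' t) - 2*l) + deriv (deriv (fun z => u z t)) x') x
        = 2*(deriv (fun z => u z t) x)*(-(u x t) - 2*l)
          + 2*(u x t - l)*(-(deriv (fun z => u z t) x))
          + deriv (deriv (deriv (fun z => u z t))) x := by
      have hm : HasDerivAt (fun x' => 2*(u x' t - l)*(-(u x' t) - 2*l))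
          (2*(deriv (fun z => u z t) x)*(-(u x t) - 2*l)
            + 2*(u x t - l)*(-(deriv (fun z => u z t) x))) x :=
        ((h0.sub_const l).const_mul 2).mul ((h0.neg).sub_const (2*l))
      exact (hm.add h2).deriv
    have e3 : pdx (pdx (pdx u)) x t = deriv (deriv (deriv (fun z => u z t))) x := rfl
    have e1 : pdx u x t = deriv (fun z => u z t) x := rfl
    ext i j
    fin_cases i <;> fin_cases j <;>
      simp only [pdxM, hVe, hU, Matrix.of_apply, Matrix.cons_val', Matrix.cons_val_zero,
        Matrix.cons_val_one, Matrix.head_cons, Matrix.head_fin_const, Matrix.empty_val',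
        Matrix.cons_val_fin_one, Matrix.add_apply, Matrix.sub_apply, Matrix.mul_apply,
        Fin.sum_univ_two, Fin.mk_zero, Fin.mk_one, Fin.isValue, D00, D01, D10, D11, e1, e3] <;> ring
  constructor
  · intro h x t ht
    have h10 := h 0 x t ht
    rw [hUt, key 0 x t ht] at h10
    have := congr_fun (congr_fun h10 1) 0
    simpa using this
  · intro h l x t ht
    rw [hUt, key l x t ht, h x t ht]
end
end

section
/- Let u, y : ℝ × J → ℝ be smooth (J an open interval, with second variable denoted τ) and μ ∈ ℝ. For λ ∈ ℝ, λ ≠ μ, set U = [[0,1],[u−λ,0]] and V = (1/(4(μ−λ))) M(y), where M(y) = [[−∂_x y, 2y],[2(u−λ)y − ∂_x² y, ∂_x y]]. Then the zero curvature equation ∂_τ U = ∂_x V + [V,U] holds at every point for every λ ≠ μ if and only if ∂_τ u = ∂_x y and ∂_x³ y − 4(u−μ) ∂_x y − 2(∂_x u) y = 0 identically. -/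
open Set Function

noncomputable section

lemma key_iff (u y : ℝ → ℝ → ℝ) (mu l x τ : ℝ)
    (hgu : ContDiff ℝ (⊤ : ℕ∞) (fun z => u z τ))
    (hgy : ContDiff ℝ (⊤ : ℕ∞) (fun z => y z τ))
    (U V : ℝ → ℝ → ℝ → Matrix (Fin 2) (Fin 2) ℝ)
    (hU : ∀ l x τ, U l x τ = !![0, 1; u x τ - l, 0])
    (hV : ∀ l x τ, V l x τ = (1 / (4 * (mu - l))) • Mmat u y l x τ) :
    (pdtM (U l) x τ = pdxM (V l) x τ + (V l x τ * U l x τ - U l x τ * V l x τ))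
    ↔ pdt u x τ = (1/(4*(mu-l))) * (2 * pdx u x τ * y x τ + 4*(u x τ - l)*pdx y x τ
        - pdx (pdx (pdx y)) x τ) := by
  set c : ℝ := 1 / (4 * (mu - l)) with hc
  have hone : ((⊤ : ℕ∞) : WithTop ℕ∞) ≠ 0 := by simp
  -- differentiability facts
  have hdu : DifferentiableAt ℝ (fun z => u z τ) x := (hgu.differentiable hone) x
  have hdy : DifferentiableAt ℝ (fun z => y z τ) x := (hgy.differentiable hone) x
  have hgy1 : ContDiff ℝ (⊤ : ℕ∞) (deriv (fun z => y z τ)) :=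
    (contDiff_infty_iff_deriv.mp hgy).2
  have hgy2 : ContDiff ℝ (⊤ : ℕ∞) (deriv (deriv (fun z => y z τ))) :=
    (contDiff_infty_iff_deriv.mp hgy1).2
  have hdy2 : DifferentiableAt ℝ (deriv (deriv (fun z => y z τ))) x :=
    (hgy2.differentiable hone) x
  have hp1 : (fun x' => pdx y x' τ) = deriv (fun z => y z τ) := rfl
  have hp2 : (fun x' => pdx (pdx y) x' τ) = deriv (deriv (fun z => y z τ)) := rfl
  have hp3 : pdx (pdx (pdx y)) x τ = deriv (deriv (deriv (fun z => y z τ))) x := rfl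
  -- left matrix
  have hL : pdtM (U l) x τ = !![0, 0; pdt u x τ, 0] := by
    ext i j
    fin_cases i <;> fin_cases j <;>
      simp [pdtM, hU, pdt, deriv_sub_const]
  -- x-derivative of V
  have Hu : HasDerivAt (fun z => u z τ) (pdx u x τ) x := hdu.hasDerivAt
  have Hy : HasDerivAt (fun z => y z τ) (pdx y x τ) x := hdy.hasDerivAt
  have H10 : HasDerivAt (fun x' => 2 * (u x' τ - l) * y x' τ - pdx (pdx y) x' τ)
      (2 * pdx u x τ * y x τ + 2 * (u x τ - l) * pdx y x τ - pdx (pdx (pdx y)) x τ) x := by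
    have h1 : HasDerivAt (fun x' => 2 * (u x' τ - l) * y x' τ)
        (2 * pdx u x τ * y x τ + 2 * (u x τ - l) * pdx y x τ) x :=
      ((Hu.sub_const l).const_mul 2).mul Hy
    have h2 : HasDerivAt (fun x' => pdx (pdx y) x' τ) (pdx (pdx (pdx y)) x τ) x := by
      rw [hp2, hp3]; exact hdy2.hasDerivAt
    exact h1.sub h2
  have hVx : pdxM (V l) x τ = c • !![-(pdx (pdx y) x τ), 2 * pdx y x τ;
      2 * pdx u x τ * y x τ + 2 * (u x τ - l) * pdx y x τ - pdx (pdx (pdx y)) x τ,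
      pdx (pdx y) x τ] := by
    ext i j
    fin_cases i <;> fin_cases j
    · show deriv (fun x' => V l x' τ 0 0) x = _
      have e : (fun x' => V l x' τ 0 0) = fun x' => c * -(deriv (fun z => y z τ) x') := by
        funext x'
        rw [hV, ← hc]
        simp [Mmat, Matrix.smul_apply, smul_eq_mul, pdx]
      rw [e, deriv_const_mul_field, deriv.fun_neg]
      simp [Matrix.smul_apply, smul_eq_mul, pdx]
    · show deriv (fun x' => V l x' τ 0 1) x = _
      have e : (fun x' => V l x' τ 0 1) = fun x' => c * (2 * y x' τ) := by
        funext x'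
        rw [hV, ← hc]
        simp [Mmat, Matrix.smul_apply, smul_eq_mul]
      rw [e, deriv_const_mul_field, deriv_const_mul_field]
      simp [Matrix.smul_apply, smul_eq_mul, pdx]
    · show deriv (fun x' => V l x' τ 1 0) x = _
      have e : (fun x' => V l x' τ 1 0)
          = fun x' => c * (2 * (u x' τ - l) * y x' τ - pdx (pdx y) x' τ) := by
        funext x'
        rw [hV, ← hc]
        simp [Mmat, Matrix.smul_apply, smul_eq_mul]
      rw [e, deriv_const_mul_field, H10.deriv]
      simp [Matrix.smul_apply, smul_eq_mul]
    · show deriv (fun x' => V l x' τ 1 1) x = _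
      have e : (fun x' => V l x' τ 1 1) = fun x' => c * deriv (fun z => y z τ) x' := by
        funext x'
        rw [hV, ← hc]
        simp [Mmat, Matrix.smul_apply, smul_eq_mul, pdx]
      rw [e, deriv_const_mul_field]
      simp [Matrix.smul_apply, smul_eq_mul, pdx]
  -- commutator
  have hcomm : V l x τ * U l x τ - U l x τ * V l x τ
      = c • !![pdx (pdx y) x τ, -(2 * pdx y x τ);
               2 * (u x τ - l) * pdx y x τ, -(pdx (pdx y) x τ)] := by
    rw [hU, hV, Mmat, smul_mul_assoc, mul_smul_comm, ← smul_sub]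
    congr 1
    ext i j
    fin_cases i <;> fin_cases j <;>
      simp [Matrix.mul_fin_two] <;> ring
  have hR : pdxM (V l) x τ + (V l x τ * U l x τ - U l x τ * V l x τ)
      = !![0, 0; c * (2 * pdx u x τ * y x τ + 4 * (u x τ - l) * pdx y x τ
          - pdx (pdx (pdx y)) x τ), 0] := by
    rw [hVx, hcomm]
    ext i j
    fin_cases i <;> fin_cases j <;>
      simp [Matrix.smul_apply, smul_eq_mul] <;> ring
  rw [hL, hR]
  constructor
  · intro h
    have := congrFun (congrFun h 1) 0
    simpa [hc] using this
  · intro h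
    rw [h]

/-- with `U = [[0,1],[u−λ,0]]` and `V = (1/(4(μ−λ)))M(y)`, the zero curvature
equation `∂_τU = ∂ₓV + [V,U]` holds for every `λ ≠ μ` iff `∂_τu = ∂ₓy` and
`∂ₓ³y − 4(u−μ)∂ₓy − 2(∂ₓu)y = 0` (the negative symmetry of KdV). -/
theorem statement6
    (c d : ℝ) (J : Set ℝ) (hJ : J = Set.Ioo c d)
    (u y : ℝ → ℝ → ℝ) (mu : ℝ)
    (hu : ContDiffOn ℝ (⊤ : ℕ∞) (uncurry u) (univ ×ˢ J))
    (hy : ContDiffOn ℝ (⊤ : ℕ∞) (uncurry y) (univ ×ˢ J))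
    (U V : ℝ → ℝ → ℝ → Matrix (Fin 2) (Fin 2) ℝ)
    (hU : ∀ l x τ, U l x τ = !![0, 1; u x τ - l, 0])
    (hV : ∀ l x τ, V l x τ = (1 / (4 * (mu - l))) • Mmat u y l x τ) :
    (∀ l : ℝ, l ≠ mu → ∀ x τ, τ ∈ J →
        pdtM (U l) x τ = pdxM (V l) x τ + (V l x τ * U l x τ - U l x τ * V l x τ))
    ↔ (∀ x τ, τ ∈ J →
        pdt u x τ = pdx y x τ
        ∧ pdx (pdx (pdx y)) x τ - 4*(u x τ - mu) * pdx y x τ - 2 * pdx u x τ * y x τ = 0) := by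
  have slice : ∀ (w : ℝ → ℝ → ℝ), ContDiffOn ℝ (⊤ : ℕ∞) (uncurry w) (univ ×ˢ J) →
      ∀ τ ∈ J, ContDiff ℝ (⊤ : ℕ∞) (fun z => w z τ) := by
    intro w hw τ hτ
    rw [← contDiffOn_univ]
    exact hw.comp ((contDiff_id.prodMk contDiff_const).contDiffOn)
      (fun z _ => ⟨mem_univ _, hτ⟩)
  constructor
  · intro h x τ hτ
    have hgu := slice u hu τ hτ
    have hgy := slice y hy τ hτ
    have key : ∀ l : ℝ, l ≠ mu →
        pdt u x τ = (1/(4*(mu-l))) * (2 * pdx u x τ * y x τ + 4*(u x τ - l)*pdx y x τ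
          - pdx (pdx (pdx y)) x τ) :=
      fun l hl => (key_iff u y mu l x τ hgu hgy U V hU hV).mp (h l hl x τ hτ)
    have e1 := key (mu - 1) (by intro hh; linarith)
    have e2 := key (mu - 2) (by intro hh; linarith)
    constructor
    · linear_combination 2 * e2 - e1
    · linear_combination 8 * (e1 - e2)
  · intro h l hl x τ hτ
    have hgu := slice u hu τ hτ
    have hgy := slice y hy τ hτ
    obtain ⟨hA, hB⟩ := h x τ hτ
    rw [key_iff u y mu l x τ hgu hgy U V hU hV]
    have hne : mu - l ≠ 0 := sub_ne_zero.mpr (Ne.symm hl)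
    field_simp
    linear_combination 4 * (mu - l) * hA + hB
end
end

section
/- Let n ≥ 1, λ_1,…,λ_n pairwise distinct reals, I an open interval with 0 ∉ I, and let ψ_j, φ_j : ℝ × I → ℝ (j = 1,…,n) be smooth functions satisfying the Garnier-type system (G): ∂_x² ψ_j = (u − λ_j) ψ_j, ∂_x² φ_j = (u − λ_j) φ_j, ∂_t ψ_j = (∂_x u) ψ_j − 2(u + 2λ_j) ∂_x ψ_j, ∂_t φ_j = (∂_x u) φ_j − 2(u + 2λ_j) ∂_x φ_j, with u = x/(6t) + (ψ_1φ_1 + ⋯ + ψ_nφ_n)/(3t). Assume the products y_j := ψ_j φ_j are nowhere vanishing. Then the Wronskians α_j := (∂_x ψ_j) φ_j − ψ_j (∂_x φ_j) are constant on ℝ × I, and the y_j satisfy ∂_x² y_j = ((∂_x y_j)² − α_j²)/(2 y_j) + 2(u − λ_j) y_j and ∂_t y_j = 2(∂_x u) y_j − 2(u + 2λ_j) ∂_x y_j, together with u = x/(6t) + (y_1 + ⋯ + y_n)/(3t). -/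
open Set Function

noncomputable section

variable {I : Set ℝ} {f : ℝ → ℝ → ℝ}

lemma aux_hasFDerivAt (hIo : IsOpen I)
    (hf : ContDiffOn ℝ (⊤ : ℕ∞) (uncurry f) (univ ×ˢ I))
    {x t : ℝ} (ht : t ∈ I) :
    HasFDerivAt (uncurry f) (fderiv ℝ (uncurry f) (x, t)) (x, t) := by
  have hU : IsOpen ((univ : Set ℝ) ×ˢ I) := isOpen_univ.prod hIo
  have hmem : ((x, t) : ℝ × ℝ) ∈ (univ : Set ℝ) ×ˢ I := ⟨mem_univ _, ht⟩
  exact ((hf.contDiffAt (hU.mem_nhds hmem)).differentiableAt (by simp)).hasFDerivAt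

lemma aux_pdx_hasDerivAt' (hIo : IsOpen I)
    (hf : ContDiffOn ℝ (⊤ : ℕ∞) (uncurry f) (univ ×ˢ I))
    {x t : ℝ} (ht : t ∈ I) :
    HasDerivAt (fun x' => f x' t) (fderiv ℝ (uncurry f) (x, t) (1, 0)) x := by
  have h := (aux_hasFDerivAt hIo hf ht).comp_hasDerivAt x
    ((hasDerivAt_id x).prodMk (hasDerivAt_const x t))
  exact h

lemma aux_pdx_eq (hIo : IsOpen I)
    (hf : ContDiffOn ℝ (⊤ : ℕ∞) (uncurry f) (univ ×ˢ I))
    {x t : ℝ} (ht : t ∈ I) :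
    pdx f x t = fderiv ℝ (uncurry f) (x, t) (1, 0) :=
  (aux_pdx_hasDerivAt' hIo hf ht).deriv

lemma aux_pdx_hasDerivAt (hIo : IsOpen I)
    (hf : ContDiffOn ℝ (⊤ : ℕ∞) (uncurry f) (univ ×ˢ I))
    {x t : ℝ} (ht : t ∈ I) :
    HasDerivAt (fun x' => f x' t) (pdx f x t) x := by
  rw [aux_pdx_eq hIo hf ht]; exact aux_pdx_hasDerivAt' hIo hf ht

lemma aux_pdt_hasDerivAt' (hIo : IsOpen I)
    (hf : ContDiffOn ℝ (⊤ : ℕ∞) (uncurry f) (univ ×ˢ I))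
    {x t : ℝ} (ht : t ∈ I) :
    HasDerivAt (fun t' => f x t') (fderiv ℝ (uncurry f) (x, t) (0, 1)) t := by
  have h := (aux_hasFDerivAt hIo hf ht).comp_hasDerivAt t
    ((hasDerivAt_const t x).prodMk (hasDerivAt_id t))
  exact h

lemma aux_pdt_eq (hIo : IsOpen I)
    (hf : ContDiffOn ℝ (⊤ : ℕ∞) (uncurry f) (univ ×ˢ I))
    {x t : ℝ} (ht : t ∈ I) :
    pdt f x t = fderiv ℝ (uncurry f) (x, t) (0, 1) :=
  (aux_pdt_hasDerivAt' hIo hf ht).deriv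

lemma aux_pdt_hasDerivAt (hIo : IsOpen I)
    (hf : ContDiffOn ℝ (⊤ : ℕ∞) (uncurry f) (univ ×ˢ I))
    {x t : ℝ} (ht : t ∈ I) :
    HasDerivAt (fun t' => f x t') (pdt f x t) t := by
  rw [aux_pdt_eq hIo hf ht]; exact aux_pdt_hasDerivAt' hIo hf ht

lemma aux_fderiv_contDiffOn (hIo : IsOpen I)
    (hf : ContDiffOn ℝ (⊤ : ℕ∞) (uncurry f) (univ ×ˢ I)) :
    ContDiffOn ℝ (⊤ : ℕ∞) (fderiv ℝ (uncurry f)) (univ ×ˢ I) :=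
  hf.fderiv_of_isOpen (isOpen_univ.prod hIo) (by simp)

lemma aux_pdx_contDiffOn (hIo : IsOpen I)
    (hf : ContDiffOn ℝ (⊤ : ℕ∞) (uncurry f) (univ ×ˢ I)) :
    ContDiffOn ℝ (⊤ : ℕ∞) (uncurry (pdx f)) (univ ×ˢ I) := by
  refine ((aux_fderiv_contDiffOn hIo hf).clm_apply
    (contDiffOn_const (c := ((1:ℝ), (0:ℝ))))).congr ?_
  rintro ⟨x, t⟩ ⟨-, ht⟩
  exact aux_pdx_eq hIo hf ht

lemma aux_pdt_contDiffOn (hIo : IsOpen I)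
    (hf : ContDiffOn ℝ (⊤ : ℕ∞) (uncurry f) (univ ×ˢ I)) :
    ContDiffOn ℝ (⊤ : ℕ∞) (uncurry (pdt f)) (univ ×ˢ I) := by
  refine ((aux_fderiv_contDiffOn hIo hf).clm_apply
    (contDiffOn_const (c := ((0:ℝ), (1:ℝ))))).congr ?_
  rintro ⟨x, t⟩ ⟨-, ht⟩
  exact aux_pdt_eq hIo hf ht

lemma aux_clairaut (hIo : IsOpen I)
    (hf : ContDiffOn ℝ (⊤ : ℕ∞) (uncurry f) (univ ×ˢ I))
    {x t : ℝ} (ht : t ∈ I) :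
    pdt (pdx f) x t = pdx (pdt f) x t := by
  have hU : IsOpen ((univ : Set ℝ) ×ˢ I) := isOpen_univ.prod hIo
  have hmem : ((x, t) : ℝ × ℝ) ∈ (univ : Set ℝ) ×ˢ I := ⟨mem_univ _, ht⟩
  set F := uncurry f with hF
  have hev : ∀ᶠ p in nhds ((x, t) : ℝ × ℝ), HasFDerivAt F (fderiv ℝ F p) p := by
    filter_upwards [hU.mem_nhds hmem] with p hp
    exact ((hf.contDiffAt (hU.mem_nhds hp)).differentiableAt (by simp)).hasFDerivAt
  have hD : HasFDerivAt (fderiv ℝ F) (fderiv ℝ (fderiv ℝ F) (x, t)) (x, t) :=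
    (((aux_fderiv_contDiffOn hIo hf).contDiffAt (hU.mem_nhds hmem)).differentiableAt
      (by simp)).hasFDerivAt
  have hsym := second_derivative_symmetric_of_eventually hev hD
  set f'' := fderiv ℝ (fderiv ℝ F) (x, t) with hf''
  -- pdt (pdx f) x t = f'' (0,1) (1,0)
  have h1 : pdt (pdx f) x t = f'' (0, 1) (1, 0) := by
    have hc : HasDerivAt (fun t' => fderiv ℝ F (x, t')) (f'' (0, 1)) t :=
      hD.comp_hasDerivAt t ((hasDerivAt_const t x).prodMk (hasDerivAt_id t))
    have hc2 : HasDerivAt (fun t' => fderiv ℝ F (x, t') ((1:ℝ), (0:ℝ)))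
        (f'' (0, 1) (1, 0)) t := by
      have := hc.clm_apply (hasDerivAt_const t ((1:ℝ), (0:ℝ)))
      simpa using this
    have heq : (fun t' => pdx f x t') =ᶠ[nhds t] (fun t' => fderiv ℝ F (x, t') (1, 0)) := by
      filter_upwards [hIo.mem_nhds ht] with t' ht'
      exact aux_pdx_eq hIo hf ht'
    show deriv (fun t' => pdx f x t') t = _
    rw [heq.deriv_eq]
    exact hc2.deriv
  have h2 : pdx (pdt f) x t = f'' (1, 0) (0, 1) := by
    have hc : HasDerivAt (fun x' => fderiv ℝ F (x', t)) (f'' (1, 0)) x :=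
      hD.comp_hasDerivAt x ((hasDerivAt_id x).prodMk (hasDerivAt_const x t))
    have hc2 : HasDerivAt (fun x' => fderiv ℝ F (x', t) ((0:ℝ), (1:ℝ)))
        (f'' (1, 0) (0, 1)) x := by
      have := hc.clm_apply (hasDerivAt_const x ((0:ℝ), (1:ℝ)))
      simpa using this
    have heq : (fun x' => pdt f x' t) = (fun x' => fderiv ℝ F (x', t) (0, 1)) := by
      funext x'
      exact aux_pdt_eq hIo hf ht
    show deriv (fun x' => pdt f x' t) x = _
    rw [heq]
    exact hc2.deriv
  rw [h1, h2, hsym]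


/-- solutions of the Garnier-type system (G) produce, via `yⱼ = ψⱼφⱼ`, solutions
of (yxx), (yt), (uy), where `αⱼ` are the (constant) Wronskians `ψⱼₓφⱼ − ψⱼφⱼₓ`. -/
theorem statement7
    (n : ℕ) (hn : 1 ≤ n)
    (lam : Fin n → ℝ) (hlam : Function.Injective lam)
    (a b : ℝ) (I : Set ℝ) (hI : I = Set.Ioo a b) (hI0 : (0:ℝ) ∉ I)
    (psi phi : Fin n → ℝ → ℝ → ℝ)
    (hpsismooth : ∀ j, ContDiffOn ℝ (⊤ : ℕ∞) (uncurry (psi j)) (univ ×ˢ I))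
    (hphismooth : ∀ j, ContDiffOn ℝ (⊤ : ℕ∞) (uncurry (phi j)) (univ ×ˢ I))
    -- the products yⱼ = ψⱼφⱼ
    (y : Fin n → ℝ → ℝ → ℝ)
    (hy : ∀ j x t, y j x t = psi j x t * phi j x t)
    (hyne : ∀ j x t, t ∈ I → y j x t ≠ 0)
    -- the Garnier-type system (G), with u given by the constraint
    (hpsixx : ∀ j x t, t ∈ I →
      pdx (pdx (psi j)) x t = (ucon n y x t - lam j) * psi j x t)
    (hphixx : ∀ j x t, t ∈ I →
      pdx (pdx (phi j)) x t = (ucon n y x t - lam j) * phi j x t)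
    (hpsit : ∀ j x t, t ∈ I →
      pdt (psi j) x t
        = pdx (ucon n y) x t * psi j x t - 2*(ucon n y x t + 2*lam j) * pdx (psi j) x t)
    (hphit : ∀ j x t, t ∈ I →
      pdt (phi j) x t
        = pdx (ucon n y) x t * phi j x t - 2*(ucon n y x t + 2*lam j) * pdx (phi j) x t) :
    -- the Wronskians are constant, and the yⱼ solve (yxx) and (yt) with those constants
    ∃ alp : Fin n → ℝ,
      (∀ j x t, t ∈ I →
        pdx (psi j) x t * phi j x t - psi j x t * pdx (phi j) x t = alp j)
      ∧ (∀ j x t, t ∈ I →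
        pdx (pdx (y j)) x t
          = ((pdx (y j) x t)^2 - (alp j)^2) / (2 * y j x t)
            + 2 * (ucon n y x t - lam j) * y j x t)
      ∧ (∀ j x t, t ∈ I →
        pdt (y j) x t
          = 2 * pdx (ucon n y) x t * y j x t
            - 2 * (ucon n y x t + 2*lam j) * pdx (y j) x t) := by
  have hIo : IsOpen I := by rw [hI]; exact isOpen_Ioo
  have hconv : Convex ℝ I := by rw [hI]; exact convex_Ioo a b
  -- smoothness of y j
  have hysmooth : ∀ j, ContDiffOn ℝ (⊤ : ℕ∞) (uncurry (y j)) (univ ×ˢ I) := by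
    intro j
    refine ((hpsismooth j).mul (hphismooth j)).congr ?_
    rintro ⟨x, t⟩ -
    simp [uncurry, hy]
  -- basic derivative facts
  have hpsix : ∀ j x t, t ∈ I → HasDerivAt (fun x' => psi j x' t) (pdx (psi j) x t) x :=
    fun j x t ht => aux_pdx_hasDerivAt hIo (hpsismooth j) ht
  have hphix : ∀ j x t, t ∈ I → HasDerivAt (fun x' => phi j x' t) (pdx (phi j) x t) x :=
    fun j x t ht => aux_pdx_hasDerivAt hIo (hphismooth j) ht
  have hpsixx' : ∀ j x t, t ∈ I →
      HasDerivAt (fun x' => pdx (psi j) x' t) (pdx (pdx (psi j)) x t) x :=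
    fun j x t ht => aux_pdx_hasDerivAt hIo (aux_pdx_contDiffOn hIo (hpsismooth j)) ht
  have hphixx' : ∀ j x t, t ∈ I →
      HasDerivAt (fun x' => pdx (phi j) x' t) (pdx (pdx (phi j)) x t) x :=
    fun j x t ht => aux_pdx_hasDerivAt hIo (aux_pdx_contDiffOn hIo (hphismooth j)) ht
  have hpsit' : ∀ j x t, t ∈ I → HasDerivAt (fun t' => psi j x t') (pdt (psi j) x t) t :=
    fun j x t ht => aux_pdt_hasDerivAt hIo (hpsismooth j) ht
  have hphit' : ∀ j x t, t ∈ I → HasDerivAt (fun t' => phi j x t') (pdt (phi j) x t) t :=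
    fun j x t ht => aux_pdt_hasDerivAt hIo (hphismooth j) ht
  have hpdtpsix : ∀ j x t, t ∈ I →
      HasDerivAt (fun x' => pdt (psi j) x' t) (pdx (pdt (psi j)) x t) x :=
    fun j x t ht => aux_pdx_hasDerivAt hIo (aux_pdt_contDiffOn hIo (hpsismooth j)) ht
  have hpdtphix : ∀ j x t, t ∈ I →
      HasDerivAt (fun x' => pdt (phi j) x' t) (pdx (pdt (phi j)) x t) x :=
    fun j x t ht => aux_pdx_hasDerivAt hIo (aux_pdt_contDiffOn hIo (hphismooth j)) ht
  have hpdxpsit : ∀ j x t, t ∈ I →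
      HasDerivAt (fun t' => pdx (psi j) x t') (pdt (pdx (psi j)) x t) t :=
    fun j x t ht => aux_pdt_hasDerivAt hIo (aux_pdx_contDiffOn hIo (hpsismooth j)) ht
  have hpdxphit : ∀ j x t, t ∈ I →
      HasDerivAt (fun t' => pdx (phi j) x t') (pdt (pdx (phi j)) x t) t :=
    fun j x t ht => aux_pdt_hasDerivAt hIo (aux_pdx_contDiffOn hIo (hphismooth j)) ht
  have hyx : ∀ j x t, t ∈ I → HasDerivAt (fun x' => y j x' t) (pdx (y j) x t) x :=
    fun j x t ht => aux_pdx_hasDerivAt hIo (hysmooth j) ht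
  -- u is differentiable in x
  have hux : ∀ x t, t ∈ I → HasDerivAt (fun x' => ucon n y x' t) (pdx (ucon n y) x t) x := by
    intro x t ht
    have h1 : DifferentiableAt ℝ (fun x' => ∑ j, y j x' t) x :=
      DifferentiableAt.fun_sum fun j _ => (hyx j x t ht).differentiableAt
    have h2 : DifferentiableAt ℝ (fun x' => ucon n y x' t) x := by
      have h3 := (differentiableAt_fun_id.div_const (6*t)).add (h1.div_const (3*t))
      exact h3
    exact h2.hasDerivAt
  -- x-derivative of the Wronskian vanishes
  have hWx : ∀ j x t, t ∈ I →
      HasDerivAt (fun x' => pdx (psi j) x' t * phi j x' t - psi j x' t * pdx (phi j) x' t)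
        0 x := by
    intro j x t ht
    have h := ((hpsixx' j x t ht).fun_mul (hphix j x t ht)).fun_sub
      ((hpsix j x t ht).fun_mul (hphixx' j x t ht))
    refine h.congr_deriv (Eq.symm ?_)
    rw [hpsixx j x t ht, hphixx j x t ht]; ring
  -- t-derivative of the Wronskian vanishes
  have hWt : ∀ j x t, t ∈ I →
      HasDerivAt (fun t' => pdx (psi j) x t' * phi j x t' - psi j x t' * pdx (phi j) x t')
        0 t := by
    intro j x t ht
    have h1 : HasDerivAt
        (fun x' => pdt (psi j) x' t * phi j x' t - psi j x' t * pdt (phi j) x' t)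
        (pdx (pdt (psi j)) x t * phi j x t + pdt (psi j) x t * pdx (phi j) x t
          - (pdx (psi j) x t * pdt (phi j) x t + psi j x t * pdx (pdt (phi j)) x t)) x :=
      ((hpdtpsix j x t ht).mul (hphix j x t ht)).sub
        ((hpsix j x t ht).mul (hpdtphix j x t ht))
    have hfun : (fun x' => pdt (psi j) x' t * phi j x' t - psi j x' t * pdt (phi j) x' t)
        = fun x' => -2 * (ucon n y x' t + 2*lam j)
            * (pdx (psi j) x' t * phi j x' t - psi j x' t * pdx (phi j) x' t) := by
      funext x'
      rw [hpsit j x' t ht, hphit j x' t ht]; ring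
    have h2 : HasDerivAt
        (fun x' => pdt (psi j) x' t * phi j x' t - psi j x' t * pdt (phi j) x' t)
        (-2 * pdx (ucon n y) x t
            * (pdx (psi j) x t * phi j x t - psi j x t * pdx (phi j) x t)
          + -2 * (ucon n y x t + 2*lam j) * 0) x := by
      rw [hfun]
      exact (HasDerivAt.const_mul (-2) ((hux x t ht).add_const (2*lam j))).mul (hWx j x t ht)
    have hVval := h1.unique h2
    have h := ((hpdxpsit j x t ht).fun_mul (hphit' j x t ht)).fun_sub
      ((hpsit' j x t ht).fun_mul (hpdxphit j x t ht))
    refine h.congr_deriv (Eq.symm ?_)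
    rw [aux_clairaut hIo (hpsismooth j) ht, aux_clairaut hIo (hphismooth j) ht]
    rw [hpsit j x t ht, hphit j x t ht] at hVval ⊢
    linear_combination -hVval
  -- the Wronskian is constant on ℝ × I
  have hconst : ∀ j x t t', t ∈ I → t' ∈ I →
      pdx (psi j) x t * phi j x t - psi j x t * pdx (phi j) x t
        = pdx (psi j) 0 t' * phi j 0 t' - psi j 0 t' * pdx (phi j) 0 t' := by
    intro j x t t' ht ht'
    have e1 : pdx (psi j) x t * phi j x t - psi j x t * pdx (phi j) x t
        = pdx (psi j) 0 t * phi j 0 t - psi j 0 t * pdx (phi j) 0 t :=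
      is_const_of_deriv_eq_zero (fun z => (hWx j z t ht).differentiableAt)
        (fun z => (hWx j z t ht).deriv) x 0
    have e2 : pdx (psi j) 0 t * phi j 0 t - psi j 0 t * pdx (phi j) 0 t
        = pdx (psi j) 0 t' * phi j 0 t' - psi j 0 t' * pdx (phi j) 0 t' := by
      refine hconv.is_const_of_fderivWithin_eq_zero
        (f := fun s => pdx (psi j) 0 s * phi j 0 s - psi j 0 s * pdx (phi j) 0 s)
        (fun s hs => (hWt j 0 s hs).differentiableAt.differentiableWithinAt) ?_ ht ht'
      intro s hs
      rw [fderivWithin_of_isOpen hIo hs, (hWt j 0 s hs).hasFDerivAt.fderiv]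
      ext z; simp
    exact e1.trans e2
  -- pdx of y
  have hpdxy : ∀ j x t, t ∈ I →
      pdx (y j) x t = pdx (psi j) x t * phi j x t + psi j x t * pdx (phi j) x t := by
    intro j x t ht
    have hfun : (fun x' => y j x' t) = fun x' => psi j x' t * phi j x' t :=
      funext fun z => hy j z t
    have h := (hpsix j x t ht).fun_mul (hphix j x t ht)
    rw [← hfun] at h
    exact h.deriv
  rcases Set.eq_empty_or_nonempty I with hIe | ⟨t0, ht0⟩
  · refine ⟨fun _ => 0, ?_, ?_, ?_⟩ <;>
      · intro j x t ht
        rw [hIe] at ht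
        exact absurd ht (Set.notMem_empty t)
  refine ⟨fun j => pdx (psi j) 0 t0 * phi j 0 t0 - psi j 0 t0 * pdx (phi j) 0 t0,
    fun j x t ht => hconst j x t t0 ht ht0, ?_, ?_⟩
  · -- (yxx)
    intro j x t ht
    have hfun2 : (fun x' => pdx (y j) x' t)
        = fun x' => pdx (psi j) x' t * phi j x' t + psi j x' t * pdx (phi j) x' t :=
      funext fun z => hpdxy j z t ht
    have h := ((hpsixx' j x t ht).fun_mul (hphix j x t ht)).fun_add
      ((hpsix j x t ht).fun_mul (hphixx' j x t ht))
    rw [← hfun2] at h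
    have hyxx : pdx (pdx (y j)) x t
        = pdx (pdx (psi j)) x t * phi j x t + pdx (psi j) x t * pdx (phi j) x t
          + (pdx (psi j) x t * pdx (phi j) x t + psi j x t * pdx (pdx (phi j)) x t) := h.deriv
    have hne : psi j x t * phi j x t ≠ 0 := by
      have := hyne j x t ht; rwa [hy j x t] at this
    have hpsi0 := left_ne_zero_of_mul hne
    have hphi0 := right_ne_zero_of_mul hne
    beta_reduce
    rw [hyxx, hpdxy j x t ht, ← hconst j x t t0 ht ht0, hpsixx j x t ht, hphixx j x t ht,
      hy j x t]
    field_simp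
    ring
  · -- (yt)
    intro j x t ht
    have hfun : (fun t' => y j x t') = fun t' => psi j x t' * phi j x t' :=
      funext fun z => hy j x z
    have h := (hpsit' j x t ht).fun_mul (hphit' j x t ht)
    rw [← hfun] at h
    have hval : pdt (y j) x t = pdt (psi j) x t * phi j x t + psi j x t * pdt (phi j) x t :=
      h.deriv
    rw [hval, hpsit j x t ht, hphit j x t ht, hy j x t, hpdxy j x t ht]
    ring
end
end

section
/- Let u, ψ, φ : ℝ × I → ℝ be smooth (I an open interval) and λ ∈ ℝ, and suppose ∂_x² ψ = (u − λ) ψ, ∂_x² φ = (u − λ) φ, ∂_t ψ = (∂_x u) ψ − 2(u + 2λ) ∂_x ψ, and ∂_t φ = (∂_x u) φ − 2(u + 2λ) ∂_x φ. Then the Wronskian α = (∂_x ψ) φ − ψ (∂_x φ) satisfies ∂_x α = 0 and ∂_t α = 0, i.e. α is constant on ℝ × I. -/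
open Set Function

noncomputable section

namespace S8

variable {I : Set ℝ} {f : ℝ → ℝ → ℝ}

lemma mem_prod {x t : ℝ} (ht : t ∈ I) : (x, t) ∈ (univ : Set ℝ) ×ˢ I := ⟨trivial, ht⟩

lemma cda (hIo : IsOpen I) (hf : ContDiffOn ℝ (⊤ : ℕ∞) (uncurry f) (univ ×ˢ I))
    {x t : ℝ} (ht : t ∈ I) : ContDiffAt ℝ (⊤ : ℕ∞) (uncurry f) (x, t) :=
  hf.contDiffAt ((isOpen_univ.prod hIo).mem_nhds (mem_prod ht))

lemma cdaH (hIo : IsOpen I) (hf : ContDiffOn ℝ (⊤ : ℕ∞) (uncurry f) (univ ×ˢ I))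
    {x t : ℝ} (ht : t ∈ I) : ContDiffAt ℝ (⊤ : ℕ∞) (fderiv ℝ (uncurry f)) (x, t) :=
  (hf.fderiv_of_isOpen (isOpen_univ.prod hIo) (by exact_mod_cast le_top)).contDiffAt
    ((isOpen_univ.prod hIo).mem_nhds (mem_prod ht))

lemma sliceX (hf : ContDiffOn ℝ (⊤ : ℕ∞) (uncurry f) (univ ×ˢ I))
    {t : ℝ} (ht : t ∈ I) : ContDiff ℝ (⊤ : ℕ∞) (fun x => f x t) := by
  rw [← contDiffOn_univ]
  exact hf.comp ((contDiff_id.prodMk contDiff_const).contDiffOn) (fun x _ => mem_prod ht)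

lemma sliceX_deriv (hf : ContDiffOn ℝ (⊤ : ℕ∞) (uncurry f) (univ ×ˢ I))
    {t : ℝ} (ht : t ∈ I) : ContDiff ℝ (⊤ : ℕ∞) (fun x => pdx f x t) := by
  exact (contDiff_infty_iff_deriv.mp (sliceX hf ht)).2

lemma hasDerivX (hIo : IsOpen I) (hf : ContDiffOn ℝ (⊤ : ℕ∞) (uncurry f) (univ ×ˢ I))
    {x t : ℝ} (ht : t ∈ I) :
    HasDerivAt (fun x' => f x' t) (fderiv ℝ (uncurry f) (x, t) (1, 0)) x := by
  have h1 : HasFDerivAt (uncurry f) (fderiv ℝ (uncurry f) (x, t)) (x, t) :=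
    ((cda hIo hf ht).differentiableAt (by simp)).hasFDerivAt
  have h2 : HasDerivAt (fun x' : ℝ => ((x' : ℝ), t)) ((1 : ℝ), (0 : ℝ)) x :=
    (hasDerivAt_id x).prodMk (hasDerivAt_const x t)
  exact h1.comp_hasDerivAt x h2

lemma hasDerivT (hIo : IsOpen I) (hf : ContDiffOn ℝ (⊤ : ℕ∞) (uncurry f) (univ ×ˢ I))
    {x t : ℝ} (ht : t ∈ I) :
    HasDerivAt (fun t' => f x t') (fderiv ℝ (uncurry f) (x, t) (0, 1)) t := by
  have h1 : HasFDerivAt (uncurry f) (fderiv ℝ (uncurry f) (x, t)) (x, t) :=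
    ((cda hIo hf ht).differentiableAt (by simp)).hasFDerivAt
  have h2 : HasDerivAt (fun t' : ℝ => ((x : ℝ), t')) ((0 : ℝ), (1 : ℝ)) t :=
    (hasDerivAt_const t x).prodMk (hasDerivAt_id t)
  exact h1.comp_hasDerivAt t h2

lemma hasDerivT_Happ (hIo : IsOpen I) (hf : ContDiffOn ℝ (⊤ : ℕ∞) (uncurry f) (univ ×ˢ I))
    {x t : ℝ} (ht : t ∈ I) (v : ℝ × ℝ) :
    HasDerivAt (fun t' => fderiv ℝ (uncurry f) (x, t') v)
      (fderiv ℝ (fderiv ℝ (uncurry f)) (x, t) (0, 1) v) t := by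
  have h1 : HasFDerivAt (fderiv ℝ (uncurry f)) (fderiv ℝ (fderiv ℝ (uncurry f)) (x, t)) (x, t) :=
    ((cdaH hIo hf ht).differentiableAt (by simp)).hasFDerivAt
  have h2 : HasDerivAt (fun t' : ℝ => ((x : ℝ), t')) ((0 : ℝ), (1 : ℝ)) t :=
    (hasDerivAt_const t x).prodMk (hasDerivAt_id t)
  have h3 := (h1.comp_hasDerivAt t h2).clm_apply (hasDerivAt_const t v)
  simpa using h3

lemma hasDerivX_Happ (hIo : IsOpen I) (hf : ContDiffOn ℝ (⊤ : ℕ∞) (uncurry f) (univ ×ˢ I))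
    {x t : ℝ} (ht : t ∈ I) (v : ℝ × ℝ) :
    HasDerivAt (fun x' => fderiv ℝ (uncurry f) (x', t) v)
      (fderiv ℝ (fderiv ℝ (uncurry f)) (x, t) (1, 0) v) x := by
  have h1 : HasFDerivAt (fderiv ℝ (uncurry f)) (fderiv ℝ (fderiv ℝ (uncurry f)) (x, t)) (x, t) :=
    ((cdaH hIo hf ht).differentiableAt (by simp)).hasFDerivAt
  have h2 : HasDerivAt (fun x' : ℝ => ((x' : ℝ), t)) ((1 : ℝ), (0 : ℝ)) x :=
    (hasDerivAt_id x).prodMk (hasDerivAt_const x t)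
  have h4 := h1.comp_hasDerivAt x h2
  have h3 := h4.clm_apply (hasDerivAt_const x v)
  simpa using h3

lemma hasDerivT_pdx (hIo : IsOpen I) (hf : ContDiffOn ℝ (⊤ : ℕ∞) (uncurry f) (univ ×ˢ I))
    {x t : ℝ} (ht : t ∈ I) :
    HasDerivAt (fun t' => pdx f x t')
      (fderiv ℝ (fderiv ℝ (uncurry f)) (x, t) (0, 1) (1, 0)) t := by
  apply (hasDerivT_Happ hIo hf ht (1, 0)).congr_of_eventuallyEq
  filter_upwards [hIo.mem_nhds ht] with t' ht'
  exact (hasDerivX hIo hf ht').deriv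

lemma pdx_pdt_eq (hIo : IsOpen I) (hf : ContDiffOn ℝ (⊤ : ℕ∞) (uncurry f) (univ ×ˢ I))
    {x t : ℝ} (ht : t ∈ I) :
    pdx (pdt f) x t = fderiv ℝ (fderiv ℝ (uncurry f)) (x, t) (1, 0) (0, 1) := by
  have e : (fun x' => pdt f x' t) = (fun x' => fderiv ℝ (uncurry f) (x', t) (0, 1)) :=
    funext fun x' => (hasDerivT hIo hf ht).deriv
  show deriv (fun x' => pdt f x' t) x = _
  rw [e]
  exact (hasDerivX_Happ hIo hf ht (0, 1)).deriv

/-- Clairaut for our setting: `∂ₜ∂ₓ f = ∂ₓ∂ₜ f`. -/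
lemma pdt_pdx_eq_pdx_pdt (hIo : IsOpen I) (hf : ContDiffOn ℝ (⊤ : ℕ∞) (uncurry f) (univ ×ˢ I))
    {x t : ℝ} (ht : t ∈ I) :
    pdt (pdx f) x t = pdx (pdt f) x t := by
  have h1 : pdt (pdx f) x t = fderiv ℝ (fderiv ℝ (uncurry f)) (x, t) (0, 1) (1, 0) :=
    (hasDerivT_pdx hIo hf ht).deriv
  rw [h1, pdx_pdt_eq hIo hf ht]
  exact ((cda hIo hf ht).isSymmSndFDerivAt
    (by rw [minSmoothness_of_isRCLikeNormedField]; exact WithTop.coe_le_coe.mpr (le_top : (2:ℕ∞) ≤ ⊤))).eq _ _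

end S8

/-- for two solutions `ψ, φ` of the same Schrödinger equation with potential `u`
and eigenvalue `λ`, evolving under the KdV-induced flow, the Wronskian
`α = ψₓφ − ψφₓ` satisfies `∂ₓα = ∂ₜα = 0`, i.e. it is constant on `ℝ × I`. -/
theorem statement8
    (a b : ℝ) (I : Set ℝ) (hI : I = Set.Ioo a b)
    (u psi phi : ℝ → ℝ → ℝ) (l : ℝ)
    (hu : ContDiffOn ℝ (⊤ : ℕ∞) (uncurry u) (univ ×ˢ I))
    (hpsi : ContDiffOn ℝ (⊤ : ℕ∞) (uncurry psi) (univ ×ˢ I))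
    (hphi : ContDiffOn ℝ (⊤ : ℕ∞) (uncurry phi) (univ ×ˢ I))
    (hpsixx : ∀ x t, t ∈ I → pdx (pdx psi) x t = (u x t - l) * psi x t)
    (hphixx : ∀ x t, t ∈ I → pdx (pdx phi) x t = (u x t - l) * phi x t)
    (hpsit : ∀ x t, t ∈ I →
      pdt psi x t = pdx u x t * psi x t - 2*(u x t + 2*l) * pdx psi x t)
    (hphit : ∀ x t, t ∈ I →
      pdt phi x t = pdx u x t * phi x t - 2*(u x t + 2*l) * pdx phi x t)
    (A : ℝ → ℝ → ℝ)
    (hA : ∀ x t, A x t = pdx psi x t * phi x t - psi x t * pdx phi x t) :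
    (∀ x t, t ∈ I → pdx A x t = 0 ∧ pdt A x t = 0)
    ∧ ∃ c : ℝ, ∀ x t, t ∈ I → A x t = c := by
  have hIo : IsOpen I := hI ▸ isOpen_Ioo
  -- basic one-variable derivatives
  have Hx : ∀ (f : ℝ → ℝ → ℝ), ContDiffOn ℝ (⊤ : ℕ∞) (uncurry f) (univ ×ˢ I) →
      ∀ (x t : ℝ), t ∈ I → HasDerivAt (fun x' => f x' t) (pdx f x t) x :=
    fun f hf x t ht => (S8.hasDerivX hIo hf ht).differentiableAt.hasDerivAt
  have Ht : ∀ (f : ℝ → ℝ → ℝ), ContDiffOn ℝ (⊤ : ℕ∞) (uncurry f) (univ ×ˢ I) →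
      ∀ (x t : ℝ), t ∈ I → HasDerivAt (fun t' => f x t') (pdt f x t) t :=
    fun f hf x t ht => (S8.hasDerivT hIo hf ht).differentiableAt.hasDerivAt
  have Hxx : ∀ (f : ℝ → ℝ → ℝ), ContDiffOn ℝ (⊤ : ℕ∞) (uncurry f) (univ ×ˢ I) →
      ∀ (x t : ℝ), t ∈ I → HasDerivAt (fun x' => pdx f x' t) (pdx (pdx f) x t) x :=
    fun f hf x t ht =>
      (((S8.sliceX_deriv hf ht).differentiable (by simp)) x).hasDerivAt
  have Htx : ∀ (f : ℝ → ℝ → ℝ), ContDiffOn ℝ (⊤ : ℕ∞) (uncurry f) (univ ×ˢ I) →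
      ∀ (x t : ℝ), t ∈ I → HasDerivAt (fun t' => pdx f x t') (pdt (pdx f) x t) t :=
    fun f hf x t ht => (S8.hasDerivT_pdx hIo hf ht).differentiableAt.hasDerivAt
  -- the Wronskian has zero x-derivative
  have key_x : ∀ (x t : ℝ), t ∈ I → HasDerivAt (fun x' => A x' t) 0 x := by
    intro x t ht
    have e : (fun x' => A x' t)
        = fun x' => pdx psi x' t * phi x' t - psi x' t * pdx phi x' t :=
      funext fun x' => hA x' t
    have h := ((Hxx psi hpsi x t ht).mul (Hx phi hphi x t ht)).sub
      ((Hx psi hpsi x t ht).mul (Hxx phi hphi x t ht))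
    simp only [Pi.mul_def, Pi.sub_def] at h
    rw [← e] at h
    have hv : pdx (pdx psi) x t * phi x t + pdx psi x t * pdx phi x t
        - (pdx psi x t * pdx phi x t + psi x t * pdx (pdx phi) x t) = 0 := by
      rw [hpsixx x t ht, hphixx x t ht]; ring
    exact hv ▸ h
  -- mixed second derivative of psi, phi in explicit form
  have Hmix : ∀ (f : ℝ → ℝ → ℝ), ContDiffOn ℝ (⊤ : ℕ∞) (uncurry f) (univ ×ˢ I) →
      (∀ x t, t ∈ I →
        pdt f x t = pdx u x t * f x t - 2*(u x t + 2*l) * pdx f x t) →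
      ∀ (x t : ℝ), t ∈ I → pdx (pdt f) x t =
        (pdx (pdx u) x t * f x t + pdx u x t * pdx f x t)
          - (2 * pdx u x t * pdx f x t + 2*(u x t + 2*l) * pdx (pdx f) x t) := by
    intro f hf hft x t ht
    have e2 : (fun x' => pdt f x' t)
        = fun x' => pdx u x' t * f x' t - 2*(u x' t + 2*l) * pdx f x' t :=
      funext fun x' => hft x' t ht
    have h2 : HasDerivAt (fun x' => 2*(u x' t + 2*l)) (2 * pdx u x t) x :=
      ((Hx u hu x t ht).add_const (2*l)).const_mul 2
    have h3 := ((Hxx u hu x t ht).mul (Hx f hf x t ht)).sub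
      (h2.mul (Hxx f hf x t ht))
    show deriv (fun x' => pdt f x' t) x = _
    rw [e2]
    exact h3.deriv
  -- the Wronskian has zero t-derivative
  have key_t : ∀ (x t : ℝ), t ∈ I → HasDerivAt (fun t' => A x t') 0 t := by
    intro x t ht
    have e : (fun t' => A x t')
        = fun t' => pdx psi x t' * phi x t' - psi x t' * pdx phi x t' :=
      funext fun t' => hA x t'
    have h := ((Htx psi hpsi x t ht).mul (Ht phi hphi x t ht)).sub
      ((Ht psi hpsi x t ht).mul (Htx phi hphi x t ht))
    simp only [Pi.mul_def, Pi.sub_def] at h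
    rw [← e] at h
    have hv : pdt (pdx psi) x t * phi x t + pdx psi x t * pdt phi x t
        - (pdt psi x t * pdx phi x t + psi x t * pdt (pdx phi) x t) = 0 := by
      rw [S8.pdt_pdx_eq_pdx_pdt hIo hpsi ht, S8.pdt_pdx_eq_pdx_pdt hIo hphi ht,
        Hmix psi hpsi hpsit x t ht, Hmix phi hphi hphit x t ht,
        hpsit x t ht, hphit x t ht, hpsixx x t ht, hphixx x t ht]
      ring
    exact hv ▸ h
  refine ⟨fun x t ht => ⟨(key_x x t ht).deriv, (key_t x t ht).deriv⟩, ?_⟩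
  rcases eq_empty_or_nonempty I with hIe | ⟨t₀, ht₀⟩
  · exact ⟨0, fun x t ht => absurd ht (by simp [hIe])⟩
  · refine ⟨A 0 t₀, fun x t ht => ?_⟩
    have hx : A x t = A 0 t :=
      is_const_of_deriv_eq_zero (fun x' => (key_x x' t ht).differentiableAt)
        (fun x' => (key_x x' t ht).deriv) x 0
    have hconv : Convex ℝ I := hI ▸ convex_Ioo a b
    have htt : A 0 t = A 0 t₀ := by
      refine hconv.is_const_of_fderivWithin_eq_zero (f := fun t' => A 0 t')
        (fun t' ht' => (key_t 0 t' ht').differentiableAt.differentiableWithinAt)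
        (fun t' ht' => ?_) ht ht₀
      rw [fderivWithin_of_isOpen hIo ht', (key_t 0 t' ht').hasFDerivAt.fderiv]
      ext
      simp
    rw [hx, htt]
end
end

section
/- Let f : ℝ × I → ℝ be smooth (I an open interval) and μ ∈ ℝ, and suppose f satisfies the modified KdV equation ∂_t f = ∂_x³ f − 6(f² + μ) ∂_x f. Then both u := ∂_x f + f² + μ and ũ := −∂_x f + f² + μ satisfy the KdV equation ∂_t u = ∂_x³ u − 6 u ∂_x u on ℝ × I. -/
open Set Function Filter Topology

noncomputable section

section AUX
variable {E : Type*} [NormedAddCommGroup E] [NormedSpace ℝ E]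
lemma hasDerivAt_slice_x {F : ℝ × ℝ → E} {x t : ℝ} (h : DifferentiableAt ℝ F (x, t)) :
    HasDerivAt (fun x' => F (x', t)) (fderiv ℝ F (x, t) (1, 0)) x := by
  have hline : HasDerivAt (fun x' : ℝ => ((x', t) : ℝ × ℝ)) ((1 : ℝ), (0 : ℝ)) x :=
    HasDerivAt.prodMk (hasDerivAt_id x) (hasDerivAt_const x t)
  exact h.hasFDerivAt.comp_hasDerivAt x hline
lemma hasDerivAt_slice_t {F : ℝ × ℝ → E} {x t : ℝ} (h : DifferentiableAt ℝ F (x, t)) :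
    HasDerivAt (fun t' => F (x, t')) (fderiv ℝ F (x, t) (0, 1)) t := by
  have hline : HasDerivAt (fun t' : ℝ => ((x, t') : ℝ × ℝ)) ((0 : ℝ), (1 : ℝ)) t :=
    HasDerivAt.prodMk (hasDerivAt_const t x) (hasDerivAt_id t)
  exact h.hasFDerivAt.comp_hasDerivAt t hline
lemma diffAt_of_contDiffOn {g : ℝ × ℝ → E} {s : Set (ℝ × ℝ)} (hs : IsOpen s)
    (h : ContDiffOn ℝ (⊤ : ℕ∞) g s) {p : ℝ × ℝ} (hp : p ∈ s) : DifferentiableAt ℝ g p :=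
  (h.differentiableOn (by simp)).differentiableAt (hs.mem_nhds hp)
end AUX
lemma hasDerivAt_pdx {g : ℝ → ℝ → ℝ} {x t : ℝ} (h : DifferentiableAt ℝ (uncurry g) (x, t)) :
    HasDerivAt (fun x' => g x' t) (pdx g x t) x :=
  (hasDerivAt_slice_x h).differentiableAt.hasDerivAt
lemma hasDerivAt_pdt_s9 {g : ℝ → ℝ → ℝ} {x t : ℝ} (h : DifferentiableAt ℝ (uncurry g) (x, t)) :
    HasDerivAt (fun t' => g x t') (pdt g x t) t :=
  (hasDerivAt_slice_t h).differentiableAt.hasDerivAt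
lemma pdx_eq_fderiv_s9 {g : ℝ → ℝ → ℝ} {x t : ℝ} (h : DifferentiableAt ℝ (uncurry g) (x, t)) :
    pdx g x t = fderiv ℝ (uncurry g) (x, t) (1, 0) := (hasDerivAt_slice_x h).deriv
lemma contDiffOn_pdx {g : ℝ → ℝ → ℝ} {s : Set (ℝ × ℝ)} (hs : IsOpen s)
    (h : ContDiffOn ℝ (⊤ : ℕ∞) (uncurry g) s) :
    ContDiffOn ℝ (⊤ : ℕ∞) (uncurry (pdx g)) s := by
  have h1 : ContDiffOn ℝ (⊤ : ℕ∞) (fun p => fderiv ℝ (uncurry g) p) s :=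
    h.fderiv_of_isOpen hs (by exact_mod_cast le_top)
  have h2 : ContDiffOn ℝ (⊤ : ℕ∞) (fun p => fderiv ℝ (uncurry g) p (1, 0)) s :=
    h1.clm_apply contDiffOn_const
  refine h2.congr ?_
  rintro ⟨x, t⟩ hp
  exact pdx_eq_fderiv_s9 (diffAt_of_contDiffOn hs h hp)
lemma pdt_pdx_comm {g : ℝ → ℝ → ℝ} {s : Set (ℝ × ℝ)} (hs : IsOpen s)
    (h : ContDiffOn ℝ (⊤ : ℕ∞) (uncurry g) s) {x t : ℝ} (hp : (x, t) ∈ s) :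
    pdt (pdx g) x t = pdx (pdt g) x t := by
  set F := uncurry g with hF
  have hev : ∀ᶠ y in 𝓝 (x, t), HasFDerivAt F (fderiv ℝ F y) y := by
    filter_upwards [hs.mem_nhds hp] with y hy
    exact (diffAt_of_contDiffOn hs h hy).hasFDerivAt
  have hfd : ContDiffOn ℝ (⊤ : ℕ∞) (fun p => fderiv ℝ F p) s :=
    h.fderiv_of_isOpen hs (by exact_mod_cast le_top)
  have hdF : DifferentiableAt ℝ (fun p => fderiv ℝ F p) (x, t) :=
    diffAt_of_contDiffOn hs hfd hp
  have hsymm := second_derivative_symmetric_of_eventually hev hdF.hasFDerivAt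
      ((0 : ℝ), (1 : ℝ)) ((1 : ℝ), (0 : ℝ))
  have hx1 : ∀ᶠ t' in 𝓝 t, (x, t') ∈ s :=
    (hs.preimage (Continuous.prodMk_right x)).mem_nhds hp
  have hx2 : (fun t' => pdx g x t') =ᶠ[𝓝 t] fun t' => fderiv ℝ F (x, t') (1, 0) := by
    filter_upwards [hx1] with t' ht'
    exact pdx_eq_fderiv_s9 (diffAt_of_contDiffOn hs h ht')
  have H1 : HasDerivAt (fun t' => fderiv ℝ F (x, t') (1, 0))
      (fderiv ℝ (fun p => fderiv ℝ F p) (x, t) (0, 1) (1, 0)) t := by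
    have := (hasDerivAt_slice_t hdF).clm_apply (hasDerivAt_const t ((1 : ℝ), (0 : ℝ)))
    simpa using this
  have e1 : pdt (pdx g) x t = fderiv ℝ (fun p => fderiv ℝ F p) (x, t) (0, 1) (1, 0) := by
    have h' : pdt (pdx g) x t = deriv (fun t' => fderiv ℝ F (x, t') (1, 0)) t := hx2.deriv_eq
    rw [h', H1.deriv]
  have ht1 : ∀ᶠ x' in 𝓝 x, (x', t) ∈ s :=
    (hs.preimage (continuous_id.prodMk continuous_const)).mem_nhds hp
  have ht2 : (fun x' => pdt g x' t) =ᶠ[𝓝 x] fun x' => fderiv ℝ F (x', t) (0, 1) := by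
    filter_upwards [ht1] with x' hx'
    exact (hasDerivAt_slice_t (diffAt_of_contDiffOn hs h hx')).deriv
  have H2 : HasDerivAt (fun x' => fderiv ℝ F (x', t) (0, 1))
      (fderiv ℝ (fun p => fderiv ℝ F p) (x, t) (1, 0) (0, 1)) x := by
    have := (hasDerivAt_slice_x hdF).clm_apply (hasDerivAt_const x ((0 : ℝ), (1 : ℝ)))
    simpa using this
  have e2 : pdx (pdt g) x t = fderiv ℝ (fun p => fderiv ℝ F p) (x, t) (1, 0) (0, 1) := by
    have h' : pdx (pdt g) x t = deriv (fun x' => fderiv ℝ F (x', t) (0, 1)) x := ht2.deriv_eq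
    rw [h', H2.deriv]
  rw [e1, e2, hsymm]

lemma kdv_aux (a b : ℝ) (f : ℝ → ℝ → ℝ) (mu ε : ℝ) (hε : ε ^ 2 = 1)
    (hf : ContDiffOn ℝ (⊤ : ℕ∞) (uncurry f) (univ ×ˢ Set.Ioo a b))
    (hmkdv : ∀ x t, t ∈ Set.Ioo a b →
      pdt f x t = pdx (pdx (pdx f)) x t - 6 * ((f x t) ^ 2 + mu) * pdx f x t)
    (v : ℝ → ℝ → ℝ) (hv : v = fun x t => ε * pdx f x t + (f x t) ^ 2 + mu) :
    ∀ x t, t ∈ Set.Ioo a b →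
      pdt v x t = pdx (pdx (pdx v)) x t - 6 * v x t * pdx v x t := by
  subst hv
  intro x t ht
  set s : Set (ℝ × ℝ) := univ ×ˢ Set.Ioo a b with hsdef
  have hs : IsOpen s := isOpen_univ.prod isOpen_Ioo
  have hp : ∀ x' : ℝ, (x', t) ∈ s := fun x' => ⟨mem_univ _, ht⟩
  have h0 := hf
  have h1 := contDiffOn_pdx hs h0
  have h2 := contDiffOn_pdx hs h1
  have h3 := contDiffOn_pdx hs h2
  -- x-direction HasDerivAt at arbitrary x'
  have d0 : ∀ x' : ℝ, HasDerivAt (fun y => f y t) (pdx f x' t) x' :=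
    fun x' => hasDerivAt_pdx (diffAt_of_contDiffOn hs h0 (hp x'))
  have d1 : ∀ x' : ℝ, HasDerivAt (fun y => pdx f y t) (pdx (pdx f) x' t) x' :=
    fun x' => hasDerivAt_pdx (diffAt_of_contDiffOn hs h1 (hp x'))
  have d2 : ∀ x' : ℝ, HasDerivAt (fun y => pdx (pdx f) y t) (pdx (pdx (pdx f)) x' t) x' :=
    fun x' => hasDerivAt_pdx (diffAt_of_contDiffOn hs h2 (hp x'))
  have d3 : ∀ x' : ℝ, HasDerivAt (fun y => pdx (pdx (pdx f)) y t)
      (pdx (pdx (pdx (pdx f))) x' t) x' :=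
    fun x' => hasDerivAt_pdx (diffAt_of_contDiffOn hs h3 (hp x'))
  -- Step A : first x-derivative of v
  have hA : ∀ x' : ℝ, pdx (fun x t => ε * pdx f x t + f x t ^ 2 + mu) x' t
      = ε * pdx (pdx f) x' t + 2 * f x' t * pdx f x' t := by
    intro x'
    have h := ((((d1 x').const_mul ε).add (((d0 x').pow 2))).add_const mu).deriv
    show deriv (fun y => ε * pdx f y t + f y t ^ 2 + mu) x' = _
    refine h.trans ?_; push_cast; ring
  -- Step B : second x-derivative of v
  have hB : ∀ x' : ℝ, pdx (pdx (fun x t => ε * pdx f x t + f x t ^ 2 + mu)) x' t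
      = ε * pdx (pdx (pdx f)) x' t + 2 * (pdx f x' t) ^ 2 + 2 * f x' t * pdx (pdx f) x' t := by
    intro x'
    have hfun : (fun y => pdx (fun x t => ε * pdx f x t + f x t ^ 2 + mu) y t)
        = fun y => ε * pdx (pdx f) y t + 2 * f y t * pdx f y t := funext fun y => hA y
    have h := ((((d2 x').const_mul ε).add
        ((((d0 x').const_mul 2).mul (d1 x')))).deriv)
    show deriv (fun y => pdx (fun x t => ε * pdx f x t + f x t ^ 2 + mu) y t) x' = _
    rw [hfun]; refine h.trans ?_; ring
  -- Step C : third x-derivative of v at x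
  have hC : pdx (pdx (pdx (fun x t => ε * pdx f x t + f x t ^ 2 + mu))) x t
      = ε * pdx (pdx (pdx (pdx f))) x t + 6 * pdx f x t * pdx (pdx f) x t
        + 2 * f x t * pdx (pdx (pdx f)) x t := by
    have hfun : (fun y => pdx (pdx (fun x t => ε * pdx f x t + f x t ^ 2 + mu)) y t)
        = fun y => ε * pdx (pdx (pdx f)) y t + 2 * (pdx f y t) ^ 2
            + 2 * f y t * pdx (pdx f) y t := funext fun y => hB y
    have h := ((((d3 x).const_mul ε).add (((d1 x).pow 2).const_mul 2)).add
        (((d0 x).const_mul 2).mul (d2 x))).deriv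
    show deriv (fun y => pdx (pdx (fun x t => ε * pdx f x t + f x t ^ 2 + mu)) y t) x = _
    rw [hfun]; refine h.trans ?_; push_cast; ring
  -- pdt f and pdt (pdx f)
  have e0 : HasDerivAt (fun t' => f x t') (pdt f x t) t :=
    hasDerivAt_pdt_s9 (diffAt_of_contDiffOn hs h0 (hp x))
  have e1 : HasDerivAt (fun t' => pdx f x t') (pdt (pdx f) x t) t :=
    hasDerivAt_pdt_s9 (diffAt_of_contDiffOn hs h1 (hp x))
  -- Step D : pdt v
  have hD : pdt (fun x t => ε * pdx f x t + f x t ^ 2 + mu) x t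
      = ε * pdt (pdx f) x t + 2 * f x t * pdt f x t := by
    have h := (((e1.const_mul ε).add (e0.pow 2)).add_const mu).deriv
    show deriv (fun t' => ε * pdx f x t' + f x t' ^ 2 + mu) t = _
    refine h.trans ?_; push_cast; ring
  -- Step E/F : mixed derivative
  have hE : pdt (pdx f) x t = pdx (pdx (pdx (pdx f))) x t
      - 12 * f x t * (pdx f x t) ^ 2 - 6 * ((f x t) ^ 2 + mu) * pdx (pdx f) x t := by
    rw [pdt_pdx_comm hs h0 (hp x)]
    have hfun : (fun y => pdt f y t)
        = fun y => pdx (pdx (pdx f)) y t - 6 * ((f y t) ^ 2 + mu) * pdx f y t :=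
      funext fun y => hmkdv y t ht
    have h := ((d3 x).sub (((((d0 x).pow 2).add_const mu).const_mul 6).mul (d1 x))).deriv
    show deriv (fun y => pdt f y t) x = _
    rw [hfun]; refine h.trans ?_; push_cast [Pi.pow_apply]; ring
  rw [hD, hC, hA x, hE, hmkdv x t ht]
  linear_combination (6 * pdx (pdx f) x t * pdx f x t) * hε


/-- Miura maps: if `f` solves mKdV `∂ₜf = ∂ₓ³f − 6(f²+μ)∂ₓf`, then both
`u = ∂ₓf + f² + μ` and `ũ = −∂ₓf + f² + μ` solve the KdV equation on `ℝ × I`. -/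
theorem statement9
    (a b : ℝ) (I : Set ℝ) (hI : I = Set.Ioo a b)
    (f : ℝ → ℝ → ℝ) (mu : ℝ)
    (hf : ContDiffOn ℝ (⊤ : ℕ∞) (uncurry f) (univ ×ˢ I))
    (hmkdv : ∀ x t, t ∈ I →
      pdt f x t = pdx (pdx (pdx f)) x t - 6*((f x t)^2 + mu) * pdx f x t)
    (u ut : ℝ → ℝ → ℝ)
    (hu : ∀ x t, u x t = pdx f x t + (f x t)^2 + mu)
    (hut : ∀ x t, ut x t = -(pdx f x t) + (f x t)^2 + mu) :
    (∀ x t, t ∈ I →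
      pdt u x t = pdx (pdx (pdx u)) x t - 6 * u x t * pdx u x t)
    ∧ (∀ x t, t ∈ I →
      pdt ut x t = pdx (pdx (pdx ut)) x t - 6 * ut x t * pdx ut x t) := by
  subst hI
  constructor
  · have hu' : u = fun x t => (1 : ℝ) * pdx f x t + (f x t) ^ 2 + mu :=
      funext fun x => funext fun t => by rw [hu x t]; ring
    exact kdv_aux a b f mu 1 (by norm_num) hf hmkdv u hu'
  · have hut' : ut = fun x t => (-1 : ℝ) * pdx f x t + (f x t) ^ 2 + mu :=
      funext fun x => funext fun t => by rw [hut x t]; ring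
    exact kdv_aux a b f mu (-1) (by norm_num) hf hmkdv ut hut'
end
end

section
/- Let n ≥ 1, λ_1,…,λ_n pairwise distinct reals, α_1,…,α_n reals, and let y_1,…,y_n : ℝ × I → ℝ be smooth and nowhere vanishing (I an open interval, 0 ∉ I) satisfying (yxx), (yt) and the constraint (uy). Define f_j := (∂_x y_j + α_j)/(2 y_j). Then for each j: ∂_x y_j = 2 y_j f_j − α_j, ∂_x f_j = u − f_j² − λ_j, and ∂_t f_j = ∂_x(∂_x u − 2(u + 2λ_j) f_j) on ℝ × I. -/
open Set Function

noncomputable section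

/-- All first and second partial derivatives of a smooth function on `ℝ × I`
exist as `HasDerivAt` statements, and the mixed partials commute. -/
lemma smooth_partials {I : Set ℝ} (hIo : IsOpen I) (g : ℝ → ℝ → ℝ)
    (hg : ContDiffOn ℝ (⊤:ℕ∞) (uncurry g) (univ ×ˢ I)) (x t : ℝ) (ht : t ∈ I) :
    HasDerivAt (fun x' => g x' t) (pdx g x t) x ∧
    HasDerivAt (fun t' => g x t') (pdt g x t) t ∧
    HasDerivAt (fun x' => pdx g x' t) (pdx (pdx g) x t) x ∧
    HasDerivAt (fun t' => pdx g x t') (pdt (pdx g) x t) t ∧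
    HasDerivAt (fun x' => pdt g x' t) (pdx (pdt g) x t) x ∧
    pdt (pdx g) x t = pdx (pdt g) x t := by
  have hs : IsOpen ((univ : Set ℝ) ×ˢ I) := isOpen_univ.prod hIo
  set F := uncurry g with hF
  set G := fderiv ℝ F with hGdef
  have hmem : ∀ {x' t' : ℝ}, t' ∈ I → ((x',t') : ℝ × ℝ) ∈ (univ : Set ℝ) ×ˢ I :=
    fun ht' => ⟨mem_univ _, ht'⟩
  have hca : ∀ {p : ℝ × ℝ}, p ∈ (univ : Set ℝ) ×ˢ I → ContDiffAt ℝ (⊤:ℕ∞) F p :=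
    fun hp => hg.contDiffAt (hs.mem_nhds hp)
  have hF1 : ∀ {p : ℝ × ℝ}, p ∈ (univ : Set ℝ) ×ˢ I → HasFDerivAt F (G p) p :=
    fun hp => ((hca hp).differentiableAt (by simp)).hasFDerivAt
  have hG1 : ∀ {p : ℝ × ℝ}, p ∈ (univ : Set ℝ) ×ˢ I → HasFDerivAt G (fderiv ℝ G p) p := by
    intro p hp
    have : ContDiffAt ℝ 1 G p := (hca hp).fderiv_right (WithTop.coe_le_coe.mpr le_top)
    exact (this.differentiableAt (by norm_num)).hasFDerivAt
  -- line maps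
  have Lx : ∀ x' t' : ℝ, HasDerivAt (fun x'' => ((x'', t') : ℝ × ℝ)) (1,0) x' :=
    fun x' t' => (hasDerivAt_id x').prodMk (hasDerivAt_const x' t')
  have Lt : ∀ x' t' : ℝ, HasDerivAt (fun t'' => ((x', t'') : ℝ × ℝ)) (0,1) t' :=
    fun x' t' => (hasDerivAt_const t' x').prodMk (hasDerivAt_id t')
  -- first partials
  have a1 : ∀ x' t', t' ∈ I → HasDerivAt (fun x'' => g x'' t') (G (x',t') (1,0)) x' :=
    fun x' t' ht' => by have := (hF1 (hmem ht')).comp_hasDerivAt x' (Lx x' t'); exact this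
  have a2 : ∀ x' t', t' ∈ I → HasDerivAt (fun t'' => g x' t'') (G (x',t') (0,1)) t' :=
    fun x' t' ht' => (hF1 (hmem ht')).comp_hasDerivAt t' (Lt x' t')
  have e1 : ∀ x' t', t' ∈ I → pdx g x' t' = G (x',t') (1,0) := fun x' t' ht' => (a1 x' t' ht').deriv
  have e2 : ∀ x' t', t' ∈ I → pdt g x' t' = G (x',t') (0,1) := fun x' t' ht' => (a2 x' t' ht').deriv
  set H := fderiv ℝ G (x,t) with hHdef
  -- derivative of G along lines
  have cGx : HasDerivAt (fun x' => G (x',t)) (H (1,0)) x :=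
    (hG1 (hmem ht)).comp_hasDerivAt x (Lx x t)
  have cGt : HasDerivAt (fun t' => G (x,t')) (H (0,1)) t :=
    (hG1 (hmem ht)).comp_hasDerivAt t (Lt x t)
  have cGx1 : HasDerivAt (fun x' => G (x',t) (1,0)) (H (1,0) (1,0)) x := by
    have := cGx.clm_apply (hasDerivAt_const x ((1,0) : ℝ × ℝ))
    simpa using this
  have cGt1 : HasDerivAt (fun t' => G (x,t') (1,0)) (H (0,1) (1,0)) t := by
    have := cGt.clm_apply (hasDerivAt_const t ((1,0) : ℝ × ℝ))
    simpa using this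
  have cGx2 : HasDerivAt (fun x' => G (x',t) (0,1)) (H (1,0) (0,1)) x := by
    have := cGx.clm_apply (hasDerivAt_const x ((0,1) : ℝ × ℝ))
    simpa using this
  -- second partials
  have fx1 : (fun x' => pdx g x' t) = fun x' => G (x',t) (1,0) := funext fun x' => e1 x' t ht
  have hdxx : HasDerivAt (fun x' => pdx g x' t) (H (1,0) (1,0)) x := fx1 ▸ cGx1
  have fx2 : (fun x' => pdt g x' t) = fun x' => G (x',t) (0,1) := funext fun x' => e2 x' t ht
  have hdxt : HasDerivAt (fun x' => pdt g x' t) (H (1,0) (0,1)) x := fx2 ▸ cGx2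
  have ev : (fun t' => pdx g x t') =ᶠ[nhds t] fun t' => G (x,t') (1,0) := by
    filter_upwards [hIo.mem_nhds ht] with t' ht' using e1 x t' ht'
  have hdtx : HasDerivAt (fun t' => pdx g x t') (H (0,1) (1,0)) t :=
    cGt1.congr_of_eventuallyEq ev
  -- symmetry of second derivatives
  have hsym : H (0,1) (1,0) = H (1,0) (0,1) := by
    have hev : ∀ᶠ p in nhds (x,t), HasFDerivAt F (G p) p := by
      filter_upwards [hs.mem_nhds (hmem ht)] with p hp using hF1 hp
    exact second_derivative_symmetric_of_eventually hev (hG1 (hmem ht)) _ _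
  have d1 : pdx g x t = G (x,t) (1,0) := e1 x t ht
  have d2 : pdt g x t = G (x,t) (0,1) := e2 x t ht
  have d3 : pdx (pdx g) x t = H (1,0) (1,0) := hdxx.deriv
  have d4 : pdt (pdx g) x t = H (0,1) (1,0) := hdtx.deriv
  have d5 : pdx (pdt g) x t = H (1,0) (0,1) := hdxt.deriv
  exact ⟨d1 ▸ a1 x t ht, d2 ▸ a2 x t ht, d3 ▸ hdxx, d4 ▸ hdtx, d5 ▸ hdxt,
    by rw [d4, d5, hsym]⟩

/-- for solutions of (yxx), (yt), (uy), the variables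
`fⱼ = (∂ₓyⱼ + αⱼ)/(2yⱼ)` satisfy the polynomial system (yfx), (yft):
`∂ₓyⱼ = 2yⱼfⱼ − αⱼ`, `∂ₓfⱼ = u − fⱼ² − λⱼ`, `∂ₜfⱼ = ∂ₓ(∂ₓu − 2(u+2λⱼ)fⱼ)`. -/
theorem statement10
    (n : ℕ) (hn : 1 ≤ n)
    (lam alp : Fin n → ℝ) (hlam : Function.Injective lam)
    (a b : ℝ) (I : Set ℝ) (hI : I = Set.Ioo a b) (hI0 : (0:ℝ) ∉ I)
    (y : Fin n → ℝ → ℝ → ℝ)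
    (hysmooth : ∀ j, ContDiffOn ℝ (⊤ : ℕ∞) (uncurry (y j)) (univ ×ˢ I))
    (hyne : ∀ j x t, t ∈ I → y j x t ≠ 0)
    -- system (yxx)
    (hyxx : ∀ j x t, t ∈ I →
      pdx (pdx (y j)) x t
        = ((pdx (y j) x t)^2 - (alp j)^2) / (2 * y j x t)
          + 2 * (ucon n y x t - lam j) * y j x t)
    -- system (yt)
    (hyt : ∀ j x t, t ∈ I →
      pdt (y j) x t
        = 2 * pdx (ucon n y) x t * y j x t
          - 2 * (ucon n y x t + 2 * lam j) * pdx (y j) x t)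
    -- the new variables fⱼ
    (f : Fin n → ℝ → ℝ → ℝ)
    (hf : ∀ j x t, f j x t = (pdx (y j) x t + alp j) / (2 * y j x t)) :
    ∀ j, ∀ x t, t ∈ I →
      pdx (y j) x t = 2 * y j x t * f j x t - alp j
      ∧ pdx (f j) x t = ucon n y x t - (f j x t)^2 - lam j
      ∧ pdt (f j) x t
          = pdx (fun x' t' => pdx (ucon n y) x' t'
              - 2*(ucon n y x' t' + 2*lam j) * f j x' t') x t := by
  intro j x t ht
  have hIo : IsOpen I := hI ▸ isOpen_Ioo
  -- partial derivative package for each yᵢ at each (x', t)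
  have Pm := fun (i : Fin n) (x' : ℝ) => smooth_partials hIo (y i) (hysmooth i) x' t ht
  have hyne' : y j x t ≠ 0 := hyne j x t ht
  have h2y : (2:ℝ) * y j x t ≠ 0 := mul_ne_zero two_ne_zero hyne'
  -- derivatives of u in x
  have uform : ∀ x' : ℝ, HasDerivAt (fun x'' => ucon n y x'' t)
      (1/(6*t) + (∑ i, pdx (y i) x' t)/(3*t)) x' := by
    intro x'
    have h1 : HasDerivAt (fun x'' : ℝ => x'' / (6*t)) (1/(6*t)) x' := by
      simpa using (hasDerivAt_id x').div_const (6*t)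
    have h2 : HasDerivAt (fun x'' => (∑ i, y i x'' t)/(3*t)) ((∑ i, pdx (y i) x' t)/(3*t)) x' :=
      (HasDerivAt.fun_sum fun i _ => (Pm i x').1).div_const (3*t)
    exact h1.add h2
  have epdxu : ∀ x' : ℝ, pdx (ucon n y) x' t = 1/(6*t) + (∑ i, pdx (y i) x' t)/(3*t) :=
    fun x' => (uform x').deriv
  have hux : HasDerivAt (fun x' => ucon n y x' t) (pdx (ucon n y) x t) x := by
    rw [epdxu x]; exact uform x
  have hu2 : HasDerivAt (fun x' => pdx (ucon n y) x' t)
      ((∑ i, pdx (pdx (y i)) x t)/(3*t)) x := by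
    have hfun : (fun x' => pdx (ucon n y) x' t)
        = fun x' => 1/(6*t) + (∑ i, pdx (y i) x' t)/(3*t) := funext epdxu
    rw [hfun]
    exact ((HasDerivAt.fun_sum fun i _ => (Pm i x).2.2.1).div_const (3*t)).const_add (1/(6*t))
  have hu2' : HasDerivAt (fun x' => pdx (ucon n y) x' t) (pdx (pdx (ucon n y)) x t) x := by
    rw [show pdx (pdx (ucon n y)) x t = _ from hu2.deriv]; exact hu2
  -- derivative of f in x
  have hffun : (fun x' => f j x' t) = fun x' => (pdx (y j) x' t + alp j)/(2 * y j x' t) :=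
    funext fun x' => hf j x' t
  have hfx : HasDerivAt (fun x' => f j x' t)
      ((pdx (pdx (y j)) x t * (2 * y j x t)
        - (pdx (y j) x t + alp j) * (2 * pdx (y j) x t)) / (2 * y j x t)^2) x := by
    rw [hffun]
    exact ((Pm j x).2.2.1.add_const (alp j)).div ((Pm j x).1.const_mul 2) h2y
  -- Part 1
  have part1 : pdx (y j) x t = 2 * y j x t * f j x t - alp j := by
    rw [hf j x t]; field_simp; ring
  -- Part 2
  have part2 : pdx (f j) x t = ucon n y x t - (f j x t)^2 - lam j := by
    have hd : pdx (f j) x t = _ := hfx.deriv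
    rw [hd, hyxx j x t ht, hf j x t]
    field_simp
    ring
  refine ⟨part1, part2, ?_⟩
  -- Part 3
  -- derivative in x of the RHS of (yt)
  have hytfun : (fun x' => pdt (y j) x' t)
      = fun x' => 2 * pdx (ucon n y) x' t * y j x' t
          - 2 * (ucon n y x' t + 2 * lam j) * pdx (y j) x' t :=
    funext fun x' => hyt j x' t ht
  have t1 : HasDerivAt (fun x' => 2 * pdx (ucon n y) x' t * y j x' t)
      (2 * pdx (pdx (ucon n y)) x t * y j x t
        + 2 * pdx (ucon n y) x t * pdx (y j) x t) x :=
    (hu2'.const_mul 2).mul (Pm j x).1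
  have t2 : HasDerivAt (fun x' => 2 * (ucon n y x' t + 2 * lam j) * pdx (y j) x' t)
      (2 * pdx (ucon n y) x t * pdx (y j) x t
        + 2 * (ucon n y x t + 2 * lam j) * pdx (pdx (y j)) x t) x :=
    ((hux.add_const (2 * lam j)).const_mul 2).mul (Pm j x).2.2.1
  have hm : HasDerivAt (fun x' => pdt (y j) x' t)
      ((2 * pdx (pdx (ucon n y)) x t * y j x t + 2 * pdx (ucon n y) x t * pdx (y j) x t)
        - (2 * pdx (ucon n y) x t * pdx (y j) x t
            + 2 * (ucon n y x t + 2 * lam j) * pdx (pdx (y j)) x t)) x := by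
    rw [hytfun]; exact t1.sub t2
  have m_eq : pdt (pdx (y j)) x t
      = (2 * pdx (pdx (ucon n y)) x t * y j x t + 2 * pdx (ucon n y) x t * pdx (y j) x t)
        - (2 * pdx (ucon n y) x t * pdx (y j) x t
            + 2 * (ucon n y x t + 2 * lam j) * pdx (pdx (y j)) x t) := by
    rw [(Pm j x).2.2.2.2.2]; exact hm.deriv
  -- derivative of f in t
  have hffunt : (fun t' => f j x t') = fun t' => (pdx (y j) x t' + alp j)/(2 * y j x t') :=
    funext fun t' => hf j x t'
  have hft : HasDerivAt (fun t' => f j x t')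
      ((pdt (pdx (y j)) x t * (2 * y j x t)
        - (pdx (y j) x t + alp j) * (2 * pdt (y j) x t)) / (2 * y j x t)^2) t := by
    rw [hffunt]
    exact ((Pm j x).2.2.2.1.add_const (alp j)).div ((Pm j x).2.1.const_mul 2) h2y
  -- derivative in x of the RHS function
  have hrhs : HasDerivAt
      (fun x' => pdx (ucon n y) x' t - 2 * (ucon n y x' t + 2 * lam j) * f j x' t)
      (pdx (pdx (ucon n y)) x t
        - (2 * pdx (ucon n y) x t * f j x t
            + 2 * (ucon n y x t + 2 * lam j)
              * ((pdx (pdx (y j)) x t * (2 * y j x t)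
                  - (pdx (y j) x t + alp j) * (2 * pdx (y j) x t)) / (2 * y j x t)^2))) x :=
    hu2'.sub (((hux.add_const (2 * lam j)).const_mul 2).mul hfx)
  have lhs_eq : pdt (f j) x t = _ := hft.deriv
  have rhs_eq : pdx (fun x' t' => pdx (ucon n y) x' t'
      - 2*(ucon n y x' t' + 2*lam j) * f j x' t') x t = _ := hrhs.deriv
  rw [lhs_eq, rhs_eq, m_eq, hyt j x t ht, hyxx j x t ht, hf j x t]
  field_simp
  ring
end
end

section
/- Let u, f : ℝ × I → ℝ be smooth (I an open interval) and λ ∈ ℝ, and suppose ∂_x f = u − f² − λ and ∂_t f = ∂_x(∂_x u − 2(u + 2λ) f). Then f satisfies the modified KdV equation ∂_t f = ∂_x³ f − 6(f² + λ) ∂_x f on ℝ × I. -/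
open Set Function

noncomputable section

/-- if `∂ₓf = u − f² − λ` and `∂ₜf = ∂ₓ(∂ₓu − 2(u+2λ)f)`, then `f` satisfies
the modified KdV equation `∂ₓf = ∂ₓ³f − 6(f²+λ)∂ₓf` on `ℝ × I`. -/
theorem statement11
    (a b : ℝ) (I : Set ℝ) (hI : I = Set.Ioo a b)
    (u f : ℝ → ℝ → ℝ) (l : ℝ)
    (hu : ContDiffOn ℝ (⊤ : ℕ∞) (uncurry u) (univ ×ˢ I))
    (hf : ContDiffOn ℝ (⊤ : ℕ∞) (uncurry f) (univ ×ˢ I))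
    (hfx : ∀ x t, t ∈ I → pdx f x t = u x t - (f x t)^2 - l)
    (hft : ∀ x t, t ∈ I →
      pdt f x t = pdx (fun x' t' => pdx u x' t' - 2*(u x' t' + 2*l) * f x' t') x t) :
    ∀ x t, t ∈ I →
      pdt f x t = pdx (pdx (pdx f)) x t - 6*((f x t)^2 + l) * pdx f x t := by
  intro x t ht
  set g : ℝ → ℝ := fun x' => f x' t with hgdef
  set h : ℝ → ℝ := fun x' => u x' t with hhdef
  have hmaps : ∀ x' : ℝ, x' ∈ (univ : Set ℝ) → ((x', t) : ℝ × ℝ) ∈ (univ ×ˢ I) :=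
    fun x' _ => ⟨mem_univ x', ht⟩
  have hgc : ContDiff ℝ (⊤ : ℕ∞) g := by
    rw [← contDiffOn_univ]
    exact hf.comp ((contDiff_id.prodMk contDiff_const).contDiffOn) hmaps
  have hhc : ContDiff ℝ (⊤ : ℕ∞) h := by
    rw [← contDiffOn_univ]
    exact hu.comp ((contDiff_id.prodMk contDiff_const).contDiffOn) hmaps
  have hgd : ContDiff ℝ (⊤ : ℕ∞) (deriv g) := (contDiff_infty_iff_deriv.mp hgc).2
  have hgdd : ContDiff ℝ (⊤ : ℕ∞) (deriv (deriv g)) := (contDiff_infty_iff_deriv.mp hgd).2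
  have hderivg : ∀ x', deriv g x' = h x' - (g x')^2 - l := fun x' => hfx x' t ht
  -- second derivative formula
  have h2 : ∀ x', deriv (deriv g) x' = deriv h x' - 2 * g x' * deriv g x' := by
    intro x'
    have hd : deriv g = fun y => h y - (g y)^2 - l := funext hderivg
    rw [hd]
    have H := (((hhc.differentiable (by simp) x').hasDerivAt).sub
      (((hgc.differentiable (by simp) x').hasDerivAt).pow 2)).sub_const l
    rw [show deriv (fun y => h y - g y ^ 2 - l) x' = _ from H.deriv, ← hd]
    ring
  -- the function inside pdx in hft agrees with a function of g only
  have key : (fun x' => pdx u x' t - 2*(u x' t + 2*l) * f x' t)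
      = fun x' => deriv (deriv g) x' - (2*(g x')^3 + 6*l*(g x')) := by
    funext x'
    show deriv h x' - 2*(h x' + 2*l) * g x' = _
    rw [h2 x', hderivg x']
    ring
  rw [hft x t ht]
  show deriv (fun x' => pdx u x' t - 2*(u x' t + 2*l) * f x' t) x = _
  rw [key]
  have H2 := (hgc.differentiable (by simp) x).hasDerivAt
  have H := ((hgdd.differentiable (by simp) x).hasDerivAt).sub
    (((H2.pow 3).const_mul 2).add (H2.const_mul (6*l)))
  rw [show deriv (fun x' => deriv (deriv g) x' - (2 * g x' ^ 3 + 6 * l * g x')) x = _ from H.deriv]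
  show _ = deriv (deriv (deriv g)) x - 6*((g x)^2 + l) * deriv g x
  ring
end
end

section
/- Let n ≥ 1, λ_1,…,λ_n pairwise distinct reals, α_1,…,α_n reals, and let y_1,…,y_n, f_1,…,f_n : ℝ × I → ℝ be smooth (I an open interval, 0 ∉ I) with each y_j nowhere vanishing, satisfying the system (yfx), the system (yft), and the constraint (uy'). Then each y_j satisfies the degenerate Calogero–Degasperis equation ∂_t y_j = ∂_x³ y_j − 3(∂_x y_j)(∂_x² y_j)/y_j + 3(∂_x y_j)((∂_x y_j)² − α_j²)/(2 y_j²) − 6 λ_j ∂_x y_j on ℝ × I. -/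
open Set Function

noncomputable section

/-- for solutions of (yfx), (yft), (uy'), each `yⱼ` satisfies the degenerate
Calogero–Degasperis equation. -/
theorem statement12
    (n : ℕ) (hn : 1 ≤ n)
    (lam alp : Fin n → ℝ) (hlam : Function.Injective lam)
    (a b : ℝ) (I : Set ℝ) (hI : I = Set.Ioo a b) (hI0 : (0:ℝ) ∉ I)
    (y f : Fin n → ℝ → ℝ → ℝ)
    (hysmooth : ∀ j, ContDiffOn ℝ (⊤ : ℕ∞) (uncurry (y j)) (univ ×ˢ I))
    (hfsmooth : ∀ j, ContDiffOn ℝ (⊤ : ℕ∞) (uncurry (f j)) (univ ×ˢ I))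
    (hyne : ∀ j x t, t ∈ I → y j x t ≠ 0)
    -- system (yfx)
    (hyfx : ∀ j x t, t ∈ I →
      pdx (y j) x t = 2 * y j x t * f j x t - alp j
      ∧ pdx (f j) x t = ucon n y x t - (f j x t)^2 - lam j)
    -- system (yft)
    (hyft : ∀ j x t, t ∈ I →
      pdt (y j) x t
        = 2 * pdx (ucon n y) x t * y j x t
          - 2 * (ucon n y x t + 2*lam j) * pdx (y j) x t
      ∧ pdt (f j) x t
        = pdx (fun x' t' => pdx (ucon n y) x' t'
            - 2*(ucon n y x' t' + 2*lam j) * f j x' t') x t) :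
    -- degenerate Calogero–Degasperis equations
    ∀ j, ∀ x t, t ∈ I →
      pdt (y j) x t
        = pdx (pdx (pdx (y j))) x t
          - 3 * pdx (y j) x t * pdx (pdx (y j)) x t / y j x t
          + 3 * pdx (y j) x t * ((pdx (y j) x t)^2 - (alp j)^2) / (2 * (y j x t)^2)
          - 6 * lam j * pdx (y j) x t := by
  intro j x t ht
  have hIopen : IsOpen (univ ×ˢ I : Set (ℝ × ℝ)) := by
    rw [hI]; exact isOpen_univ.prod isOpen_Ioo
  -- differentiability of x ↦ y k x t, x ↦ f j x t for all x
  have hdiff : ∀ (g : ℝ → ℝ → ℝ), ContDiffOn ℝ (⊤ : ℕ∞) (uncurry g) (univ ×ˢ I) →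
      ∀ x' : ℝ, DifferentiableAt ℝ (fun x'' => g x'' t) x' := by
    intro g hg x'
    have hmem : (univ ×ˢ I : Set (ℝ × ℝ)) ∈ nhds (x', t) :=
      hIopen.mem_nhds ⟨mem_univ _, ht⟩
    have hca : ContDiffAt ℝ (⊤ : ℕ∞) (uncurry g) (x', t) := hg.contDiffAt hmem
    have hda : DifferentiableAt ℝ (uncurry g) (x', t) := hca.differentiableAt (by simp)
    exact hda.comp x' (differentiableAt_id.prodMk (differentiableAt_const t) :
      DifferentiableAt ℝ (fun x'' : ℝ => (x'', t)) x')
  have hdy : ∀ k : Fin n, ∀ x' : ℝ, DifferentiableAt ℝ (fun x'' => y k x'' t) x' :=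
    fun k => hdiff (y k) (hysmooth k)
  have hdf : ∀ x' : ℝ, DifferentiableAt ℝ (fun x'' => f j x'' t) x' :=
    hdiff (f j) (hfsmooth j)
  -- HasDerivAt statements from (yfx)
  have hY : ∀ x' : ℝ, HasDerivAt (fun x'' => y j x'' t)
      (2 * y j x' t * f j x' t - alp j) x' := by
    intro x'
    have h := (hdy j x').hasDerivAt
    rwa [show deriv (fun x'' => y j x'' t) x' = 2 * y j x' t * f j x' t - alp j from
      (hyfx j x' t ht).1] at h
  have hF : ∀ x' : ℝ, HasDerivAt (fun x'' => f j x'' t)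
      (ucon n y x' t - (f j x' t)^2 - lam j) x' := by
    intro x'
    have h := (hdf x').hasDerivAt
    rwa [show deriv (fun x'' => f j x'' t) x' = ucon n y x' t - (f j x' t)^2 - lam j from
      (hyfx j x' t ht).2] at h
  have hdU : ∀ x' : ℝ, DifferentiableAt ℝ (fun x'' => ucon n y x'' t) x' := by
    intro x'
    have : (fun x'' => ucon n y x'' t)
        = fun x'' => x'' / (6*t) + (∑ k, y k x'' t) / (3*t) := rfl
    rw [this]
    exact ((differentiableAt_id.div_const _).add
      ((DifferentiableAt.fun_sum (fun k _ => hdy k x')).div_const _))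
  have hU : ∀ x' : ℝ, HasDerivAt (fun x'' => ucon n y x'' t)
      (pdx (ucon n y) x' t) x' := fun x' => (hdU x').hasDerivAt
  -- second derivative formula
  have h2 : ∀ x' : ℝ, pdx (pdx (y j)) x' t
      = 2 * (2 * y j x' t * f j x' t - alp j) * f j x' t
        + 2 * y j x' t * (ucon n y x' t - (f j x' t)^2 - lam j) := by
    intro x'
    have e1 : (fun x'' => pdx (y j) x'' t)
        = fun x'' => 2 * y j x'' t * f j x'' t - alp j :=
      funext fun x'' => (hyfx j x'' t ht).1
    have hA : HasDerivAt (fun x'' => 2 * y j x'' t * f j x'' t - alp j)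
        ((2 * (2 * y j x' t * f j x' t - alp j)) * f j x' t
          + (2 * y j x' t) * (ucon n y x' t - (f j x' t)^2 - lam j)) x' :=
      (((hY x').const_mul 2).mul (hF x')).sub_const _
    show deriv (fun x'' => pdx (y j) x'' t) x' = _
    rw [e1, hA.deriv]
  -- third derivative
  have e2 : (fun x'' => pdx (pdx (y j)) x'' t)
      = fun x'' => 2 * (2 * y j x'' t * f j x'' t - alp j) * f j x'' t
        + 2 * y j x'' t * (ucon n y x'' t - (f j x'' t)^2 - lam j) :=
    funext fun x'' => h2 x''
  have hB : HasDerivAt (fun x'' => 2 * (2 * y j x'' t * f j x'' t - alp j) * f j x'' t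
        + 2 * y j x'' t * (ucon n y x'' t - (f j x'' t)^2 - lam j))
      ((2 * ((2 * (2 * y j x t * f j x t - alp j)) * f j x t
          + (2 * y j x t) * (ucon n y x t - (f j x t)^2 - lam j))) * f j x t
        + (2 * (2 * y j x t * f j x t - alp j)) * (ucon n y x t - (f j x t)^2 - lam j)
        + ((2 * (2 * y j x t * f j x t - alp j)) * (ucon n y x t - (f j x t)^2 - lam j)
          + (2 * y j x t) * (pdx (ucon n y) x t
            - (2 * f j x t ^ 1 * (ucon n y x t - (f j x t)^2 - lam j))
            - 0))) x := by
    have t1 : HasDerivAt (fun x'' => 2 * (2 * y j x'' t * f j x'' t - alp j) * f j x'' t)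
        ((2 * ((2 * (2 * y j x t * f j x t - alp j)) * f j x t
            + (2 * y j x t) * (ucon n y x t - (f j x t)^2 - lam j))) * f j x t
          + (2 * (2 * y j x t * f j x t - alp j)) * (ucon n y x t - (f j x t)^2 - lam j))
        x := by
      have inner : HasDerivAt (fun x'' => 2 * (2 * y j x'' t * f j x'' t - alp j))
          (2 * ((2 * (2 * y j x t * f j x t - alp j)) * f j x t
            + (2 * y j x t) * (ucon n y x t - (f j x t)^2 - lam j))) x := by
        have := ((((hY x).const_mul 2).mul (hF x)).sub_const (alp j)).const_mul 2
        simp only [Pi.mul_def] at this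
        convert this using 2 <;> ring
      have := inner.mul (hF x)
      simp only [Pi.mul_def] at this
      convert this using 2 <;> ring
    have t2 : HasDerivAt
        (fun x'' => 2 * y j x'' t * (ucon n y x'' t - (f j x'' t)^2 - lam j))
        ((2 * (2 * y j x t * f j x t - alp j)) * (ucon n y x t - (f j x t)^2 - lam j)
          + (2 * y j x t) * (pdx (ucon n y) x t
            - (2 * f j x t ^ 1 * (ucon n y x t - (f j x t)^2 - lam j))
            - 0)) x := by
      have g1 : HasDerivAt (fun x'' => 2 * y j x'' t)
          (2 * (2 * y j x t * f j x t - alp j)) x := (hY x).const_mul 2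
      have g2 : HasDerivAt (fun x'' => ucon n y x'' t - (f j x'' t)^2 - lam j)
          (pdx (ucon n y) x t
            - (2 * f j x t ^ 1 * (ucon n y x t - (f j x t)^2 - lam j)) - 0) x := by
        exact ((hU x).sub ((hF x).pow 2)).sub ((hasDerivAt_const x (lam j)))
      have := g1.mul g2
      simp only [Pi.mul_def] at this
      convert this using 2
    have := t1.add t2
    simp only [Pi.add_def] at this
    convert this using 1
  have h3 : pdx (pdx (pdx (y j))) x t
      = (2 * ((2 * (2 * y j x t * f j x t - alp j)) * f j x t
          + (2 * y j x t) * (ucon n y x t - (f j x t)^2 - lam j))) * f j x t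
        + (2 * (2 * y j x t * f j x t - alp j)) * (ucon n y x t - (f j x t)^2 - lam j)
        + ((2 * (2 * y j x t * f j x t - alp j)) * (ucon n y x t - (f j x t)^2 - lam j)
          + (2 * y j x t) * (pdx (ucon n y) x t
            - (2 * f j x t ^ 1 * (ucon n y x t - (f j x t)^2 - lam j))
            - 0)) := by
    show deriv (fun x'' => pdx (pdx (y j)) x'' t) x = _
    rw [e2, hB.deriv]
  -- put everything together
  have hyneq := hyne j x t ht
  rw [(hyft j x t ht).1, h3, h2 x, (hyfx j x t ht).1]
  field_simp
  ring
end
end
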